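/- arXiv:1203.0431 — 7 statements merged into one kernel-verified Lean document; each statement's English description precedes it below -/
import Mathlib

section
/- With f_m^k(e) = (Σ_j e_j^m)(Σ_j e_j)^{k-m}, the third-moment identities hold: E[f_3^3] = l·γ_b³ + l·γ_ε³, E[f_2^3] = l²·γ_b³ + l·γ_ε³, and E[f_1^3] = l³·γ_b³ + l·γ_ε³. -/
open MeasureTheory ProbabilityTheory Finset
open scoped ENNReal

lemma aux_memLp3 {Ω : Type*} [MeasureSpace Ω] {f : Ω → ℝ} (hm : Measurable f)
    (h : Integrable (fun ω => f ω ^ 3) ℙ) : MemLp f 3 ℙ := by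
  rw [← memLp_norm_rpow_iff (q := 3) hm.aestronglyMeasurable (by norm_num) (by norm_num)]
  have h33 : (3 : ℝ≥0∞) / 3 = 1 := ENNReal.div_self (by norm_num) (by norm_num)
  rw [h33, memLp_one_iff_integrable]
  have e : (fun x => ‖f x‖ ^ ((3 : ℝ≥0∞)).toReal) = fun x => |f x ^ 3| := by
    funext x
    rw [show ((3 : ℝ≥0∞)).toReal = ((3 : ℕ) : ℝ) by norm_num, Real.rpow_natCast,
      Real.norm_eq_abs, abs_pow]
  rw [e]
  exact h.abs

lemma aux_int_cube {Ω : Type*} [MeasureSpace Ω] {f : Ω → ℝ} (hm : Measurable f) (h : MemLp f 3 ℙ) :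
    Integrable (fun ω => f ω ^ 3) ℙ := by
  have h1 := h.integrable_norm_rpow (by norm_num) (by norm_num)
  have e : (fun x => ‖f x‖ ^ ((3 : ℝ≥0∞)).toReal) = fun x => |f x ^ 3| := by
    funext x
    rw [show ((3 : ℝ≥0∞)).toReal = ((3 : ℕ) : ℝ) by norm_num, Real.rpow_natCast,
      Real.norm_eq_abs, abs_pow]
  rw [e] at h1
  have e2 : (fun x => |f x ^ 3|) = fun x => ‖f x ^ 3‖ := by funext x; rw [Real.norm_eq_abs]
  rw [e2] at h1
  exact (integrable_norm_iff ((hm.pow_const 3).aestronglyMeasurable)).mp h1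

lemma aux_integral_cube_sum {Ω : Type*} [MeasureSpace Ω] [IsProbabilityMeasure (ℙ : Measure Ω)]
    {ι : Type*} [DecidableEq ι] {X : ι → Ω → ℝ}
    (hmeas : ∀ i, Measurable (X i))
    (hindep : iIndepFun X ℙ)
    (hL3 : ∀ i, MemLp (X i) 3 ℙ)
    (hmean : ∀ i, ∫ ω, X i ω = 0)
    (s : Finset ι) :
    ∫ ω, (∑ i ∈ s, X i ω) ^ 3 = ∑ i ∈ s, ∫ ω, (X i ω) ^ 3 := by
  classical
  induction s using Finset.induction_on with
  | empty => simp
  | @insert i s hi ih =>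
    have hTmeas : Measurable (fun ω => ∑ j ∈ s, X j ω) := by
      exact Finset.measurable_sum s (fun j _ => hmeas j)
    have hTL3 : MemLp (fun ω => ∑ j ∈ s, X j ω) 3 ℙ := by
      have := memLp_finsetSum' (μ := (ℙ : Measure Ω)) s (fun j (_ : j ∈ s) => hL3 j)
      rwa [show (∑ j ∈ s, X j) = fun ω => ∑ j ∈ s, X j ω from funext fun ω => by
        simp [Finset.sum_apply]] at this
    have hXL3 := hL3 i
    have intX : Integrable (X i) ℙ := hXL3.integrable (by norm_num)
    have intT : Integrable (fun ω => ∑ j ∈ s, X j ω) ℙ := hTL3.integrable (by norm_num)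
    have intX2 : Integrable (fun ω => X i ω ^ 2) ℙ :=
      (hXL3.mono_exponent (by norm_num)).integrable_sq
    have intT2 : Integrable (fun ω => (∑ j ∈ s, X j ω) ^ 2) ℙ :=
      (hTL3.mono_exponent (by norm_num)).integrable_sq
    have intX3 : Integrable (fun ω => X i ω ^ 3) ℙ := aux_int_cube (hmeas i) hXL3
    have intT3 : Integrable (fun ω => (∑ j ∈ s, X j ω) ^ 3) ℙ := aux_int_cube hTmeas hTL3
    have hIndep : IndepFun (X i) (fun ω => ∑ j ∈ s, X j ω) ℙ := by
      have h := (hindep.indepFun_finsetSum_of_notMem hmeas hi).symm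
      rwa [show (∑ j ∈ s, X j) = fun ω => ∑ j ∈ s, X j ω from funext fun ω => by
        simp [Finset.sum_apply]] at h
    have hI2T : IndepFun (fun ω => X i ω ^ 2) (fun ω => ∑ j ∈ s, X j ω) ℙ :=
      hIndep.comp (measurable_id.pow_const 2) measurable_id
    have hIT2 : IndepFun (X i) (fun ω => (∑ j ∈ s, X j ω) ^ 2) ℙ :=
      hIndep.comp measurable_id (measurable_id.pow_const 2)
    have intX2T : Integrable (fun ω => X i ω ^ 2 * ∑ j ∈ s, X j ω) ℙ :=
      hI2T.integrable_mul intX2 intT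
    have intXT2 : Integrable (fun ω => X i ω * (∑ j ∈ s, X j ω) ^ 2) ℙ :=
      hIT2.integrable_mul intX intT2
    have hTmean : ∫ ω, ∑ j ∈ s, X j ω = 0 := by
      rw [integral_finset_sum s (fun j _ =>
        (hL3 j).integrable (by norm_num))]
      simp [hmean]
    have e1 : (fun ω => (∑ j ∈ insert i s, X j ω) ^ 3) =
        fun ω => X i ω ^ 3 + ((3:ℝ) * (X i ω ^ 2 * ∑ j ∈ s, X j ω) +
          ((3:ℝ) * (X i ω * (∑ j ∈ s, X j ω) ^ 2) + (∑ j ∈ s, X j ω) ^ 3)) := by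
      funext ω
      rw [Finset.sum_insert hi]; ring
    have intB : Integrable (fun ω => (3:ℝ) * (X i ω * (∑ j ∈ s, X j ω) ^ 2) +
        (∑ j ∈ s, X j ω) ^ 3) ℙ := (intXT2.const_mul 3).add intT3
    have intA : Integrable (fun ω => (3:ℝ) * (X i ω ^ 2 * ∑ j ∈ s, X j ω) +
        ((3:ℝ) * (X i ω * (∑ j ∈ s, X j ω) ^ 2) + (∑ j ∈ s, X j ω) ^ 3)) ℙ :=
      (intX2T.const_mul 3).add intB
    rw [e1, integral_add intX3 intA,
      integral_add (intX2T.const_mul 3) intB,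
      integral_add (intXT2.const_mul 3) intT3, integral_const_mul, integral_const_mul]
    have hval1 : ∫ a, X i a ^ 2 * ∑ j ∈ s, X j a = (∫ a, X i a ^ 2) * ∫ a, ∑ j ∈ s, X j a :=
      hI2T.integral_fun_mul_eq_mul_integral intX2.aestronglyMeasurable intT.aestronglyMeasurable
    have hval2 : ∫ a, X i a * (∑ j ∈ s, X j a) ^ 2
        = (∫ a, X i a) * ∫ a, (∑ j ∈ s, X j a) ^ 2 :=
      hIT2.integral_fun_mul_eq_mul_integral intX.aestronglyMeasurable intT2.aestronglyMeasurable
    rw [hval1, hval2, ih, Finset.sum_insert hi, hTmean, hmean i]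
    ring

/-- third-moment identities for . -/
theorem third_moment_f_identities
    {l : ℕ} (hl : 1 ≤ l)
    {Ω : Type*} [MeasureSpace Ω] [IsProbabilityMeasure (ℙ : Measure Ω)]
    (b : Ω → ℝ) (ε : Fin l → Ω → ℝ)
    (hbmeas : Measurable b) (hεmeas : ∀ j, Measurable (ε j))
    (hindep : ProbabilityTheory.iIndepFun
      (fun i : Option (Fin l) => Option.elim i b ε) ℙ)
    (hident : ∀ j j' : Fin l, Measure.map (ε j) ℙ = Measure.map (ε j') ℙ)
    (hεmean : ∀ j, ∫ ω, ε j ω = 0)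
    (hεint2 : ∀ j, Integrable (fun ω => (ε j ω) ^ 2) ℙ)
    (hεint3 : ∀ j, Integrable (fun ω => (ε j ω) ^ 3) ℙ)
    (hbint3 : Integrable (fun ω => (b ω) ^ 3) ℙ)
    (γb3 γε3 : ℝ)
    (hbmean : ∫ ω, b ω = 0)
    (hb3 : ∫ ω, (b ω) ^ 3 = γb3)
    (hε3 : ∀ j, ∫ ω, (ε j ω) ^ 3 = γε3) :
    (∫ ω, ∑ j, (b ω + ε j ω) ^ 3 = (l : ℝ) * γb3 + (l : ℝ) * γε3) ∧
    (∫ ω, (∑ j, (b ω + ε j ω) ^ 2) * (∑ j, (b ω + ε j ω))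
        = (l : ℝ) ^ 2 * γb3 + (l : ℝ) * γε3) ∧
    (∫ ω, (∑ j, (b ω + ε j ω)) ^ 3 = (l : ℝ) ^ 3 * γb3 + (l : ℝ) * γε3) := by
  classical
  have hbL3 : MemLp b 3 ℙ := aux_memLp3 hbmeas hbint3
  have hεL3 : ∀ j, MemLp (ε j) 3 ℙ := fun j => aux_memLp3 (hεmeas j) (hεint3 j)
  have hεint : ∀ j, Integrable (ε j) ℙ := fun j => (hεL3 j).integrable (by norm_num)
  have int_b : Integrable b ℙ := hbL3.integrable (by norm_num)
  have int_b2 : Integrable (fun ω => b ω ^ 2) ℙ :=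
    (hbL3.mono_exponent (by norm_num)).integrable_sq
  -- the base family
  have hFmeas : ∀ i : Option (Fin l), Measurable (Option.elim i b ε) := by
    rintro (_ | j); exacts [hbmeas, hεmeas j]
  have hFL3 : ∀ i : Option (Fin l), MemLp (Option.elim i b ε) 3 ℙ := by
    rintro (_ | j); exacts [hbL3, hεL3 j]
  have hFmean : ∀ i : Option (Fin l), ∫ ω, Option.elim i b ε ω = 0 := by
    rintro (_ | j); exacts [hbmean, hεmean j]
  -- STATEMENT 1
  have stmt1 : ∫ ω, ∑ j, (b ω + ε j ω) ^ 3 = (l : ℝ) * γb3 + (l : ℝ) * γε3 := by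
    have intcube : ∀ j : Fin l, Integrable (fun ω => (b ω + ε j ω) ^ 3) ℙ := fun j =>
      aux_int_cube (hbmeas.add (hεmeas j)) (hbL3.add (hεL3 j))
    rw [integral_finset_sum _ (fun j _ => intcube j)]
    have hpair : ∀ j : Fin l, ∫ ω, (b ω + ε j ω) ^ 3 = γb3 + γε3 := by
      intro j
      have h := aux_integral_cube_sum hFmeas hindep hFL3 hFmean
        ({none, some j} : Finset (Option (Fin l)))
      simpa [Finset.sum_pair (show (none : Option (Fin l)) ≠ some j by simp), hb3, hε3 j] using h
    simp only [hpair, Finset.sum_const, Finset.card_univ, Fintype.card_fin, nsmul_eq_mul]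
    ring
  -- STATEMENT 3
  have stmt3 : ∫ ω, (∑ j, (b ω + ε j ω)) ^ 3 = (l : ℝ) ^ 3 * γb3 + (l : ℝ) * γε3 := by
    set G : Option (Fin l) → Ω → ℝ :=
      fun i => Option.elim i (fun ω => (l : ℝ) * b ω) ε with hG
    have hGmeas : ∀ i, Measurable (G i) := by
      rintro (_ | j); exacts [hbmeas.const_mul _, hεmeas j]
    have hGL3 : ∀ i, MemLp (G i) 3 ℙ := by
      rintro (_ | j); exacts [hbL3.const_mul _, hεL3 j]
    have hGmean : ∀ i, ∫ ω, G i ω = 0 := by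
      rintro (_ | j)
      · show ∫ ω, (l : ℝ) * b ω = 0
        rw [integral_const_mul, hbmean, mul_zero]
      · exact hεmean j
    have hGindep : iIndepFun G ℙ := by
      have h := hindep.comp
        (fun i => Option.elim i (fun x : ℝ => (l : ℝ) * x) (fun _ => id))
        (by rintro (_ | j); exacts [measurable_const_mul _, measurable_id])
      have e : (fun i => (Option.elim i (fun x : ℝ => (l : ℝ) * x) (fun _ => id)) ∘
          (Option.elim i b ε)) = G := by
        funext i; cases i <;> rfl
      rwa [e] at h
    have h := aux_integral_cube_sum hGmeas hGindep hGL3 hGmean (univ : Finset (Option (Fin l)))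
    have hsum : (fun ω => (∑ i : Option (Fin l), G i ω) ^ 3)
        = fun ω => (∑ j, (b ω + ε j ω)) ^ 3 := by
      funext ω
      congr 1
      rw [Fintype.sum_option]
      show (l : ℝ) * b ω + ∑ j, ε j ω = _
      rw [Finset.sum_add_distrib, Finset.sum_const, Finset.card_univ, Fintype.card_fin,
        nsmul_eq_mul]
    rw [hsum] at h
    rw [h, Fintype.sum_option]
    have hn : ∫ ω, G none ω ^ 3 = (l : ℝ) ^ 3 * γb3 := by
      show ∫ ω, ((l : ℝ) * b ω) ^ 3 = _
      simp_rw [mul_pow]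
      rw [integral_const_mul, hb3]
    rw [hn]
    have hs : ∀ j : Fin l, ∫ ω, G (some j) ω ^ 3 = γε3 := fun j => hε3 j
    simp only [hs, Finset.sum_const, Finset.card_univ, Fintype.card_fin, nsmul_eq_mul]
  -- STATEMENT 2
  have stmt2 : ∫ ω, (∑ j, (b ω + ε j ω) ^ 2) * (∑ j, (b ω + ε j ω))
      = (l : ℝ) ^ 2 * γb3 + (l : ℝ) * γε3 := by
    set S1 : Ω → ℝ := fun ω => ∑ j, ε j ω with hS1def
    set S2 : Ω → ℝ := fun ω => ∑ j, (ε j ω) ^ 2 with hS2def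
    have hS1meas : Measurable S1 := Finset.measurable_sum _ (fun j _ => hεmeas j)
    have hS1L3 : MemLp S1 3 ℙ := by
      have := memLp_finsetSum' (μ := (ℙ : Measure Ω)) univ (fun j (_ : j ∈ univ) => hεL3 j)
      rwa [show (∑ j : Fin l, ε j) = S1 from funext fun ω => by simp [Finset.sum_apply, hS1def]] at this
    have int_S1 : Integrable S1 ℙ := hS1L3.integrable (by norm_num)
    have int_S12 : Integrable (fun ω => S1 ω ^ 2) ℙ :=
      (hS1L3.mono_exponent (by norm_num)).integrable_sq
    have int_S2 : Integrable S2 ℙ := integrable_finset_sum _ (fun j _ => hεint2 j)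
    -- independence of b and S1
    have hbS1 : IndepFun b S1 ℙ := by
      have h := hindep.indepFun_finsetSum_of_notMem hFmeas
        (s := (univ : Finset (Fin l)).image some) (i := none) (by simp)
      have e : (∑ i ∈ (univ : Finset (Fin l)).image some,
          (fun i : Option (Fin l) => Option.elim i b ε) i) = S1 := by
        rw [Finset.sum_image (fun x _ y _ h => Option.some_injective _ h)]
        funext ω; simp [Finset.sum_apply, hS1def]
      rw [e] at h
      exact h.symm
    -- independence of b and S2
    have hbS2 : IndepFun b S2 ℙ := by
      have h2 := hindep.comp
        (fun i : Option (Fin l) => Option.elim i (id : ℝ → ℝ) (fun _ => fun x : ℝ => x ^ 2))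
        (by rintro (_ | j); exacts [measurable_id, measurable_id.pow_const 2])
      have e0 : (fun i => (Option.elim i (id : ℝ → ℝ) (fun _ => fun x : ℝ => x ^ 2)) ∘
          (Option.elim i b ε)) =
          (fun i : Option (Fin l) => Option.elim i b (fun j ω => ε j ω ^ 2)) := by
        funext i; cases i <;> rfl
      rw [e0] at h2
      have h := h2.indepFun_finsetSum_of_notMem
        (by rintro (_ | j); exacts [hbmeas, (hεmeas j).pow_const 2])
        (s := (univ : Finset (Fin l)).image some) (i := none) (by simp)
      have e : (∑ i ∈ (univ : Finset (Fin l)).image some,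
          (fun i : Option (Fin l) => Option.elim i b (fun j ω => ε j ω ^ 2)) i) = S2 := by
        rw [Finset.sum_image (fun x _ y _ h => Option.some_injective _ h)]
        funext ω; simp [Finset.sum_apply, hS2def]
      rw [e] at h
      exact h.symm
    have hb2S1 : IndepFun (fun ω => b ω ^ 2) S1 ℙ :=
      hbS1.comp (measurable_id.pow_const 2) measurable_id
    have hbS12 : IndepFun b (fun ω => S1 ω ^ 2) ℙ :=
      hbS1.comp measurable_id (measurable_id.pow_const 2)
    have int_b2S1 : Integrable (fun ω => b ω ^ 2 * S1 ω) ℙ := hb2S1.integrable_mul int_b2 int_S1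
    have int_bS12 : Integrable (fun ω => b ω * S1 ω ^ 2) ℙ := hbS12.integrable_mul int_b int_S12
    have int_bS2 : Integrable (fun ω => b ω * S2 ω) ℙ := hbS2.integrable_mul int_b int_S2
    -- the εⱼ εₖ² products
    have intjk : ∀ j k : Fin l, Integrable (fun ω => ε j ω * (ε k ω) ^ 2) ℙ := by
      intro j k
      by_cases hjk : j = k
      · subst hjk
        have e : (fun ω => ε j ω * (ε j ω) ^ 2) = fun ω => ε j ω ^ 3 := funext fun ω => by ring
        rw [e]; exact hεint3 j
      · have hind : IndepFun (ε j) (fun ω => ε k ω ^ 2) ℙ :=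
          (hindep.indepFun (show (some j : Option (Fin l)) ≠ some k by simpa using hjk)).comp
            measurable_id (measurable_id.pow_const 2)
        exact hind.integrable_mul (hεint j)
          ((hεL3 k).mono_exponent (by norm_num)).integrable_sq
    have int_S1S2 : Integrable (fun ω => S1 ω * S2 ω) ℙ := by
      have e : (fun ω => S1 ω * S2 ω) = fun ω => ∑ j, ∑ k, ε j ω * (ε k ω) ^ 2 := by
        funext ω; rw [hS1def, hS2def]; rw [Finset.sum_mul_sum]
      rw [e]
      exact integrable_finset_sum _ (fun j _ => integrable_finset_sum _ (fun k _ => intjk j k))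
    -- values
    have hS1mean : ∫ ω, S1 ω = 0 := by
      rw [hS1def, integral_finset_sum _ (fun j _ => hεint j)]; simp [hεmean]
    have hS2val : ∫ ω, S1 ω * S2 ω = (l : ℝ) * γε3 := by
      have e : (fun ω => S1 ω * S2 ω) = fun ω => ∑ j, ∑ k, ε j ω * (ε k ω) ^ 2 := by
        funext ω; rw [hS1def, hS2def]; rw [Finset.sum_mul_sum]
      rw [e, integral_finset_sum _ (fun j _ => integrable_finset_sum _ (fun k _ => intjk j k))]
      have hrow : ∀ j : Fin l, ∫ ω, ∑ k, ε j ω * (ε k ω) ^ 2 = γε3 := by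
        intro j
        rw [integral_finset_sum _ (fun k _ => intjk j k)]
        rw [Finset.sum_eq_single j]
        · have e2 : (fun ω => ε j ω * (ε j ω) ^ 2) = fun ω => ε j ω ^ 3 :=
            funext fun ω => by ring
          rw [e2]; exact hε3 j
        · intro k _ hkj
          have hind : IndepFun (ε j) (fun ω => ε k ω ^ 2) ℙ :=
            (hindep.indepFun (show (some j : Option (Fin l)) ≠ some k by
              simpa using fun h => hkj h.symm)).comp measurable_id (measurable_id.pow_const 2)
          have := hind.integral_fun_mul_eq_mul_integral (hεint j).aestronglyMeasurable
            ((hεL3 k).mono_exponent (by norm_num)).integrable_sq.aestronglyMeasurable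
          rw [show ∫ ω, ε j ω * (ε k ω) ^ 2 = (∫ ω, ε j ω) * ∫ ω, (ε k ω) ^ 2 from this,
            hεmean j, zero_mul]
        · intro h; exact absurd (Finset.mem_univ j) h
      simp only [hrow, Finset.sum_const, Finset.card_univ, Fintype.card_fin, nsmul_eq_mul]
    -- expand the integrand
    have e2 : (fun ω => (∑ j, (b ω + ε j ω) ^ 2) * (∑ j, (b ω + ε j ω)))
        = fun ω => (l : ℝ) ^ 2 * b ω ^ 3 + ((3 * (l : ℝ)) * (b ω ^ 2 * S1 ω) +
            ((2 : ℝ) * (b ω * S1 ω ^ 2) + ((l : ℝ) * (b ω * S2 ω) + S1 ω * S2 ω))) := by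
      funext ω
      have h1 : ∑ j, (b ω + ε j ω) ^ 2 = (l : ℝ) * b ω ^ 2 + (2 * b ω * S1 ω + S2 ω) := by
        rw [show ∀ ω', (∑ j, (b ω' + ε j ω') ^ 2) =
            ∑ j, (b ω' ^ 2 + (2 * b ω' * ε j ω' + (ε j ω') ^ 2)) from fun ω' =>
          Finset.sum_congr rfl (fun j _ => by ring)]
        rw [Finset.sum_add_distrib, Finset.sum_add_distrib, Finset.sum_const, Finset.card_univ,
          Fintype.card_fin, nsmul_eq_mul, ← Finset.mul_sum]
      have h2 : ∑ j, (b ω + ε j ω) = (l : ℝ) * b ω + S1 ω := by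
        rw [Finset.sum_add_distrib, Finset.sum_const, Finset.card_univ, Fintype.card_fin,
          nsmul_eq_mul]
      rw [h1, h2, hS1def, hS2def]; ring
    have intC : Integrable (fun ω => (l : ℝ) * (b ω * S2 ω) + S1 ω * S2 ω) ℙ :=
      (int_bS2.const_mul _).add int_S1S2
    have intBB : Integrable (fun ω => (2 : ℝ) * (b ω * S1 ω ^ 2) +
        ((l : ℝ) * (b ω * S2 ω) + S1 ω * S2 ω)) ℙ := (int_bS12.const_mul _).add intC
    have intAA : Integrable (fun ω => (3 * (l : ℝ)) * (b ω ^ 2 * S1 ω) +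
        ((2 : ℝ) * (b ω * S1 ω ^ 2) + ((l : ℝ) * (b ω * S2 ω) + S1 ω * S2 ω))) ℙ :=
      (int_b2S1.const_mul _).add intBB
    rw [e2, integral_add (hbint3.const_mul _) intAA,
      integral_add (int_b2S1.const_mul _) intBB,
      integral_add (int_bS12.const_mul _) intC,
      integral_add (int_bS2.const_mul _) int_S1S2,
      integral_const_mul, integral_const_mul, integral_const_mul, integral_const_mul]
    have v1 : ∫ ω, b ω ^ 2 * S1 ω = (∫ ω, b ω ^ 2) * ∫ ω, S1 ω :=
      hb2S1.integral_fun_mul_eq_mul_integral int_b2.aestronglyMeasurable int_S1.aestronglyMeasurable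
    have v2 : ∫ ω, b ω * S1 ω ^ 2 = (∫ ω, b ω) * ∫ ω, S1 ω ^ 2 :=
      hbS12.integral_fun_mul_eq_mul_integral int_b.aestronglyMeasurable int_S12.aestronglyMeasurable
    have v3 : ∫ ω, b ω * S2 ω = (∫ ω, b ω) * ∫ ω, S2 ω :=
      hbS2.integral_fun_mul_eq_mul_integral int_b.aestronglyMeasurable int_S2.aestronglyMeasurable
    rw [v1, v2, v3, hS1mean, hbmean, hb3, hS2val]
    ring
  exact ⟨stmt1, stmt2, stmt3⟩
end

section
/- With the notation above, E[2·f_1^3 + l²·f_3^3 − 3l·f_2^3] = l(l−1)(l−2)·γ_ε³; that is, this linear combination of the f_m^3 eliminates all moments of b and isolates the third moment of ε. -/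
open MeasureTheory ProbabilityTheory Finset

theorem third_moment_eps_combination
    {l : ℕ} (hl : 3 ≤ l)
    {Ω : Type*} [MeasureSpace Ω] [IsProbabilityMeasure (ℙ : Measure Ω)]
    (b : Ω → ℝ) (ε : Fin l → Ω → ℝ)
    (hbmeas : Measurable b) (hεmeas : ∀ j, Measurable (ε j))
    (hindep : ProbabilityTheory.iIndepFun
      (fun i : Option (Fin l) => Option.elim i b ε) ℙ)
    (hident : ∀ j j' : Fin l, Measure.map (ε j) ℙ = Measure.map (ε j') ℙ)
    (hεmean : ∀ j, ∫ ω, ε j ω = 0)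
    (hεint3 : ∀ j, Integrable (fun ω => (ε j ω) ^ 3) ℙ)
    (hbint3 : Integrable (fun ω => (b ω) ^ 3) ℙ)
    (γε3 : ℝ)
    (hbmean : ∫ ω, b ω = 0)
    (hε3 : ∀ j, ∫ ω, (ε j ω) ^ 3 = γε3) :
    ∫ ω, (2 * (∑ j, (b ω + ε j ω)) ^ 3
        + (l : ℝ) ^ 2 * ∑ j, (b ω + ε j ω) ^ 3
        - 3 * (l : ℝ) * (∑ j, (b ω + ε j ω) ^ 2) * (∑ j, (b ω + ε j ω)))
      = (l : ℝ) * ((l : ℝ) - 1) * ((l : ℝ) - 2) * γε3 := by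
  have hfmeas : ∀ i : Option (Fin l),
      Measurable ((fun i : Option (Fin l) => Option.elim i b ε) i) := by
    rintro (_ | j)
    · exact hbmeas
    · exact hεmeas j
  -- integrability of ε and ε²
  have h1 : ∀ j, Integrable (ε j) ℙ := by
    intro j
    refine ((integrable_const (1:ℝ)).add (hεint3 j).abs).mono'
      (hεmeas j).aestronglyMeasurable (Filter.Eventually.of_forall fun ω => ?_)
    simp only [Real.norm_eq_abs, Pi.add_apply, abs_pow]
    rcases le_or_gt (|ε j ω|) 1 with h | h
    · nlinarith [pow_nonneg (abs_nonneg (ε j ω)) 3, abs_nonneg (ε j ω)]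
    · nlinarith [pow_nonneg (abs_nonneg (ε j ω)) 3, abs_nonneg (ε j ω),
        sq_nonneg (|ε j ω| - 1), sq_nonneg (|ε j ω| + 1)]
  have h2 : ∀ j, Integrable (fun ω => ε j ω ^ 2) ℙ := by
    intro j
    refine ((integrable_const (1:ℝ)).add (hεint3 j).abs).mono'
      ((hεmeas j).pow_const 2).aestronglyMeasurable (Filter.Eventually.of_forall fun ω => ?_)
    simp only [Real.norm_eq_abs, Pi.add_apply, abs_pow]
    rcases le_or_gt (|ε j ω|) 1 with h | h
    · nlinarith [pow_nonneg (abs_nonneg (ε j ω)) 3, abs_nonneg (ε j ω)]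
    · nlinarith [pow_nonneg (abs_nonneg (ε j ω)) 3, abs_nonneg (ε j ω),
        sq_nonneg (|ε j ω| - 1), sq_nonneg (|ε j ω| + 1)]
  have pairIndep : ∀ i j : Fin l, i ≠ j → IndepFun (ε i) (ε j) ℙ := by
    intro i j hij
    exact hindep.indepFun (by simpa using hij :
      (some i : Option (Fin l)) ≠ some j)
  have mulIndep : ∀ i j k : Fin l, i ≠ k → j ≠ k → IndepFun (ε i * ε j) (ε k) ℙ := by
    intro i j k hik hjk
    exact hindep.indepFun_mul_left hfmeas (some i) (some j) (some k)
      (by simpa using hik) (by simpa using hjk)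
  have key0 : ∀ (X : Ω → ℝ) (k : Fin l), IndepFun X (ε k) ℙ → Integrable X ℙ →
      Integrable (fun ω => X ω * ε k ω) ℙ ∧ (∫ ω, X ω * ε k ω) = 0 := by
    intro X k hind hX
    have hint : Integrable (X * ε k) ℙ := hind.integrable_mul hX (h1 k)
    refine ⟨hint, ?_⟩
    have := hind.integral_mul_eq_mul_integral hX.aestronglyMeasurable (h1 k).aestronglyMeasurable
    calc (∫ ω, X ω * ε k ω) = ∫ ω, (X * ε k) ω := rfl
      _ = (∫ ω, X ω) * ∫ ω, ε k ω := this
      _ = 0 := by rw [hεmean k, mul_zero]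
  -- the master triple-product computation
  have trip : ∀ i j k : Fin l, Integrable (fun ω => ε i ω * ε j ω * ε k ω) ℙ ∧
      (∫ ω, ε i ω * ε j ω * ε k ω) = if i = j ∧ j = k then γε3 else 0 := by
    intro i j k
    by_cases hjk : j = k
    · subst hjk
      by_cases hij : i = j
      · subst hij
        have heq : (fun ω => ε i ω * ε i ω * ε i ω) = fun ω => ε i ω ^ 3 := by
          funext ω; ring
        rw [heq]
        simp only [and_self, if_pos rfl]
        exact ⟨hεint3 i, hε3 i⟩
      · -- i ≠ j, k = j : rewrite as (ε j * ε j) * ε i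
        have hXint : Integrable (ε j * ε j) ℙ :=
          (h2 j).congr (Filter.Eventually.of_forall fun ω => by
            simp [Pi.mul_apply, sq])
        have hind : IndepFun (ε j * ε j) (ε i) ℙ :=
          mulIndep j j i (Ne.symm hij) (Ne.symm hij)
        obtain ⟨hint, hval⟩ := key0 (ε j * ε j) i hind hXint
        have heq : (fun ω => ε i ω * ε j ω * ε j ω)
            = fun ω => (ε j * ε j) ω * ε i ω := by
          funext ω; simp only [Pi.mul_apply]; ring
        rw [heq]
        simp only [hij, false_and, if_false]
        exact ⟨hint, hval⟩
    · by_cases hik : i = k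
      · -- i = k, j ≠ k : rewrite as (ε k * ε k) * ε j
        subst hik
        have hXint : Integrable (ε i * ε i) ℙ :=
          (h2 i).congr (Filter.Eventually.of_forall fun ω => by
            simp [Pi.mul_apply, sq])
        have hind : IndepFun (ε i * ε i) (ε j) ℙ :=
          mulIndep i i j (Ne.symm hjk) (Ne.symm hjk)
        obtain ⟨hint, hval⟩ := key0 (ε i * ε i) j hind hXint
        have heq : (fun ω => ε i ω * ε j ω * ε i ω)
            = fun ω => (ε i * ε i) ω * ε j ω := by
          funext ω; simp only [Pi.mul_apply]; ring
        rw [heq]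
        simp only [hjk, and_false, if_false]
        exact ⟨hint, hval⟩
      · -- i ≠ k, j ≠ k
        have hXint : Integrable (ε i * ε j) ℙ := by
          by_cases hij : i = j
          · subst hij
            exact (h2 i).congr (Filter.Eventually.of_forall fun ω => by
              simp [Pi.mul_apply, sq])
          · exact (pairIndep i j hij).integrable_mul (h1 i) (h1 j)
        have hind : IndepFun (ε i * ε j) (ε k) ℙ := mulIndep i j k hik hjk
        obtain ⟨hint, hval⟩ := key0 (ε i * ε j) k hind hXint
        have heq : (fun ω => ε i ω * ε j ω * ε k ω)
            = fun ω => (ε i * ε j) ω * ε k ω := by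
          funext ω; simp only [Pi.mul_apply]
        rw [heq]
        simp only [hjk, and_false, if_false]
        exact ⟨hint, hval⟩
  -- expansions of the sums into triple/double sums
  have cube_expand : ∀ ω, (∑ j, ε j ω) ^ 3
      = ∑ i, ∑ j, ∑ k, ε i ω * ε j ω * ε k ω := by
    intro ω
    rw [show (∑ j, ε j ω) ^ 3 = (∑ j, ε j ω) * (∑ j, ε j ω) * (∑ j, ε j ω) by ring,
      Finset.sum_mul_sum, Finset.sum_mul]
    refine Finset.sum_congr rfl fun i _ => ?_
    rw [Finset.sum_mul]
    refine Finset.sum_congr rfl fun j _ => ?_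
    rw [Finset.mul_sum]
  have qt_expand : ∀ ω, (∑ i, ε i ω ^ 2) * (∑ j, ε j ω)
      = ∑ i, ∑ j, ε i ω * ε i ω * ε j ω := by
    intro ω
    rw [Finset.sum_mul_sum]
    exact Finset.sum_congr rfl fun i _ => Finset.sum_congr rfl fun j _ => by ring
  -- integrability of the three aggregates
  have IT3 : Integrable (fun ω => (∑ j, ε j ω) ^ 3) ℙ := by
    rw [show (fun ω => (∑ j, ε j ω) ^ 3)
        = fun ω => ∑ i, ∑ j, ∑ k, ε i ω * ε j ω * ε k ω from funext cube_expand]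
    exact integrable_finset_sum _ fun i _ => integrable_finset_sum _ fun j _ =>
      integrable_finset_sum _ fun k _ => (trip i j k).1
  have IQT : Integrable (fun ω => (∑ i, ε i ω ^ 2) * (∑ j, ε j ω)) ℙ := by
    rw [show (fun ω => (∑ i, ε i ω ^ 2) * (∑ j, ε j ω))
        = fun ω => ∑ i, ∑ j, ε i ω * ε i ω * ε j ω from funext qt_expand]
    exact integrable_finset_sum _ fun i _ => integrable_finset_sum _ fun j _ =>
      (trip i i j).1
  have IR : Integrable (fun ω => ∑ j, ε j ω ^ 3) ℙ :=
    integrable_finset_sum _ fun j _ => hεint3 j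
  -- values of the three expectations
  have ET3 : (∫ ω, (∑ j, ε j ω) ^ 3) = l * γε3 := by
    rw [show (fun ω => (∑ j, ε j ω) ^ 3)
        = fun ω => ∑ i, ∑ j, ∑ k, ε i ω * ε j ω * ε k ω from funext cube_expand,
      integral_finset_sum _ (fun i _ => integrable_finset_sum _ fun j _ =>
        integrable_finset_sum _ fun k _ => (trip i j k).1)]
    have : ∀ i : Fin l, (∫ ω, ∑ j, ∑ k, ε i ω * ε j ω * ε k ω)
        = ∑ j, ∑ k, ∫ ω, ε i ω * ε j ω * ε k ω := by
      intro i
      rw [integral_finset_sum _ (fun j _ => integrable_finset_sum _ fun k _ =>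
        (trip i j k).1)]
      exact Finset.sum_congr rfl fun j _ =>
        integral_finset_sum _ fun k _ => (trip i j k).1
    rw [Finset.sum_congr rfl fun i _ => this i]
    have : ∀ i j k : Fin l, (∫ ω, ε i ω * ε j ω * ε k ω)
        = if i = j ∧ j = k then γε3 else 0 := fun i j k => (trip i j k).2
    simp only [this]
    simp [ite_and, Finset.sum_ite_eq, Finset.sum_ite_eq', Finset.card_univ, mul_comm]
  have EQT : (∫ ω, (∑ i, ε i ω ^ 2) * (∑ j, ε j ω)) = l * γε3 := by
    rw [show (fun ω => (∑ i, ε i ω ^ 2) * (∑ j, ε j ω))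
        = fun ω => ∑ i, ∑ j, ε i ω * ε i ω * ε j ω from funext qt_expand,
      integral_finset_sum _ (fun i _ => integrable_finset_sum _ fun j _ =>
        (trip i i j).1)]
    rw [Finset.sum_congr rfl fun i _ =>
      integral_finset_sum _ fun j _ => (trip i i j).1]
    have : ∀ i j : Fin l, (∫ ω, ε i ω * ε i ω * ε j ω)
        = if i = j then γε3 else 0 := by
      intro i j
      rw [(trip i i j).2]
      simp
    simp only [this]
    simp [Finset.sum_ite_eq, Finset.card_univ, mul_comm]
  have ER : (∫ ω, ∑ j, ε j ω ^ 3) = l * γε3 := by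
    rw [integral_finset_sum _ fun j _ => hεint3 j]
    simp [hε3, Finset.card_univ, mul_comm]
  -- eliminate b pointwise
  have elim_b : ∀ ω, (2 * (∑ j, (b ω + ε j ω)) ^ 3
        + (l : ℝ) ^ 2 * ∑ j, (b ω + ε j ω) ^ 3
        - 3 * (l : ℝ) * (∑ j, (b ω + ε j ω) ^ 2) * (∑ j, (b ω + ε j ω)))
      = 2 * (∑ j, ε j ω) ^ 3 + (l : ℝ) ^ 2 * (∑ j, ε j ω ^ 3)
        - 3 * (l : ℝ) * ((∑ j, ε j ω ^ 2) * (∑ j, ε j ω)) := by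
    intro ω
    set c := b ω with hc
    have hs1 : ∑ j, (c + ε j ω) = l * c + ∑ j, ε j ω := by
      rw [Finset.sum_add_distrib, Finset.sum_const, Finset.card_univ, Fintype.card_fin,
        nsmul_eq_mul]
    have hs2 : ∑ j, (c + ε j ω) ^ 2
        = l * c ^ 2 + 2 * c * (∑ j, ε j ω) + ∑ j, ε j ω ^ 2 := by
      have h : ∀ j : Fin l, (c + ε j ω) ^ 2
          = c ^ 2 + (2 * c * ε j ω + ε j ω ^ 2) := fun j => by ring
      rw [Finset.sum_congr rfl fun j _ => h j, Finset.sum_add_distrib,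
        Finset.sum_add_distrib, Finset.sum_const, Finset.card_univ, Fintype.card_fin,
        nsmul_eq_mul, ← Finset.mul_sum]
      ring
    have hs3 : ∑ j, (c + ε j ω) ^ 3
        = l * c ^ 3 + 3 * c ^ 2 * (∑ j, ε j ω) + 3 * c * (∑ j, ε j ω ^ 2)
          + ∑ j, ε j ω ^ 3 := by
      have h : ∀ j : Fin l, (c + ε j ω) ^ 3
          = c ^ 3 + (3 * c ^ 2 * ε j ω + (3 * c * ε j ω ^ 2 + ε j ω ^ 3)) :=
        fun j => by ring
      rw [Finset.sum_congr rfl fun j _ => h j, Finset.sum_add_distrib,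
        Finset.sum_add_distrib, Finset.sum_add_distrib, Finset.sum_const,
        Finset.card_univ, Fintype.card_fin, nsmul_eq_mul, ← Finset.mul_sum,
        ← Finset.mul_sum]
      ring
    rw [hs1, hs2, hs3]
    ring
  rw [integral_congr_ae (Filter.Eventually.of_forall elim_b)]
  have I1 : Integrable (fun ω => 2 * (∑ j, ε j ω) ^ 3 + (l:ℝ) ^ 2 * ∑ j, ε j ω ^ 3) ℙ :=
    (IT3.const_mul 2).add (IR.const_mul ((l:ℝ) ^ 2))
  have I2 : Integrable (fun ω => 3 * (l:ℝ) * ((∑ j, ε j ω ^ 2) * ∑ j, ε j ω)) ℙ :=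
    IQT.const_mul (3 * (l:ℝ))
  rw [integral_sub I1 I2, integral_add (IT3.const_mul 2) (IR.const_mul ((l:ℝ) ^ 2)),
    integral_const_mul, integral_const_mul, integral_const_mul, ET3, EQT, ER]
  ring
end

section
/- With the notation above, E[f_1^3 − 3·f_2^3 + 2·f_3^3] = l(l−1)(l−2)·γ_b³. -/
open MeasureTheory ProbabilityTheory Finset

lemma integrable_mul3 {Ω : Type*} [MeasureSpace Ω] {f g h : Ω → ℝ}
    (hf : Measurable f) (hg : Measurable g) (hh : Measurable h)
    (hf3 : Integrable (fun ω => f ω ^ 3) ℙ) (hg3 : Integrable (fun ω => g ω ^ 3) ℙ)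
    (hh3 : Integrable (fun ω => h ω ^ 3) ℙ) :
    Integrable (fun ω => f ω * (g ω * h ω)) ℙ := by
  have habs : ∀ (u : Ω → ℝ), Integrable (fun ω => u ω ^ 3) ℙ →
      Integrable (fun ω => |u ω| ^ 3) ℙ := by
    intro u hu
    simpa [abs_pow] using hu.abs
  refine Integrable.mono' (((habs f hf3).add (habs g hg3)).add (habs h hh3))
    (hf.mul (hg.mul hh)).aestronglyMeasurable ?_
  filter_upwards with ω
  have h1 : ‖f ω * (g ω * h ω)‖ = |f ω| * |g ω| * |h ω| := by
    rw [Real.norm_eq_abs, abs_mul, abs_mul, mul_assoc]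
  rw [h1]
  simp only [Pi.add_apply]
  have ha := abs_nonneg (f ω); have hb := abs_nonneg (g ω); have hc := abs_nonneg (h ω)
  set a := |f ω|; set b := |g ω|; set c := |h ω|
  nlinarith [mul_nonneg ha (sq_nonneg (b-c)), mul_nonneg hb (sq_nonneg (a-c)),
    mul_nonneg hc (sq_nonneg (a-b)), mul_nonneg (mul_nonneg ha hb) hc,
    sq_nonneg (a-b), sq_nonneg (b-c), sq_nonneg (a-c)]

theorem third_moment_b_combination
    {l : ℕ} (hl : 3 ≤ l)
    {Ω : Type*} [MeasureSpace Ω] [IsProbabilityMeasure (ℙ : Measure Ω)]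
    (b : Ω → ℝ) (ε : Fin l → Ω → ℝ)
    (hbmeas : Measurable b) (hεmeas : ∀ j, Measurable (ε j))
    (hindep : ProbabilityTheory.iIndepFun
      (fun i : Option (Fin l) => Option.elim i b ε) ℙ)
    (hident : ∀ j j' : Fin l, Measure.map (ε j) ℙ = Measure.map (ε j') ℙ)
    (hεmean : ∀ j, ∫ ω, ε j ω = 0)
    (hεint3 : ∀ j, Integrable (fun ω => (ε j ω) ^ 3) ℙ)
    (hbint3 : Integrable (fun ω => (b ω) ^ 3) ℙ)
    (γb3 : ℝ)
    (hbmean : ∫ ω, b ω = 0)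
    (hb3 : ∫ ω, (b ω) ^ 3 = γb3) :
    ∫ ω, ((∑ j, (b ω + ε j ω)) ^ 3
        - 3 * (∑ j, (b ω + ε j ω) ^ 2) * (∑ j, (b ω + ε j ω))
        + 2 * ∑ j, (b ω + ε j ω) ^ 3)
      = (l : ℝ) * ((l : ℝ) - 1) * ((l : ℝ) - 2) * γb3 := by
  -- measurability of the family
  have hg_meas : ∀ o : Option (Fin l), Measurable (Option.elim o b ε) := by
    intro o; cases o with
    | none => exact hbmeas
    | some j => exact hεmeas j
  -- pairwise independence facts
  have hbε : ∀ j, IndepFun b (ε j) ℙ := fun j =>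
    hindep.indepFun (show (none : Option (Fin l)) ≠ some j by simp)
  have hεε : ∀ i j : Fin l, i ≠ j → IndepFun (ε i) (ε j) ℙ := fun i j hij =>
    hindep.indepFun (show (some i : Option (Fin l)) ≠ some j by simpa using hij)
  have hprod : ∀ (i j : Fin l) (t : Option (Fin l)), t ≠ some i → t ≠ some j → i ≠ j →
      IndepFun (fun ω => ε i ω * ε j ω) (Option.elim t b ε) ℙ := by
    intro i j t hti htj hij
    have h := hindep.indepFun_finsetProd_of_notMem hg_meas
      (s := {some i, some j}) (i := t) (by simp [hti, htj])
    rwa [Finset.prod_pair (by simpa using hij)] at h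
  -- zero expectation lemmas
  have Z1 : ∀ t, ∫ ω, b ω ^ 2 * ε t ω = 0 := by
    intro t
    have h : IndepFun (fun ω => b ω ^ 2) (fun ω => ε t ω) ℙ :=
      (hbε t).comp (measurable_id.pow_const 2) measurable_id
    have h2 := h.integral_mul_eq_mul_integral ((hbmeas.pow_const 2).aestronglyMeasurable)
      ((hεmeas t).aestronglyMeasurable)
    simpa [hεmean t] using h2
  have Z2 : ∀ s t : Fin l, ∫ ω, b ω * (ε s ω * ε t ω) = 0 := by
    intro s t
    by_cases hst : s = t
    · subst hst
      have h : IndepFun (fun ω => b ω) (fun ω => ε s ω * ε s ω) ℙ :=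
        (hbε s).comp measurable_id (measurable_id.mul measurable_id)
      have h2 := h.integral_mul_eq_mul_integral hbmeas.aestronglyMeasurable
        (((hεmeas s).mul (hεmeas s)).aestronglyMeasurable)
      simpa [hbmean] using h2
    · have h : IndepFun (fun ω => b ω) (fun ω => ε s ω * ε t ω) ℙ :=
        (hprod s t none (by simp) (by simp) hst).symm
      have h2 := h.integral_mul_eq_mul_integral hbmeas.aestronglyMeasurable
        (((hεmeas s).mul (hεmeas t)).aestronglyMeasurable)
      simpa [hbmean] using h2
  have Hsq : ∀ s t : Fin l, s ≠ t → ∫ ω, (ε s ω * ε s ω) * ε t ω = 0 := by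
    intro s t hst
    have h : IndepFun (fun ω => ε s ω * ε s ω) (fun ω => ε t ω) ℙ :=
      (hεε s t hst).comp (measurable_id.mul measurable_id) measurable_id
    have h2 := h.integral_mul_eq_mul_integral (((hεmeas s).mul (hεmeas s)).aestronglyMeasurable)
      ((hεmeas t).aestronglyMeasurable)
    simpa [hεmean t] using h2
  have Hdist : ∀ i j k : Fin l, i ≠ j → i ≠ k → j ≠ k →
      ∫ ω, (ε i ω * ε j ω) * ε k ω = 0 := by
    intro i j k hij hik hjk
    have h : IndepFun (fun ω => ε i ω * ε j ω) (fun ω => ε k ω) ℙ :=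
      hprod i j (some k) (by simpa using Ne.symm hik) (by simpa using Ne.symm hjk) hij
    have h2 := h.integral_mul_eq_mul_integral (((hεmeas i).mul (hεmeas j)).aestronglyMeasurable)
      ((hεmeas k).aestronglyMeasurable)
    simpa [hεmean k] using h2
  -- the ν lemma
  have hnu : ∀ i j k : Fin l, ∫ ω, ε i ω * (ε j ω * ε k ω)
      = if i = j ∧ j = k then ∫ ω, (ε i ω) ^ 3 else 0 := by
    intro i j k
    by_cases hij : i = j
    · subst hij
      by_cases hik : i = k
      · subst hik
        rw [if_pos ⟨rfl, rfl⟩]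
        congr 1; funext ω; ring
      · rw [if_neg (by tauto)]
        rw [show (fun ω => ε i ω * (ε i ω * ε k ω)) = fun ω => (ε i ω * ε i ω) * ε k ω
          from funext fun ω => by ring]
        exact Hsq i k hik
    · rw [if_neg (by tauto)]
      by_cases hik : i = k
      · subst hik
        rw [show (fun ω => ε i ω * (ε j ω * ε i ω)) = fun ω => (ε i ω * ε i ω) * ε j ω
          from funext fun ω => by ring]
        exact Hsq i j hij
      · by_cases hjk : j = k
        · subst hjk
          rw [show (fun ω => ε i ω * (ε j ω * ε j ω)) = fun ω => (ε j ω * ε j ω) * ε i ω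
            from funext fun ω => by ring]
          exact Hsq j i (fun h => hij h.symm)
        · rw [show (fun ω => ε i ω * (ε j ω * ε k ω)) = fun ω => (ε i ω * ε j ω) * ε k ω
            from funext fun ω => by ring]
          exact Hdist i j k hij hik hjk
  -- integrability pieces
  have ib2ε : ∀ t, Integrable (fun ω => b ω ^ 2 * ε t ω) ℙ := by
    intro t
    have := integrable_mul3 hbmeas hbmeas (hεmeas t) hbint3 hbint3 (hεint3 t)
    exact this.congr (Filter.Eventually.of_forall fun ω => by ring)
  have ibεε : ∀ s t, Integrable (fun ω => b ω * (ε s ω * ε t ω)) ℙ := fun s t =>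
    integrable_mul3 hbmeas (hεmeas s) (hεmeas t) hbint3 (hεint3 s) (hεint3 t)
  have iεεε : ∀ i j k, Integrable (fun ω => ε i ω * (ε j ω * ε k ω)) ℙ := fun i j k =>
    integrable_mul3 (hεmeas i) (hεmeas j) (hεmeas k) (hεint3 i) (hεint3 j) (hεint3 k)
  have he3 : ∀ t, Integrable (fun ω => (b ω + ε t ω) ^ 3) ℙ := by
    intro t
    have h : (fun ω => (b ω + ε t ω) ^ 3) = fun ω =>
        b ω ^ 3 + 3 * (b ω ^ 2 * ε t ω) + 3 * (b ω * (ε t ω * ε t ω))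
          + ε t ω * (ε t ω * ε t ω) := funext fun ω => by ring
    rw [h]
    exact ((hbint3.add ((ib2ε t).const_mul 3)).add ((ibεε t t).const_mul 3)).add (iεεε t t t)
  -- key integral lemma
  have KInteg : ∀ i j k : Fin l,
      Integrable (fun ω => (b ω + ε i ω) * ((b ω + ε j ω) * (b ω + ε k ω))) ℙ :=
    fun i j k => integrable_mul3 (hbmeas.add (hεmeas i)) (hbmeas.add (hεmeas j))
      (hbmeas.add (hεmeas k)) (he3 i) (he3 j) (he3 k)
  have hK : ∀ i j k : Fin l, ∫ ω, (b ω + ε i ω) * ((b ω + ε j ω) * (b ω + ε k ω))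
      = γb3 + ∫ ω, ε i ω * (ε j ω * ε k ω) := by
    intro i j k
    have hexp : (fun ω => (b ω + ε i ω) * ((b ω + ε j ω) * (b ω + ε k ω)))
        = fun ω => ((((((b ω ^ 3 + b ω ^ 2 * ε i ω) + b ω ^ 2 * ε j ω) + b ω ^ 2 * ε k ω)
          + b ω * (ε i ω * ε j ω)) + b ω * (ε i ω * ε k ω)) + b ω * (ε j ω * ε k ω))
          + ε i ω * (ε j ω * ε k ω) := funext fun ω => by ring
    have I1 : Integrable (fun ω => b ω ^ 3 + b ω ^ 2 * ε i ω) ℙ := hbint3.add (ib2ε i)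
    have I2 : Integrable (fun ω => (b ω ^ 3 + b ω ^ 2 * ε i ω) + b ω ^ 2 * ε j ω) ℙ :=
      I1.add (ib2ε j)
    have I3 : Integrable (fun ω => ((b ω ^ 3 + b ω ^ 2 * ε i ω) + b ω ^ 2 * ε j ω)
        + b ω ^ 2 * ε k ω) ℙ := I2.add (ib2ε k)
    have I4 : Integrable (fun ω => (((b ω ^ 3 + b ω ^ 2 * ε i ω) + b ω ^ 2 * ε j ω)
        + b ω ^ 2 * ε k ω) + b ω * (ε i ω * ε j ω)) ℙ := I3.add (ibεε i j)
    have I5 : Integrable (fun ω => ((((b ω ^ 3 + b ω ^ 2 * ε i ω) + b ω ^ 2 * ε j ω)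
        + b ω ^ 2 * ε k ω) + b ω * (ε i ω * ε j ω)) + b ω * (ε i ω * ε k ω)) ℙ :=
      I4.add (ibεε i k)
    have I6 : Integrable (fun ω => (((((b ω ^ 3 + b ω ^ 2 * ε i ω) + b ω ^ 2 * ε j ω)
        + b ω ^ 2 * ε k ω) + b ω * (ε i ω * ε j ω)) + b ω * (ε i ω * ε k ω))
        + b ω * (ε j ω * ε k ω)) ℙ := I5.add (ibεε j k)
    rw [hexp, integral_add I6 (iεεε i j k), integral_add I5 (ibεε j k),
      integral_add I4 (ibεε i k), integral_add I3 (ibεε i j), integral_add I2 (ib2ε k),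
      integral_add I1 (ib2ε j), integral_add hbint3 (ib2ε i),
      hb3, Z1 i, Z1 j, Z1 k, Z2 i j, Z2 i k, Z2 j k]
    ring
  -- expansions of the three statistics
  have hexp1 : (fun ω => (∑ j, (b ω + ε j ω)) ^ 3)
      = fun ω => ∑ p : Fin l × Fin l × Fin l,
        (b ω + ε p.1 ω) * ((b ω + ε p.2.1 ω) * (b ω + ε p.2.2 ω)) := by
    funext ω
    simp only [Fintype.sum_prod_type, ← Finset.mul_sum, ← Finset.sum_mul]
    ring
  have hexp2 : (fun ω => (∑ j, (b ω + ε j ω) ^ 2) * (∑ j, (b ω + ε j ω)))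
      = fun ω => ∑ p : Fin l × Fin l,
        (b ω + ε p.1 ω) * ((b ω + ε p.1 ω) * (b ω + ε p.2 ω)) := by
    funext ω
    simp only [Fintype.sum_prod_type, ← Finset.mul_sum, Finset.sum_mul]
    exact Finset.sum_congr rfl (fun i _ => by ring)
  -- the three expectations
  have hE1 : ∫ ω, (∑ j, (b ω + ε j ω)) ^ 3
      = (l : ℝ) ^ 3 * γb3 + ∑ j, ∫ ω, (ε j ω) ^ 3 := by
    rw [hexp1, integral_finset_sum _ (fun p _ => KInteg p.1 p.2.1 p.2.2)]
    rw [Finset.sum_congr rfl (fun p _ => by rw [hK p.1 p.2.1 p.2.2, hnu p.1 p.2.1 p.2.2])]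
    rw [Finset.sum_add_distrib]
    congr 1
    · simp only [Finset.sum_const, Finset.card_univ, Fintype.card_prod, Fintype.card_fin,
        nsmul_eq_mul]
      push_cast; ring
    · simp [Fintype.sum_prod_type, ite_and, Finset.sum_ite_eq]
  have hE2 : ∫ ω, (∑ j, (b ω + ε j ω) ^ 2) * (∑ j, (b ω + ε j ω))
      = (l : ℝ) ^ 2 * γb3 + ∑ j, ∫ ω, (ε j ω) ^ 3 := by
    rw [hexp2, integral_finset_sum _ (fun p _ => KInteg p.1 p.1 p.2)]
    rw [Finset.sum_congr rfl (fun p _ => by rw [hK p.1 p.1 p.2, hnu p.1 p.1 p.2])]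
    rw [Finset.sum_add_distrib]
    congr 1
    · simp only [Finset.sum_const, Finset.card_univ, Fintype.card_prod, Fintype.card_fin,
        nsmul_eq_mul]
      push_cast; ring
    · simp [Fintype.sum_prod_type, Finset.sum_ite_eq]
  have hE3 : ∫ ω, ∑ j, (b ω + ε j ω) ^ 3
      = (l : ℝ) * γb3 + ∑ j, ∫ ω, (ε j ω) ^ 3 := by
    rw [integral_finset_sum _ (fun j _ => he3 j)]
    have h : ∀ j : Fin l, ∫ ω, (b ω + ε j ω) ^ 3 = γb3 + ∫ ω, (ε j ω) ^ 3 := by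
      intro j
      rw [show (fun ω => (b ω + ε j ω) ^ 3)
        = fun ω => (b ω + ε j ω) * ((b ω + ε j ω) * (b ω + ε j ω))
        from funext fun ω => by ring]
      rw [hK j j j, hnu j j j, if_pos ⟨rfl, rfl⟩]
    rw [Finset.sum_congr rfl (fun j _ => h j), Finset.sum_add_distrib]
    congr 1
    simp [Finset.card_univ]
  -- global integrability
  have hIF1 : Integrable (fun ω => (∑ j, (b ω + ε j ω)) ^ 3) ℙ := by
    rw [hexp1]; exact integrable_finset_sum _ (fun p _ => KInteg p.1 p.2.1 p.2.2)
  have hIF2 : Integrable (fun ω => (∑ j, (b ω + ε j ω) ^ 2) * (∑ j, (b ω + ε j ω))) ℙ := by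
    rw [hexp2]; exact integrable_finset_sum _ (fun p _ => KInteg p.1 p.1 p.2)
  have hIF3 : Integrable (fun ω => ∑ j, (b ω + ε j ω) ^ 3) ℙ :=
    integrable_finset_sum _ (fun j _ => he3 j)
  -- put everything together
  have hsplit : (fun ω => ((∑ j, (b ω + ε j ω)) ^ 3
        - 3 * (∑ j, (b ω + ε j ω) ^ 2) * (∑ j, (b ω + ε j ω))
        + 2 * ∑ j, (b ω + ε j ω) ^ 3))
      = fun ω => ((∑ j, (b ω + ε j ω)) ^ 3
        - 3 * ((∑ j, (b ω + ε j ω) ^ 2) * (∑ j, (b ω + ε j ω))))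
        + 2 * (∑ j, (b ω + ε j ω) ^ 3) := funext fun ω => by ring
  have hC : Integrable (fun ω => 3 * ((∑ j, (b ω + ε j ω) ^ 2) * (∑ j, (b ω + ε j ω)))) ℙ :=
    hIF2.const_mul 3
  have hA : Integrable (fun ω => (∑ j, (b ω + ε j ω)) ^ 3
      - 3 * ((∑ j, (b ω + ε j ω) ^ 2) * (∑ j, (b ω + ε j ω)))) ℙ := hIF1.sub hC
  have hB : Integrable (fun ω => 2 * ∑ j, (b ω + ε j ω) ^ 3) ℙ := hIF3.const_mul 2
  rw [hsplit, integral_add hA hB, integral_sub hIF1 hC, integral_const_mul, integral_const_mul,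
    hE1, hE2, hE3]
  ring
end

section
/- With f_m^4 = (Σ_j e_j^m)(Σ_j e_j)^{4−m}, one has E[f_4^4] = l·γ_b⁴ + 6l·γ_b²γ_ε² + l·γ_ε⁴ and E[f_3^4] = l²·γ_b⁴ + 3l(l+1)·γ_b²γ_ε² + l·γ_ε⁴. -/
open MeasureTheory ProbabilityTheory Finset

/-- E[f_4^4] and E[f_3^4] identities. -/
theorem fourth_moment_f44_f34
    {l : ℕ} (hl : 1 ≤ l)
    {Ω : Type*} [MeasureSpace Ω] [IsProbabilityMeasure (ℙ : Measure Ω)]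
    (b : Ω → ℝ) (ε : Fin l → Ω → ℝ)
    (hbmeas : Measurable b) (hεmeas : ∀ j, Measurable (ε j))
    (hindep : ProbabilityTheory.iIndepFun
      (fun i : Option (Fin l) => Option.elim i b ε) ℙ)
    (hident : ∀ j j' : Fin l, Measure.map (ε j) ℙ = Measure.map (ε j') ℙ)
    (hεmean : ∀ j, ∫ ω, ε j ω = 0)
    (hεint4 : ∀ j, Integrable (fun ω => (ε j ω) ^ 4) ℙ)
    (hbint4 : Integrable (fun ω => (b ω) ^ 4) ℙ)
    (hbmean : ∫ ω, b ω = 0)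
    (γb2 γb4 γε2 γε4 : ℝ)
    (hb2 : ∫ ω, (b ω) ^ 2 = γb2) (hb4 : ∫ ω, (b ω) ^ 4 = γb4)
    (hε2 : ∀ j, ∫ ω, (ε j ω) ^ 2 = γε2) (hε4 : ∀ j, ∫ ω, (ε j ω) ^ 4 = γε4) :
    (∫ ω, ∑ j, (b ω + ε j ω) ^ 4
        = (l : ℝ) * γb4 + 6 * (l : ℝ) * γb2 * γε2 + (l : ℝ) * γε4) ∧
    (∫ ω, (∑ j, (b ω + ε j ω) ^ 3) * (∑ j, (b ω + ε j ω))
        = (l : ℝ) ^ 2 * γb4 + 3 * (l : ℝ) * ((l : ℝ) + 1) * γb2 * γε2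
          + (l : ℝ) * γε4) := by
  -- Integrability of lower powers
  have powint : ∀ (X : Ω → ℝ), Measurable X → Integrable (fun ω => X ω ^ 4) ℙ →
      ∀ k, k ≤ 4 → Integrable (fun ω => X ω ^ k) ℙ := by
    intro X hm h4 k hk
    refine Integrable.mono' ((integrable_const (1:ℝ)).add h4)
      ((hm.pow_const k).aestronglyMeasurable) ?_
    filter_upwards with ω
    simp only [Pi.add_apply]
    have hxa : X ω ^ 4 = |X ω| ^ 4 := by
      rw [← abs_pow, abs_of_nonneg (by positivity)]
    rw [Real.norm_eq_abs, abs_pow, hxa]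
    rcases le_total (|X ω|) 1 with h | h
    · calc |X ω| ^ k ≤ 1 := pow_le_one₀ (abs_nonneg _) h
        _ ≤ 1 + |X ω| ^ 4 := le_add_of_nonneg_right (by positivity)
    · calc |X ω| ^ k ≤ |X ω| ^ 4 := pow_le_pow_right₀ h hk
        _ ≤ 1 + |X ω| ^ 4 := le_add_of_nonneg_left zero_le_one
  have hbm : ∀ k, k ≤ 4 → Integrable (fun ω => b ω ^ k) ℙ := powint b hbmeas hbint4
  have hεm : ∀ j k, k ≤ 4 → Integrable (fun ω => ε j ω ^ k) ℙ :=
    fun j => powint (ε j) (hεmeas j) (hεint4 j)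
  have hε1 : ∀ j, Integrable (ε j) ℙ := by
    intro j; simpa using hεm j 1 (by norm_num)
  have hfmeas : ∀ i : Option (Fin l), Measurable (Option.elim i b ε) := by
    intro i; cases i
    · exact hbmeas
    · exact hεmeas _
  -- pairwise independence b vs ε j
  have hbε : ∀ j, IndepFun b (ε j) ℙ :=
    fun j => hindep.indepFun (show (none : Option (Fin l)) ≠ some j by simp)
  -- product moments E[b^m ε_j^n]
  have hmul : ∀ (j : Fin l) (m n : ℕ), m ≤ 4 → n ≤ 4 →
      Integrable (fun ω => b ω ^ m * ε j ω ^ n) ℙ ∧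
      ∫ ω, b ω ^ m * ε j ω ^ n = (∫ ω, b ω ^ m) * ∫ ω, ε j ω ^ n := by
    intro j m n hm hn
    have hi : IndepFun (fun ω => b ω ^ m) (fun ω => ε j ω ^ n) ℙ :=
      (hbε j).comp (measurable_id.pow_const m) (measurable_id.pow_const n)
    exact ⟨hi.integrable_mul (hbm m hm) (hεm j n hn),
      hi.integral_mul_eq_mul_integral (hbm m hm).aestronglyMeasurable (hεm j n hn).aestronglyMeasurable⟩
  have hb1 : ∫ ω, b ω ^ 1 = 0 := by simpa using hbmean
  have hε1' : ∀ j, ∫ ω, ε j ω ^ 1 = 0 := by intro j; simpa using hεmean j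
  have hε0 : ∀ j, ∫ ω, ε j ω ^ 0 = 1 := by intro j; simp
  -- triple products vanish
  have htrip : ∀ (j k : Fin l), j ≠ k → ∀ (m n : ℕ), m ≤ 4 → n ≤ 4 →
      Integrable (fun ω => b ω ^ m * ε j ω ^ n * ε k ω) ℙ ∧
      ∫ ω, b ω ^ m * ε j ω ^ n * ε k ω = 0 := by
    intro j k hjk m n hm hn
    have hp : IndepFun (fun ω => (b ω, ε j ω)) (ε k) ℙ :=
      hindep.indepFun_prodMk hfmeas none (some j) (some k) (by simp)
        (by simp [hjk])
    have hi : IndepFun (fun ω => b ω ^ m * ε j ω ^ n) (ε k) ℙ :=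
      hp.comp ((measurable_fst.pow_const m).mul (measurable_snd.pow_const n)) measurable_id
    refine ⟨hi.integrable_mul (hmul j m n hm hn).1 (hε1 k), ?_⟩
    have := hi.integral_mul_eq_mul_integral (hmul j m n hm hn).1.aestronglyMeasurable (hε1 k).aestronglyMeasurable
    calc ∫ ω, b ω ^ m * ε j ω ^ n * ε k ω
        = (∫ ω, b ω ^ m * ε j ω ^ n) * ∫ ω, ε k ω := this
      _ = 0 := by rw [hεmean k, mul_zero]
  -- diagonal terms
  have hdiag : ∀ j : Fin l, Integrable (fun ω => (b ω + ε j ω) ^ 4) ℙ ∧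
      ∫ ω, (b ω + ε j ω) ^ 4 = γb4 + 6 * γb2 * γε2 + γε4 := by
    intro j
    have i1 := (hmul j 4 0 (by norm_num) (by norm_num)).1
    have i2 := ((hmul j 3 1 (by norm_num) (by norm_num)).1.const_mul (4:ℝ))
    have i3 := ((hmul j 2 2 (by norm_num) (by norm_num)).1.const_mul (6:ℝ))
    have i4 := ((hmul j 1 3 (by norm_num) (by norm_num)).1.const_mul (4:ℝ))
    have i5 := (hmul j 0 4 (by norm_num) (by norm_num)).1
    have hexp : (fun ω => (b ω + ε j ω) ^ 4) = fun ω =>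
        b ω ^ 4 * ε j ω ^ 0 + 4 * (b ω ^ 3 * ε j ω ^ 1) + 6 * (b ω ^ 2 * ε j ω ^ 2)
          + 4 * (b ω ^ 1 * ε j ω ^ 3) + b ω ^ 0 * ε j ω ^ 4 := by
      funext ω; ring
    have e1 : ∫ ω, b ω ^ 4 * ε j ω ^ 0 = γb4 := by
      rw [(hmul j 4 0 (by norm_num) (by norm_num)).2, hb4, hε0, mul_one]
    have e2 : ∫ ω, b ω ^ 3 * ε j ω ^ 1 = 0 := by
      rw [(hmul j 3 1 (by norm_num) (by norm_num)).2, hε1' j, mul_zero]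
    have e3 : ∫ ω, b ω ^ 2 * ε j ω ^ 2 = γb2 * γε2 := by
      rw [(hmul j 2 2 (by norm_num) (by norm_num)).2, hb2, hε2 j]
    have e4 : ∫ ω, b ω ^ 1 * ε j ω ^ 3 = 0 := by
      rw [(hmul j 1 3 (by norm_num) (by norm_num)).2, hb1, zero_mul]
    have e5 : ∫ ω, b ω ^ 0 * ε j ω ^ 4 = γε4 := by
      have : (fun ω => b ω ^ 0 * ε j ω ^ 4) = fun ω => ε j ω ^ 4 := by
        funext ω; ring
      rw [this, hε4 j]
    have i12 : Integrable (fun ω => b ω ^ 4 * ε j ω ^ 0 + 4 * (b ω ^ 3 * ε j ω ^ 1)) ℙ :=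
      i1.add i2
    have i13 : Integrable (fun ω => b ω ^ 4 * ε j ω ^ 0 + 4 * (b ω ^ 3 * ε j ω ^ 1)
        + 6 * (b ω ^ 2 * ε j ω ^ 2)) ℙ := i12.add i3
    have i14 : Integrable (fun ω => b ω ^ 4 * ε j ω ^ 0 + 4 * (b ω ^ 3 * ε j ω ^ 1)
        + 6 * (b ω ^ 2 * ε j ω ^ 2) + 4 * (b ω ^ 1 * ε j ω ^ 3)) ℙ := i13.add i4
    constructor
    · rw [hexp]; exact i14.add i5
    · rw [hexp, integral_add i14 i5, integral_add i13 i4, integral_add i12 i3,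
        integral_add i1 i2, integral_const_mul, integral_const_mul, integral_const_mul,
        e1, e2, e3, e4, e5]
      ring
  -- off-diagonal terms
  have hoff : ∀ (j k : Fin l), j ≠ k →
      Integrable (fun ω => (b ω + ε j ω) ^ 3 * (b ω + ε k ω)) ℙ ∧
      ∫ ω, (b ω + ε j ω) ^ 3 * (b ω + ε k ω) = γb4 + 3 * γb2 * γε2 := by
    intro j k hjk
    have i1 := (hmul j 4 0 (by norm_num) (by norm_num)).1
    have i2 := ((hmul j 3 1 (by norm_num) (by norm_num)).1.const_mul (3:ℝ))
    have i3 := ((hmul j 2 2 (by norm_num) (by norm_num)).1.const_mul (3:ℝ))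
    have i4 := (hmul j 1 3 (by norm_num) (by norm_num)).1
    have i5 := (htrip j k hjk 3 0 (by norm_num) (by norm_num)).1
    have i6 := ((htrip j k hjk 2 1 (by norm_num) (by norm_num)).1.const_mul (3:ℝ))
    have i7 := ((htrip j k hjk 1 2 (by norm_num) (by norm_num)).1.const_mul (3:ℝ))
    have i8 := (htrip j k hjk 0 3 (by norm_num) (by norm_num)).1
    have hexp : (fun ω => (b ω + ε j ω) ^ 3 * (b ω + ε k ω)) = fun ω =>
        b ω ^ 4 * ε j ω ^ 0 + 3 * (b ω ^ 3 * ε j ω ^ 1) + 3 * (b ω ^ 2 * ε j ω ^ 2)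
          + b ω ^ 1 * ε j ω ^ 3
          + b ω ^ 3 * ε j ω ^ 0 * ε k ω + 3 * (b ω ^ 2 * ε j ω ^ 1 * ε k ω)
          + 3 * (b ω ^ 1 * ε j ω ^ 2 * ε k ω) + b ω ^ 0 * ε j ω ^ 3 * ε k ω := by
      funext ω; ring
    have e1 : ∫ ω, b ω ^ 4 * ε j ω ^ 0 = γb4 := by
      rw [(hmul j 4 0 (by norm_num) (by norm_num)).2, hb4, hε0, mul_one]
    have e2 : ∫ ω, b ω ^ 3 * ε j ω ^ 1 = 0 := by
      rw [(hmul j 3 1 (by norm_num) (by norm_num)).2, hε1' j, mul_zero]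
    have e3 : ∫ ω, b ω ^ 2 * ε j ω ^ 2 = γb2 * γε2 := by
      rw [(hmul j 2 2 (by norm_num) (by norm_num)).2, hb2, hε2 j]
    have e4 : ∫ ω, b ω ^ 1 * ε j ω ^ 3 = 0 := by
      rw [(hmul j 1 3 (by norm_num) (by norm_num)).2, hb1, zero_mul]
    have e5 := (htrip j k hjk 3 0 (by norm_num) (by norm_num)).2
    have e6 := (htrip j k hjk 2 1 (by norm_num) (by norm_num)).2
    have e7 := (htrip j k hjk 1 2 (by norm_num) (by norm_num)).2
    have e8 := (htrip j k hjk 0 3 (by norm_num) (by norm_num)).2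
    have i12 : Integrable (fun ω => b ω ^ 4 * ε j ω ^ 0 + 3 * (b ω ^ 3 * ε j ω ^ 1)) ℙ :=
      i1.add i2
    have i13 : Integrable (fun ω => b ω ^ 4 * ε j ω ^ 0 + 3 * (b ω ^ 3 * ε j ω ^ 1)
        + 3 * (b ω ^ 2 * ε j ω ^ 2)) ℙ := i12.add i3
    have i14 : Integrable (fun ω => b ω ^ 4 * ε j ω ^ 0 + 3 * (b ω ^ 3 * ε j ω ^ 1)
        + 3 * (b ω ^ 2 * ε j ω ^ 2) + b ω ^ 1 * ε j ω ^ 3) ℙ := i13.add i4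
    have i15 : Integrable (fun ω => b ω ^ 4 * ε j ω ^ 0 + 3 * (b ω ^ 3 * ε j ω ^ 1)
        + 3 * (b ω ^ 2 * ε j ω ^ 2) + b ω ^ 1 * ε j ω ^ 3
        + b ω ^ 3 * ε j ω ^ 0 * ε k ω) ℙ := i14.add i5
    have i16 : Integrable (fun ω => b ω ^ 4 * ε j ω ^ 0 + 3 * (b ω ^ 3 * ε j ω ^ 1)
        + 3 * (b ω ^ 2 * ε j ω ^ 2) + b ω ^ 1 * ε j ω ^ 3
        + b ω ^ 3 * ε j ω ^ 0 * ε k ω + 3 * (b ω ^ 2 * ε j ω ^ 1 * ε k ω)) ℙ := i15.add i6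
    have i17 : Integrable (fun ω => b ω ^ 4 * ε j ω ^ 0 + 3 * (b ω ^ 3 * ε j ω ^ 1)
        + 3 * (b ω ^ 2 * ε j ω ^ 2) + b ω ^ 1 * ε j ω ^ 3
        + b ω ^ 3 * ε j ω ^ 0 * ε k ω + 3 * (b ω ^ 2 * ε j ω ^ 1 * ε k ω)
        + 3 * (b ω ^ 1 * ε j ω ^ 2 * ε k ω)) ℙ := i16.add i7
    constructor
    · rw [hexp]
      exact i17.add i8
    · rw [hexp,
        integral_add i17 i8, integral_add i16 i7, integral_add i15 i6,
        integral_add i14 i5, integral_add i13 i4, integral_add i12 i3, integral_add i1 i2,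
        integral_const_mul, integral_const_mul, integral_const_mul, integral_const_mul,
        e1, e2, e3, e4, e5, e6, e7, e8]
      ring
  -- general term of the double sum
  have hterm : ∀ j k : Fin l,
      Integrable (fun ω => (b ω + ε j ω) ^ 3 * (b ω + ε k ω)) ℙ ∧
      ∫ ω, (b ω + ε j ω) ^ 3 * (b ω + ε k ω) =
        if j = k then γb4 + 6 * γb2 * γε2 + γε4 else γb4 + 3 * γb2 * γε2 := by
    intro j k
    by_cases hjk : j = k
    · subst hjk
      have he : (fun ω => (b ω + ε j ω) ^ 3 * (b ω + ε j ω)) =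
          fun ω => (b ω + ε j ω) ^ 4 := by funext ω; ring
      rw [he, if_pos rfl]
      exact hdiag j
    · rw [if_neg hjk]
      exact hoff j k hjk
  constructor
  · rw [integral_finset_sum _ (fun j _ => (hdiag j).1),
      Finset.sum_congr rfl (fun j _ => (hdiag j).2), Finset.sum_const, Finset.card_univ,
      Fintype.card_fin, nsmul_eq_mul]
    ring
  · have hsplit : ∫ ω, (∑ j, (b ω + ε j ω) ^ 3) * (∑ j, (b ω + ε j ω))
        = ∫ ω, ∑ j : Fin l, ∑ k : Fin l, (b ω + ε j ω) ^ 3 * (b ω + ε k ω) := by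
      congr 1; funext ω; rw [Finset.sum_mul_sum]
    rw [hsplit,
      integral_finset_sum _ (fun j _ => integrable_finset_sum _ (fun k _ => (hterm j k).1)),
      Finset.sum_congr rfl (fun j _ => integral_finset_sum _ (fun k _ => (hterm j k).1)),
      Finset.sum_congr rfl (fun j _ => Finset.sum_congr rfl (fun k _ => (hterm j k).2))]
    have hrow : ∀ j : Fin l, (∑ k : Fin l,
        if j = k then γb4 + 6 * γb2 * γε2 + γε4 else γb4 + 3 * γb2 * γε2)
        = (l : ℝ) * (γb4 + 3 * γb2 * γε2) + (3 * γb2 * γε2 + γε4) := by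
      intro j
      have hsw : ∀ k : Fin l, (if j = k then γb4 + 6 * γb2 * γε2 + γε4
          else γb4 + 3 * γb2 * γε2)
          = (γb4 + 3 * γb2 * γε2) + (if j = k then 3 * γb2 * γε2 + γε4 else 0) := by
        intro k; split <;> ring
      rw [Finset.sum_congr rfl (fun k _ => hsw k), Finset.sum_add_distrib,
        Finset.sum_const, Finset.card_univ, Fintype.card_fin, nsmul_eq_mul,
        Finset.sum_ite_eq univ j (fun _ => 3 * γb2 * γε2 + γε4), if_pos (Finset.mem_univ j)]
    rw [Finset.sum_congr rfl (fun j _ => hrow j), Finset.sum_const, Finset.card_univ,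
      Fintype.card_fin, nsmul_eq_mul]
    ring
end

section
/- With f_m^4 (m = 1,...,4) and f_5^4 = (Σ_j e_j²)² as above, E[(l² − 2l + 3)(l·f_4^4 − 4·f_3^4) + 6l·f_2^4 − 3·f_1^4 − 3(2l − 3)·f_5^4] = l(l−1)(l−2)(l−3)·γ_ε⁴. -/
open MeasureTheory ProbabilityTheory Finset

private lemma norm_pow_le_one_add_pow_four (x : ℝ) {k : ℕ} (hk : k ≤ 4) :
    ‖x ^ k‖ ≤ 1 + x ^ 4 := by
  have h4 : x ^ 4 = |x| ^ 4 := by rw [← abs_pow, abs_of_nonneg (by positivity)]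
  rw [Real.norm_eq_abs, abs_pow]
  rcases le_total |x| 1 with h | h
  · have h1 : |x| ^ k ≤ 1 := pow_le_one₀ (abs_nonneg x) h
    nlinarith [pow_nonneg (abs_nonneg x) 4]
  · have h1 : |x| ^ k ≤ |x| ^ 4 := pow_le_pow_right₀ h hk
    nlinarith [pow_nonneg (abs_nonneg x) 4]

private lemma integrable_pow_of_pow_four {Ω : Type*} [MeasureSpace Ω]
    [IsProbabilityMeasure (ℙ : Measure Ω)] {f : Ω → ℝ} (hf : Measurable f)
    (h4 : Integrable (fun ω => f ω ^ 4) ℙ) {k : ℕ} (hk : k ≤ 4) :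
    Integrable (fun ω => f ω ^ k) ℙ := by
  refine Integrable.mono' ((integrable_const 1).add h4) ((hf.pow_const k).aestronglyMeasurable)
    (ae_of_all _ fun ω => ?_)
  simpa using norm_pow_le_one_add_pow_four (f ω) hk

private lemma shift_invariance (n : ℕ) (x : ℝ) (a : Fin n → ℝ) :
    ((n : ℝ) ^ 2 - 2 * (n : ℝ) + 3)
        * ((n : ℝ) * ∑ j, (x + a j) ^ 4
           - 4 * (∑ j, (x + a j) ^ 3) * (∑ j, (x + a j)))
      + 6 * (n : ℝ) * (∑ j, (x + a j) ^ 2) * (∑ j, (x + a j)) ^ 2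
      - 3 * (∑ j, (x + a j)) ^ 4
      - 3 * (2 * (n : ℝ) - 3) * (∑ j, (x + a j) ^ 2) ^ 2
    = ((n : ℝ) ^ 2 - 2 * (n : ℝ) + 3)
        * ((n : ℝ) * ∑ j, (a j) ^ 4
           - 4 * (∑ j, (a j) ^ 3) * (∑ j, (a j)))
      + 6 * (n : ℝ) * (∑ j, (a j) ^ 2) * (∑ j, (a j)) ^ 2
      - 3 * (∑ j, (a j)) ^ 4
      - 3 * (2 * (n : ℝ) - 3) * (∑ j, (a j) ^ 2) ^ 2 := by
  have e1 : ∑ j, (x + a j) = (n : ℝ) * x + ∑ j, a j := by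
    rw [Finset.sum_add_distrib, Finset.sum_const, Finset.card_univ, Fintype.card_fin,
      nsmul_eq_mul]
  have e2 : ∑ j, (x + a j) ^ 2
      = (n : ℝ) * x ^ 2 + (2 * x * ∑ j, a j + ∑ j, (a j) ^ 2) := by
    rw [Finset.sum_congr rfl (fun j _ => show (x + a j) ^ 2
        = x ^ 2 + (2 * x * a j + a j ^ 2) from by ring),
      Finset.sum_add_distrib, Finset.sum_add_distrib, ← Finset.mul_sum, Finset.sum_const,
      Finset.card_univ, Fintype.card_fin, nsmul_eq_mul]
  have e3 : ∑ j, (x + a j) ^ 3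
      = (n : ℝ) * x ^ 3 + (3 * x ^ 2 * ∑ j, a j + (3 * x * ∑ j, (a j) ^ 2
          + ∑ j, (a j) ^ 3)) := by
    rw [Finset.sum_congr rfl (fun j _ => show (x + a j) ^ 3
        = x ^ 3 + (3 * x ^ 2 * a j + (3 * x * a j ^ 2 + a j ^ 3)) from by ring),
      Finset.sum_add_distrib, Finset.sum_add_distrib, Finset.sum_add_distrib,
      ← Finset.mul_sum, ← Finset.mul_sum, Finset.sum_const,
      Finset.card_univ, Fintype.card_fin, nsmul_eq_mul]
  have e4 : ∑ j, (x + a j) ^ 4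
      = (n : ℝ) * x ^ 4 + (4 * x ^ 3 * ∑ j, a j + (6 * x ^ 2 * ∑ j, (a j) ^ 2
          + (4 * x * ∑ j, (a j) ^ 3 + ∑ j, (a j) ^ 4))) := by
    rw [Finset.sum_congr rfl (fun j _ => show (x + a j) ^ 4
        = x ^ 4 + (4 * x ^ 3 * a j + (6 * x ^ 2 * a j ^ 2 + (4 * x * a j ^ 3 + a j ^ 4)))
        from by ring),
      Finset.sum_add_distrib, Finset.sum_add_distrib, Finset.sum_add_distrib,
      Finset.sum_add_distrib, ← Finset.mul_sum, ← Finset.mul_sum, ← Finset.mul_sum,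
      Finset.sum_const, Finset.card_univ, Fintype.card_fin, nsmul_eq_mul]
  rw [e1, e2, e3, e4]
  ring


open MeasureTheory ProbabilityTheory Finset
/-- the combination of f_1^4,...,f_5^4 isolating the fourth moment of ε. -/
theorem fourth_moment_eps_combination
    {l : ℕ} (hl : 4 ≤ l)
    {Ω : Type*} [MeasureSpace Ω] [IsProbabilityMeasure (ℙ : Measure Ω)]
    (b : Ω → ℝ) (ε : Fin l → Ω → ℝ)
    (hbmeas : Measurable b) (hεmeas : ∀ j, Measurable (ε j))
    (hindep : ProbabilityTheory.iIndepFun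
      (fun i : Option (Fin l) => Option.elim i b ε) ℙ)
    (hident : ∀ j j' : Fin l, Measure.map (ε j) ℙ = Measure.map (ε j') ℙ)
    (hεmean : ∀ j, ∫ ω, ε j ω = 0)
    (hεint4 : ∀ j, Integrable (fun ω => (ε j ω) ^ 4) ℙ)
    (hbint4 : Integrable (fun ω => (b ω) ^ 4) ℙ)
    (hbmean : ∫ ω, b ω = 0)
    (γε4 : ℝ)
    (hε4 : ∀ j, ∫ ω, (ε j ω) ^ 4 = γε4) :
    ∫ ω, (((l : ℝ) ^ 2 - 2 * (l : ℝ) + 3)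
            * ((l : ℝ) * ∑ j, (b ω + ε j ω) ^ 4
               - 4 * (∑ j, (b ω + ε j ω) ^ 3) * (∑ j, (b ω + ε j ω)))
          + 6 * (l : ℝ) * (∑ j, (b ω + ε j ω) ^ 2) * (∑ j, (b ω + ε j ω)) ^ 2
          - 3 * (∑ j, (b ω + ε j ω)) ^ 4
          - 3 * (2 * (l : ℝ) - 3) * (∑ j, (b ω + ε j ω) ^ 2) ^ 2)
      = (l : ℝ) * ((l : ℝ) - 1) * ((l : ℝ) - 2) * ((l : ℝ) - 3) * γε4 := by
  classical
  have hpt : ∀ ω : Ω, (((l : ℝ) ^ 2 - 2 * (l : ℝ) + 3)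
            * ((l : ℝ) * ∑ j, (b ω + ε j ω) ^ 4
               - 4 * (∑ j, (b ω + ε j ω) ^ 3) * (∑ j, (b ω + ε j ω)))
          + 6 * (l : ℝ) * (∑ j, (b ω + ε j ω) ^ 2) * (∑ j, (b ω + ε j ω)) ^ 2
          - 3 * (∑ j, (b ω + ε j ω)) ^ 4
          - 3 * (2 * (l : ℝ) - 3) * (∑ j, (b ω + ε j ω) ^ 2) ^ 2)
      = (((l : ℝ) ^ 2 - 2 * (l : ℝ) + 3)
            * ((l : ℝ) * ∑ j, (ε j ω) ^ 4
               - 4 * (∑ j, (ε j ω) ^ 3) * (∑ j, (ε j ω)))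
          + 6 * (l : ℝ) * (∑ j, (ε j ω) ^ 2) * (∑ j, (ε j ω)) ^ 2
          - 3 * (∑ j, (ε j ω)) ^ 4
          - 3 * (2 * (l : ℝ) - 3) * (∑ j, (ε j ω) ^ 2) ^ 2) := fun ω =>
    shift_invariance l (b ω) (fun j => ε j ω)
  simp only [hpt]
  -- basic setup
  have hl0 : 0 < l := by omega
  have hmeas : ∀ i : Option (Fin l),
      Measurable ((fun i : Option (Fin l) => Option.elim i b ε) i) := by
    rintro (_ | j)
    · exact hbmeas
    · exact hεmeas j
  set j0 : Fin l := ⟨0, hl0⟩ with hj0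
  set μ2 : ℝ := ∫ ω, ε j0 ω ^ 2 with hμ2
  set μ3 : ℝ := ∫ ω, ε j0 ω ^ 3 with hμ3
  have hmom : ∀ (k : ℕ) (j j' : Fin l), (∫ ω, ε j ω ^ k) = ∫ ω, ε j' ω ^ k := by
    intro k j j'
    have h1 : (∫ ω, ε j ω ^ k) = ∫ x, x ^ k ∂(Measure.map (ε j) ℙ) :=
      (integral_map (hεmeas j).aemeasurable
        (measurable_id.pow_const k).aestronglyMeasurable).symm
    have h2 : (∫ ω, ε j' ω ^ k) = ∫ x, x ^ k ∂(Measure.map (ε j') ℙ) :=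
      (integral_map (hεmeas j').aemeasurable
        (measurable_id.pow_const k).aestronglyMeasurable).symm
    rw [h1, h2, hident j j']
  have hm2 : ∀ j, (∫ ω, ε j ω ^ 2) = μ2 := fun j => hmom 2 j j0
  have hm3 : ∀ j, (∫ ω, ε j ω ^ 3) = μ3 := fun j => hmom 3 j j0
  have hm1 : ∀ j, (∫ ω, ε j ω ^ 1) = 0 := fun j => by simpa using hεmean j
  have hI : ∀ (j : Fin l) (k : ℕ), k ≤ 4 → Integrable (fun ω => ε j ω ^ k) ℙ :=
    fun j k hk => integrable_pow_of_pow_four (hεmeas j) (hεint4 j) hk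
  -- independence of distinct coordinates, with powers
  have hind2 : ∀ (j k : Fin l), j ≠ k → ∀ (a c : ℕ),
      IndepFun (fun ω => ε j ω ^ a) (fun ω => ε k ω ^ c) ℙ := by
    intro j k hjk a c
    have h := hindep.indepFun (i := some j) (j := some k) (by simpa using hjk)
    exact h.comp (measurable_id.pow_const a) (measurable_id.pow_const c)
  -- independence of a partial sum from an outside coordinate
  have hsumind : ∀ (s : Finset (Fin l)) (i : Fin l), i ∉ s →
      IndepFun (fun ω => ∑ j ∈ s, ε j ω) (ε i) ℙ := by
    intro s i hi
    have h := hindep.indepFun_finsetSum_of_notMem hmeas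
      (s := s.image some) (i := some i) (by simpa using hi)
    have hs : (∑ j ∈ s.image some, (fun i : Option (Fin l) => Option.elim i b ε) j)
        = fun ω => ∑ j ∈ s, ε j ω := by
      funext ω
      rw [Finset.sum_apply, Finset.sum_image (fun x _ y _ h => Option.some_injective _ h)]
      rfl
    rw [hs] at h
    exact h
  have hsumindpow : ∀ (s : Finset (Fin l)) (i : Fin l), i ∉ s → ∀ (a c : ℕ),
      IndepFun (fun ω => (∑ j ∈ s, ε j ω) ^ a) (fun ω => ε i ω ^ c) ℙ :=
    fun s i hi a c =>
      (hsumind s i hi).comp (measurable_id.pow_const a) (measurable_id.pow_const c)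
  -- moments of partial sums of the ε's
  have key : ∀ s : Finset (Fin l),
      (∀ k : ℕ, k ≤ 4 → Integrable (fun ω => (∑ j ∈ s, ε j ω) ^ k) ℙ) ∧
      (∫ ω, (∑ j ∈ s, ε j ω) ^ 1) = 0 ∧
      (∫ ω, (∑ j ∈ s, ε j ω) ^ 2) = s.card * μ2 ∧
      (∫ ω, (∑ j ∈ s, ε j ω) ^ 3) = s.card * μ3 ∧
      (∫ ω, (∑ j ∈ s, ε j ω) ^ 4)
        = s.card * γε4 + 3 * s.card * (s.card - 1) * μ2 ^ 2 := by
    intro s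
    induction s using Finset.induction_on with
    | empty =>
      refine ⟨fun k hk => ?_, ?_, ?_, ?_, ?_⟩
      · simp only [Finset.sum_empty]; exact integrable_const _
      all_goals simp
    | @insert i s hi ih =>
      obtain ⟨ihInt, ih1, ih2, ih3, ih4⟩ := ih
      have hTmeas : Measurable (fun ω => ∑ j ∈ s, ε j ω) :=
        Finset.measurable_sum _ fun j _ => hεmeas j
      have hp := hsumindpow s i hi
      have hmulInt : ∀ a c : ℕ, a ≤ 4 → c ≤ 4 →
          Integrable (fun ω => (∑ j ∈ s, ε j ω) ^ a * ε i ω ^ c) ℙ :=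
        fun a c ha hc => (hp a c).integrable_mul (ihInt a ha) (hI i c hc)
      have hmulVal : ∀ a c : ℕ,
          (∫ ω, (∑ j ∈ s, ε j ω) ^ a * ε i ω ^ c)
            = (∫ ω, (∑ j ∈ s, ε j ω) ^ a) * ∫ ω, ε i ω ^ c :=
        fun a c => (hp a c).integral_fun_mul_eq_mul_integral ((hTmeas.pow_const a).aestronglyMeasurable)
          (((hεmeas i).pow_const c).aestronglyMeasurable)
      have hcard : ((insert i s).card : ℝ) = (s.card : ℝ) + 1 := by
        rw [Finset.card_insert_of_notMem hi]; push_cast; ring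
      have e1 : (fun ω => (∑ j ∈ insert i s, ε j ω) ^ 1)
          = fun ω => (∑ j ∈ s, ε j ω) ^ 1 + ε i ω ^ 1 :=
        funext fun ω => by rw [Finset.sum_insert hi]; ring
      have e2 : (fun ω => (∑ j ∈ insert i s, ε j ω) ^ 2)
          = fun ω => (∑ j ∈ s, ε j ω) ^ 2
              + (2 * ((∑ j ∈ s, ε j ω) ^ 1 * ε i ω ^ 1) + ε i ω ^ 2) :=
        funext fun ω => by rw [Finset.sum_insert hi]; ring
      have e3 : (fun ω => (∑ j ∈ insert i s, ε j ω) ^ 3)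
          = fun ω => (∑ j ∈ s, ε j ω) ^ 3
              + (3 * ((∑ j ∈ s, ε j ω) ^ 2 * ε i ω ^ 1)
                + (3 * ((∑ j ∈ s, ε j ω) ^ 1 * ε i ω ^ 2) + ε i ω ^ 3)) :=
        funext fun ω => by rw [Finset.sum_insert hi]; ring
      have e4 : (fun ω => (∑ j ∈ insert i s, ε j ω) ^ 4)
          = fun ω => (∑ j ∈ s, ε j ω) ^ 4
              + (4 * ((∑ j ∈ s, ε j ω) ^ 3 * ε i ω ^ 1)
                + (6 * ((∑ j ∈ s, ε j ω) ^ 2 * ε i ω ^ 2)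
                  + (4 * ((∑ j ∈ s, ε j ω) ^ 1 * ε i ω ^ 3) + ε i ω ^ 4))) :=
        funext fun ω => by rw [Finset.sum_insert hi]; ring
      refine ⟨?_, ?_, ?_, ?_, ?_⟩
      · intro k hk
        interval_cases k
        · simp only [pow_zero]; exact integrable_const _
        · rw [e1]; exact (ihInt 1 (by norm_num)).add (hI i 1 (by norm_num))
        · rw [e2]
          exact (ihInt 2 (by norm_num)).add
            (((hmulInt 1 1 (by norm_num) (by norm_num)).const_mul 2).add
              (hI i 2 (by norm_num)))
        · rw [e3]
          exact (ihInt 3 (by norm_num)).add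
            (((hmulInt 2 1 (by norm_num) (by norm_num)).const_mul 3).add
              (((hmulInt 1 2 (by norm_num) (by norm_num)).const_mul 3).add
                (hI i 3 (by norm_num))))
        · rw [e4]
          exact (ihInt 4 (by norm_num)).add
            (((hmulInt 3 1 (by norm_num) (by norm_num)).const_mul 4).add
              (((hmulInt 2 2 (by norm_num) (by norm_num)).const_mul 6).add
                (((hmulInt 1 3 (by norm_num) (by norm_num)).const_mul 4).add
                  (hI i 4 (by norm_num)))))
      · rw [e1, integral_add (ihInt 1 (by norm_num)) (hI i 1 (by norm_num)), ih1, hm1 i]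
        norm_num
      · have g1 : Integrable (fun ω => 2 * ((∑ j ∈ s, ε j ω) ^ 1 * ε i ω ^ 1)
            + ε i ω ^ 2) ℙ :=
          ((hmulInt 1 1 (by norm_num) (by norm_num)).const_mul 2).add (hI i 2 (by norm_num))
        rw [e2, integral_add (ihInt 2 (by norm_num)) g1,
          integral_add ((hmulInt 1 1 (by norm_num) (by norm_num)).const_mul 2)
            (hI i 2 (by norm_num)),
          integral_const_mul, hmulVal 1 1, ih1, ih2, hm1 i, hm2 i, hcard]
        ring
      · have g2 : Integrable (fun ω => 3 * ((∑ j ∈ s, ε j ω) ^ 1 * ε i ω ^ 2)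
            + ε i ω ^ 3) ℙ :=
          ((hmulInt 1 2 (by norm_num) (by norm_num)).const_mul 3).add (hI i 3 (by norm_num))
        have g1 : Integrable (fun ω => 3 * ((∑ j ∈ s, ε j ω) ^ 2 * ε i ω ^ 1)
            + (3 * ((∑ j ∈ s, ε j ω) ^ 1 * ε i ω ^ 2) + ε i ω ^ 3)) ℙ :=
          ((hmulInt 2 1 (by norm_num) (by norm_num)).const_mul 3).add g2
        rw [e3, integral_add (ihInt 3 (by norm_num)) g1,
          integral_add ((hmulInt 2 1 (by norm_num) (by norm_num)).const_mul 3) g2,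
          integral_add ((hmulInt 1 2 (by norm_num) (by norm_num)).const_mul 3)
            (hI i 3 (by norm_num)),
          integral_const_mul, integral_const_mul, hmulVal 2 1, hmulVal 1 2,
          ih1, ih2, ih3, hm1 i, hm2 i, hm3 i, hcard]
        ring
      · have g3 : Integrable (fun ω => 4 * ((∑ j ∈ s, ε j ω) ^ 1 * ε i ω ^ 3)
            + ε i ω ^ 4) ℙ :=
          ((hmulInt 1 3 (by norm_num) (by norm_num)).const_mul 4).add (hI i 4 (by norm_num))
        have g2 : Integrable (fun ω => 6 * ((∑ j ∈ s, ε j ω) ^ 2 * ε i ω ^ 2)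
            + (4 * ((∑ j ∈ s, ε j ω) ^ 1 * ε i ω ^ 3) + ε i ω ^ 4)) ℙ :=
          ((hmulInt 2 2 (by norm_num) (by norm_num)).const_mul 6).add g3
        have g1 : Integrable (fun ω => 4 * ((∑ j ∈ s, ε j ω) ^ 3 * ε i ω ^ 1)
            + (6 * ((∑ j ∈ s, ε j ω) ^ 2 * ε i ω ^ 2)
              + (4 * ((∑ j ∈ s, ε j ω) ^ 1 * ε i ω ^ 3) + ε i ω ^ 4))) ℙ :=
          ((hmulInt 3 1 (by norm_num) (by norm_num)).const_mul 4).add g2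
        rw [e4, integral_add (ihInt 4 (by norm_num)) g1,
          integral_add ((hmulInt 3 1 (by norm_num) (by norm_num)).const_mul 4) g2,
          integral_add ((hmulInt 2 2 (by norm_num) (by norm_num)).const_mul 6) g3,
          integral_add ((hmulInt 1 3 (by norm_num) (by norm_num)).const_mul 4)
            (hI i 4 (by norm_num)),
          integral_const_mul, integral_const_mul, integral_const_mul,
          hmulVal 3 1, hmulVal 2 2, hmulVal 1 3,
          ih1, ih2, ih3, ih4, hm1 i, hm2 i, hm3 i, hε4 i, hcard]
        ring
  -- auxiliary facts
  have hRmeas : ∀ s : Finset (Fin l), Measurable (fun ω => ∑ j ∈ s, ε j ω) :=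
    fun s => Finset.measurable_sum _ fun j _ => hεmeas j
  have hjR : ∀ (j : Fin l) (a c : ℕ),
      IndepFun (fun ω => ε j ω ^ a) (fun ω => (∑ k ∈ univ.erase j, ε k ω) ^ c) ℙ :=
    fun j a c => ((hsumind _ j (Finset.notMem_erase j univ)).symm).comp
      (measurable_id.pow_const a) (measurable_id.pow_const c)
  have hcerase : ∀ j : Fin l, (((univ.erase j).card : ℝ)) = (l : ℝ) - 1 := by
    intro j
    rw [Finset.card_erase_of_mem (Finset.mem_univ j), Finset.card_univ, Fintype.card_fin,
      Nat.cast_sub (by omega), Nat.cast_one]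
  -- term A
  have hAint : Integrable (fun ω => ∑ j, ε j ω ^ 4) ℙ :=
    integrable_finset_sum _ fun j _ => hεint4 j
  have hAval : (∫ ω, ∑ j, ε j ω ^ 4) = (l : ℝ) * γε4 := by
    rw [integral_finset_sum _ fun j _ => hεint4 j]
    simp only [hε4, Finset.sum_const, Finset.card_univ, Fintype.card_fin, nsmul_eq_mul]
  -- term B
  have iC1 : ∀ j : Fin l,
      Integrable (fun ω => ε j ω ^ 3 * (∑ k ∈ univ.erase j, ε k ω) ^ 1) ℙ :=
    fun j => (hjR j 3 1).integrable_mul (hI j 3 (by norm_num)) ((key _).1 1 (by norm_num))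
  have iC2 : ∀ j : Fin l,
      Integrable (fun ω => ε j ω ^ 2 * (∑ k ∈ univ.erase j, ε k ω) ^ 2) ℙ :=
    fun j => (hjR j 2 2).integrable_mul (hI j 2 (by norm_num)) ((key _).1 2 (by norm_num))
  have eB : ∀ j : Fin l, (fun ω => ε j ω ^ 3 * ∑ k, ε k ω)
      = fun ω => ε j ω ^ 4 + ε j ω ^ 3 * (∑ k ∈ univ.erase j, ε k ω) ^ 1 := by
    intro j
    funext ω
    rw [← Finset.add_sum_erase _ _ (Finset.mem_univ j)]
    ring
  have hBj_int : ∀ j : Fin l, Integrable (fun ω => ε j ω ^ 3 * ∑ k, ε k ω) ℙ := by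
    intro j
    rw [eB j]
    exact (hεint4 j).add ((hjR j 3 1).integrable_mul (hI j 3 (by norm_num))
      ((key _).1 1 (by norm_num)))
  have hBj_val : ∀ j : Fin l, (∫ ω, ε j ω ^ 3 * ∑ k, ε k ω) = γε4 := by
    intro j
    rw [eB j, integral_add (hεint4 j) (iC1 j),
      (hjR j 3 1).integral_fun_mul_eq_mul_integral ((hεmeas j).pow_const 3).aestronglyMeasurable
        (((hRmeas _).pow_const 1).aestronglyMeasurable),
      hε4 j, (key (univ.erase j)).2.1]
    ring
  have hBint : Integrable (fun ω => ∑ j, ε j ω ^ 3 * ∑ k, ε k ω) ℙ :=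
    integrable_finset_sum _ fun j _ => hBj_int j
  have hBval : (∫ ω, ∑ j, ε j ω ^ 3 * ∑ k, ε k ω) = (l : ℝ) * γε4 := by
    rw [integral_finset_sum _ fun j _ => hBj_int j,
      Finset.sum_congr rfl fun j _ => hBj_val j, Finset.sum_const, Finset.card_univ,
      Fintype.card_fin, nsmul_eq_mul]
  -- term C
  have eC : ∀ j : Fin l, (fun ω => ε j ω ^ 2 * (∑ k, ε k ω) ^ 2)
      = fun ω => ε j ω ^ 4 + (2 * (ε j ω ^ 3 * (∑ k ∈ univ.erase j, ε k ω) ^ 1)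
          + ε j ω ^ 2 * (∑ k ∈ univ.erase j, ε k ω) ^ 2) := by
    intro j
    funext ω
    rw [← Finset.add_sum_erase _ _ (Finset.mem_univ j)]
    ring
  have gC : ∀ j : Fin l, Integrable (fun ω =>
      2 * (ε j ω ^ 3 * (∑ k ∈ univ.erase j, ε k ω) ^ 1)
        + ε j ω ^ 2 * (∑ k ∈ univ.erase j, ε k ω) ^ 2) ℙ :=
    fun j => ((iC1 j).const_mul 2).add (iC2 j)
  have hCj_int : ∀ j : Fin l, Integrable (fun ω => ε j ω ^ 2 * (∑ k, ε k ω) ^ 2) ℙ := by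
    intro j
    rw [eC j]
    exact (hεint4 j).add (gC j)
  have hCj_val : ∀ j : Fin l, (∫ ω, ε j ω ^ 2 * (∑ k, ε k ω) ^ 2)
      = γε4 + ((l : ℝ) - 1) * μ2 ^ 2 := by
    intro j
    rw [eC j, integral_add (hεint4 j) (gC j), integral_add ((iC1 j).const_mul 2) (iC2 j),
      integral_const_mul,
      (hjR j 3 1).integral_fun_mul_eq_mul_integral ((hεmeas j).pow_const 3).aestronglyMeasurable
        (((hRmeas _).pow_const 1).aestronglyMeasurable),
      (hjR j 2 2).integral_fun_mul_eq_mul_integral ((hεmeas j).pow_const 2).aestronglyMeasurable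
        (((hRmeas _).pow_const 2).aestronglyMeasurable),
      hm3 j, hm2 j, hε4 j, (key (univ.erase j)).2.1, (key (univ.erase j)).2.2.1, hcerase j]
    ring
  have hCint : Integrable (fun ω => ∑ j, ε j ω ^ 2 * (∑ k, ε k ω) ^ 2) ℙ :=
    integrable_finset_sum _ fun j _ => hCj_int j
  have hCval : (∫ ω, ∑ j, ε j ω ^ 2 * (∑ k, ε k ω) ^ 2)
      = (l : ℝ) * (γε4 + ((l : ℝ) - 1) * μ2 ^ 2) := by
    rw [integral_finset_sum _ fun j _ => hCj_int j,
      Finset.sum_congr rfl fun j _ => hCj_val j, Finset.sum_const, Finset.card_univ,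
      Fintype.card_fin, nsmul_eq_mul]
  -- term D
  have hDint : Integrable (fun ω => (∑ j, ε j ω) ^ 4) ℙ := (key univ).1 4 (by norm_num)
  have hDval : (∫ ω, (∑ j, ε j ω) ^ 4)
      = (l : ℝ) * γε4 + 3 * (l : ℝ) * ((l : ℝ) - 1) * μ2 ^ 2 := by
    have h := (key univ).2.2.2.2
    rwa [Finset.card_univ, Fintype.card_fin] at h
  -- term E
  have hEmul_int : ∀ j k : Fin l, Integrable (fun ω => ε j ω ^ 2 * ε k ω ^ 2) ℙ := by
    intro j k
    by_cases hkj : k = j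
    · subst hkj
      exact (hεint4 k).congr (ae_of_all _ fun ω => by ring)
    · exact (hind2 j k (fun h => hkj h.symm) 2 2).integrable_mul (hI j 2 (by norm_num))
        (hI k 2 (by norm_num))
  have eE : ∀ j : Fin l, (fun ω => ε j ω ^ 2 * ∑ k, ε k ω ^ 2)
      = fun ω => ∑ k, ε j ω ^ 2 * ε k ω ^ 2 :=
    fun j => funext fun ω => by rw [Finset.mul_sum]
  have hEj_int : ∀ j : Fin l, Integrable (fun ω => ε j ω ^ 2 * ∑ k, ε k ω ^ 2) ℙ := by
    intro j
    rw [eE j]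
    exact integrable_finset_sum _ fun k _ => hEmul_int j k
  have hEj_val : ∀ j : Fin l, (∫ ω, ε j ω ^ 2 * ∑ k, ε k ω ^ 2)
      = γε4 + ((l : ℝ) - 1) * μ2 ^ 2 := by
    intro j
    rw [eE j, integral_finset_sum _ fun k _ => hEmul_int j k,
      ← Finset.add_sum_erase _ _ (Finset.mem_univ j)]
    have h1 : (∫ ω, ε j ω ^ 2 * ε j ω ^ 2) = γε4 := by
      rw [integral_congr_ae (ae_of_all _ fun ω =>
        show ε j ω ^ 2 * ε j ω ^ 2 = ε j ω ^ 4 from by ring)]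
      exact hε4 j
    have h2 : ∀ k ∈ univ.erase j, (∫ ω, ε j ω ^ 2 * ε k ω ^ 2) = μ2 ^ 2 := by
      intro k hk
      have hjk : j ≠ k := fun h => (Finset.mem_erase.mp hk).1 h.symm
      rw [(hind2 j k hjk 2 2).integral_fun_mul_eq_mul_integral ((hεmeas j).pow_const 2).aestronglyMeasurable
        ((hεmeas k).pow_const 2).aestronglyMeasurable, hm2 j, hm2 k]
      ring
    rw [h1, Finset.sum_congr rfl h2, Finset.sum_const, nsmul_eq_mul, hcerase j]
  have hEint : Integrable (fun ω => ∑ j, ε j ω ^ 2 * ∑ k, ε k ω ^ 2) ℙ :=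
    integrable_finset_sum _ fun j _ => hEj_int j
  have hEval : (∫ ω, ∑ j, ε j ω ^ 2 * ∑ k, ε k ω ^ 2)
      = (l : ℝ) * (γε4 + ((l : ℝ) - 1) * μ2 ^ 2) := by
    rw [integral_finset_sum _ fun j _ => hEj_int j,
      Finset.sum_congr rfl fun j _ => hEj_val j, Finset.sum_const, Finset.card_univ,
      Fintype.card_fin, nsmul_eq_mul]
  -- final assembly
  have hGoal : (fun ω : Ω => ((l : ℝ) ^ 2 - 2 * (l : ℝ) + 3)
            * ((l : ℝ) * ∑ j, (ε j ω) ^ 4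
               - 4 * (∑ j, (ε j ω) ^ 3) * (∑ j, (ε j ω)))
          + 6 * (l : ℝ) * (∑ j, (ε j ω) ^ 2) * (∑ j, (ε j ω)) ^ 2
          - 3 * (∑ j, (ε j ω)) ^ 4
          - 3 * (2 * (l : ℝ) - 3) * (∑ j, (ε j ω) ^ 2) ^ 2)
      = fun ω : Ω => (((l : ℝ) ^ 2 - 2 * (l : ℝ) + 3) * (l : ℝ)) * (∑ j, ε j ω ^ 4)
          + ((-(4 * ((l : ℝ) ^ 2 - 2 * (l : ℝ) + 3))) * (∑ j, ε j ω ^ 3 * ∑ k, ε k ω)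
            + ((6 * (l : ℝ)) * (∑ j, ε j ω ^ 2 * (∑ k, ε k ω) ^ 2)
              + ((-3 : ℝ) * ((∑ j, ε j ω) ^ 4)
                + (-(3 * (2 * (l : ℝ) - 3))) * (∑ j, ε j ω ^ 2 * ∑ k, ε k ω ^ 2)))) := by
    funext ω
    rw [← Finset.sum_mul, ← Finset.sum_mul, ← Finset.sum_mul]
    ring
  have G4 : Integrable (fun ω => (-3 : ℝ) * ((∑ j, ε j ω) ^ 4)
      + (-(3 * (2 * (l : ℝ) - 3))) * (∑ j, ε j ω ^ 2 * ∑ k, ε k ω ^ 2)) ℙ :=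
    (hDint.const_mul _).add (hEint.const_mul _)
  have G3 : Integrable (fun ω => (6 * (l : ℝ)) * (∑ j, ε j ω ^ 2 * (∑ k, ε k ω) ^ 2)
      + ((-3 : ℝ) * ((∑ j, ε j ω) ^ 4)
        + (-(3 * (2 * (l : ℝ) - 3))) * (∑ j, ε j ω ^ 2 * ∑ k, ε k ω ^ 2))) ℙ :=
    (hCint.const_mul _).add G4
  have G2 : Integrable (fun ω =>
      (-(4 * ((l : ℝ) ^ 2 - 2 * (l : ℝ) + 3))) * (∑ j, ε j ω ^ 3 * ∑ k, ε k ω)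
      + ((6 * (l : ℝ)) * (∑ j, ε j ω ^ 2 * (∑ k, ε k ω) ^ 2)
        + ((-3 : ℝ) * ((∑ j, ε j ω) ^ 4)
          + (-(3 * (2 * (l : ℝ) - 3))) * (∑ j, ε j ω ^ 2 * ∑ k, ε k ω ^ 2)))) ℙ :=
    (hBint.const_mul _).add G3
  rw [hGoal, integral_add (hAint.const_mul _) G2,
    integral_add (hBint.const_mul _) G3,
    integral_add (hCint.const_mul _) G4,
    integral_add (hDint.const_mul _) (hEint.const_mul _),
    integral_const_mul, integral_const_mul, integral_const_mul, integral_const_mul,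
    integral_const_mul, hAval, hBval, hCval, hDval, hEval]
  ring
end

section
/- With the notation above, E[f_1^4 − 6·f_2^4 + 8·f_3^4 − 6·f_4^4 + 3·f_5^4] = l(l−1)(l−2)(l−3)·γ_b⁴. -/
open MeasureTheory ProbabilityTheory Finset

/-- AM–GM style bound used for integrability of products of four L⁴ functions. -/
lemma abs_mul4_le (a b c d : ℝ) : |a * b * c * d| ≤ a ^ 4 + b ^ 4 + c ^ 4 + d ^ 4 := by
  rw [abs_le]
  constructor <;>
    nlinarith [sq_nonneg (a * b - c * d), sq_nonneg (a * b + c * d), sq_nonneg (a ^ 2 - b ^ 2),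
      sq_nonneg (c ^ 2 - d ^ 2), sq_nonneg (a ^ 2 + b ^ 2), sq_nonneg (c ^ 2 + d ^ 2),
      sq_nonneg (a * b), sq_nonneg (c * d)]

/-- The off-diagonal fourth-order sum in terms of power sums. -/
lemma offdiag4 {ι : Type*} [DecidableEq ι] (s : Finset ι) (x : ι → ℝ) :
    ∑ i ∈ s, ∑ j ∈ s.erase i, ∑ k ∈ (s.erase i).erase j,
        ∑ m ∈ ((s.erase i).erase j).erase k, x i * x j * x k * x m
      = (∑ i ∈ s, x i) ^ 4 - 6 * (∑ i ∈ s, x i ^ 2) * (∑ i ∈ s, x i) ^ 2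
        + 8 * (∑ i ∈ s, x i ^ 3) * (∑ i ∈ s, x i)
        - 6 * (∑ i ∈ s, x i ^ 4) + 3 * (∑ i ∈ s, x i ^ 2) ^ 2 := by
  set p1 := ∑ i ∈ s, x i with hp1
  set p2 := ∑ i ∈ s, x i ^ 2 with hp2
  set p3 := ∑ i ∈ s, x i ^ 3 with hp3
  set p4 := ∑ i ∈ s, x i ^ 4 with hp4
  have S1 : ∀ {t : Finset ι} {a : ι}, a ∈ t →
      ∑ m ∈ t.erase a, x m = (∑ m ∈ t, x m) - x a := fun h => Finset.sum_erase_eq_sub h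
  have S2 : ∀ {t : Finset ι} {a : ι}, a ∈ t →
      ∑ m ∈ t.erase a, x m ^ 2 = (∑ m ∈ t, x m ^ 2) - x a ^ 2 := fun h => Finset.sum_erase_eq_sub h
  have S3 : ∀ {t : Finset ι} {a : ι}, a ∈ t →
      ∑ m ∈ t.erase a, x m ^ 3 = (∑ m ∈ t, x m ^ 3) - x a ^ 3 := fun h => Finset.sum_erase_eq_sub h
  calc
    ∑ i ∈ s, ∑ j ∈ s.erase i, ∑ k ∈ (s.erase i).erase j,
        ∑ m ∈ ((s.erase i).erase j).erase k, x i * x j * x k * x m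
      = ∑ i ∈ s, ∑ j ∈ s.erase i, ∑ k ∈ (s.erase i).erase j,
          ((x i * x j * (p1 - x i - x j)) * x k + (-(x i * x j)) * x k ^ 2) := by
        refine Finset.sum_congr rfl fun i hi => ?_
        refine Finset.sum_congr rfl fun j hj => ?_
        refine Finset.sum_congr rfl fun k hk => ?_
        rw [← Finset.mul_sum, S1 hk, S1 hj, S1 hi, ← hp1]
        ring
    _ = ∑ i ∈ s, ∑ j ∈ s.erase i,
          ((x i * (p1 - x i) ^ 2 - x i * (p2 - x i ^ 2)) * x j
            + (-(2 * x i * (p1 - x i))) * x j ^ 2 + (2 * x i) * x j ^ 3) := by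
        refine Finset.sum_congr rfl fun i hi => ?_
        refine Finset.sum_congr rfl fun j hj => ?_
        rw [Finset.sum_add_distrib, ← Finset.mul_sum, ← Finset.mul_sum,
          S1 hj, S1 hi, S2 hj, S2 hi, ← hp1, ← hp2]
        ring
    _ = ∑ i ∈ s, ((p1 ^ 3 - 3 * p1 * p2 + 2 * p3) * x i + (3 * p2 - 3 * p1 ^ 2) * x i ^ 2
          + (6 * p1) * x i ^ 3 + (-6) * x i ^ 4) := by
        refine Finset.sum_congr rfl fun i hi => ?_
        rw [Finset.sum_add_distrib, Finset.sum_add_distrib, ← Finset.mul_sum, ← Finset.mul_sum,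
          ← Finset.mul_sum, S1 hi, S2 hi, S3 hi, ← hp1, ← hp2, ← hp3]
        ring
    _ = (p1 ^ 3 - 3 * p1 * p2 + 2 * p3) * p1 + (3 * p2 - 3 * p1 ^ 2) * p2
          + (6 * p1) * p3 + (-6) * p4 := by
        rw [Finset.sum_add_distrib, Finset.sum_add_distrib, Finset.sum_add_distrib,
          ← Finset.mul_sum, ← Finset.mul_sum, ← Finset.mul_sum, ← Finset.mul_sum,
          ← hp1, ← hp2, ← hp3, ← hp4]
    _ = p1 ^ 4 - 6 * p2 * p1 ^ 2 + 8 * p3 * p1 - 6 * p4 + 3 * p2 ^ 2 := by ring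

/-- the combination of f_1^4,...,f_5^4 isolating the fourth moment of b. -/
theorem fourth_moment_b_combination
    {l : ℕ} (hl : 4 ≤ l)
    {Ω : Type*} [MeasureSpace Ω] [IsProbabilityMeasure (ℙ : Measure Ω)]
    (b : Ω → ℝ) (ε : Fin l → Ω → ℝ)
    (hbmeas : Measurable b) (hεmeas : ∀ j, Measurable (ε j))
    (hindep : ProbabilityTheory.iIndepFun
      (fun i : Option (Fin l) => Option.elim i b ε) ℙ)
    (hident : ∀ j j' : Fin l, Measure.map (ε j) ℙ = Measure.map (ε j') ℙ)
    (hεmean : ∀ j, ∫ ω, ε j ω = 0)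
    (hεint4 : ∀ j, Integrable (fun ω => (ε j ω) ^ 4) ℙ)
    (hbint4 : Integrable (fun ω => (b ω) ^ 4) ℙ)
    (hbmean : ∫ ω, b ω = 0)
    (γb4 : ℝ)
    (hb4 : ∫ ω, (b ω) ^ 4 = γb4) :
    ∫ ω, ((∑ j, (b ω + ε j ω)) ^ 4
          - 6 * (∑ j, (b ω + ε j ω) ^ 2) * (∑ j, (b ω + ε j ω)) ^ 2
          + 8 * (∑ j, (b ω + ε j ω) ^ 3) * (∑ j, (b ω + ε j ω))
          - 6 * ∑ j, (b ω + ε j ω) ^ 4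
          + 3 * (∑ j, (b ω + ε j ω) ^ 2) ^ 2)
      = (l : ℝ) * ((l : ℝ) - 1) * ((l : ℝ) - 2) * ((l : ℝ) - 3) * γb4 := by
  classical
  -- measurability of the independent family
  have hFmeas : ∀ i : Option (Fin l), Measurable (Option.elim i b ε) := by
    rintro (_ | j)
    · exact hbmeas
    · exact hεmeas j
  -- integrability of fourth powers of b + ε j
  have he4 : ∀ j, Integrable (fun ω => (b ω + ε j ω) ^ 4) ℙ := by
    intro j
    refine Integrable.mono' (((hbint4.add (hεint4 j)).const_mul 8)) ?_ ?_
    · exact ((hbmeas.add (hεmeas j)).pow_const 4).aestronglyMeasurable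
    · refine Filter.Eventually.of_forall fun ω => ?_
      have h1 : (b ω + ε j ω) ^ 4 ≤ 8 * (b ω ^ 4 + ε j ω ^ 4) := by
        nlinarith [sq_nonneg (b ω - ε j ω), sq_nonneg (b ω + ε j ω),
          sq_nonneg (b ω ^ 2 - ε j ω ^ 2), sq_nonneg (b ω * ε j ω)]
      have h0 : (0 : ℝ) ≤ (b ω + ε j ω) ^ 4 := by positivity
      rw [Real.norm_eq_abs, abs_of_nonneg h0]
      exact h1
  -- integrability of products of four functions with integrable fourth powers
  have key4 : ∀ (f g h k : Ω → ℝ), Measurable f → Measurable g → Measurable h → Measurable k →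
      Integrable (fun ω => f ω ^ 4) ℙ → Integrable (fun ω => g ω ^ 4) ℙ →
      Integrable (fun ω => h ω ^ 4) ℙ → Integrable (fun ω => k ω ^ 4) ℙ →
      Integrable (fun ω => f ω * g ω * h ω * k ω) ℙ := by
    intro f g h k mf mg mh mk if4 ig4 ih4 ik4
    refine Integrable.mono' (((if4.add ig4).add ih4).add ik4) ?_ ?_
    · exact (((mf.mul mg).mul mh).mul mk).aestronglyMeasurable
    · exact Filter.Eventually.of_forall fun ω => by
        rw [Real.norm_eq_abs]
        exact abs_mul4_le (f ω) (g ω) (h ω) (k ω)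
  -- independence of a function of (b, ε i, ε j, ε k) from ε t
  have hindep3 : ∀ (i j k t : Fin l), i ≠ t → j ≠ t → k ≠ t →
      ∀ (g : ℝ → ℝ → ℝ → ℝ → ℝ),
        Measurable (fun p : ℝ × ℝ × ℝ × ℝ => g p.1 p.2.1 p.2.2.1 p.2.2.2) →
        IndepFun (fun ω => g (b ω) (ε i ω) (ε j ω) (ε k ω)) (ε t) ℙ := by
    intro i j k t hi hj hk g hg
    set S : Finset (Option (Fin l)) := {none, some i, some j, some k} with hS
    have hdisj : Disjoint S ({some t} : Finset (Option (Fin l))) := by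
      simp only [Finset.disjoint_singleton_right, hS, Finset.mem_insert, Finset.mem_singleton]
      rintro (h | h | h | h)
      · exact absurd h (Option.some_ne_none t)
      · exact hi (Option.some.inj h).symm
      · exact hj (Option.some.inj h).symm
      · exact hk (Option.some.inj h).symm
    have H := hindep.indepFun_finset S {some t} hdisj hFmeas
    have hn : (none : Option (Fin l)) ∈ S := by simp [hS]
    have hsi : (some i : Option (Fin l)) ∈ S := by simp [hS]
    have hsj : (some j : Option (Fin l)) ∈ S := by simp [hS]
    have hsk : (some k : Option (Fin l)) ∈ S := by simp [hS]
    have hst : (some t : Option (Fin l)) ∈ ({some t} : Finset (Option (Fin l))) := by simp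
    have hφ : Measurable (fun v : (∀ _ : S, ℝ) =>
        g (v ⟨none, hn⟩) (v ⟨some i, hsi⟩) (v ⟨some j, hsj⟩) (v ⟨some k, hsk⟩)) := by
      have hm : Measurable (fun v : (∀ _ : S, ℝ) =>
          ((v ⟨none, hn⟩, v ⟨some i, hsi⟩, v ⟨some j, hsj⟩, v ⟨some k, hsk⟩) : ℝ × ℝ × ℝ × ℝ)) :=
        (measurable_pi_apply _).prodMk ((measurable_pi_apply _).prodMk
          ((measurable_pi_apply _).prodMk (measurable_pi_apply _)))
      exact hg.comp hm
    have hψ : Measurable (fun v : (∀ _ : ({some t} : Finset (Option (Fin l))), ℝ) =>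
        v ⟨some t, hst⟩) := measurable_pi_apply _
    exact H.comp hφ hψ
  -- vanishing of E[X * ε t] for X independent of ε t
  have peel : ∀ (t : Fin l) (X : Ω → ℝ), IndepFun X (ε t) ℙ → Measurable X →
      ∫ ω, X ω * ε t ω = 0 := by
    intro t X hXt hX
    rw [hXt.integral_fun_mul_eq_mul_integral hX.aestronglyMeasurable (hεmeas t).aestronglyMeasurable,
      hεmean t, mul_zero]
  -- main per-tuple computation
  have main : ∀ i j k m : Fin l, i ≠ m → j ≠ m → k ≠ m → i ≠ k → j ≠ k → i ≠ j →
      ∫ ω, (b ω + ε i ω) * (b ω + ε j ω) * (b ω + ε k ω) * (b ω + ε m ω) = γb4 := by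
    intro i j k m him hjm hkm hik hjk hij
    have hemeas : ∀ j : Fin l, Measurable (fun ω => b ω + ε j ω) :=
      fun j => hbmeas.add (hεmeas j)
    have hb4' : Integrable (fun ω => (b ω) ^ 4) ℙ := hbint4
    -- step 1: replace e m by b
    have step1 : ∫ ω, (b ω + ε i ω) * (b ω + ε j ω) * (b ω + ε k ω) * (b ω + ε m ω)
        = ∫ ω, (b ω + ε i ω) * (b ω + ε j ω) * (b ω + ε k ω) * b ω := by
      have hA : Integrable (fun ω => (b ω + ε i ω) * (b ω + ε j ω) * (b ω + ε k ω) * b ω) ℙ :=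
        key4 _ _ _ _ (hemeas i) (hemeas j) (hemeas k) hbmeas (he4 i) (he4 j) (he4 k) hbint4
      have hB : Integrable (fun ω => (b ω + ε i ω) * (b ω + ε j ω) * (b ω + ε k ω) * ε m ω) ℙ :=
        key4 _ _ _ _ (hemeas i) (hemeas j) (hemeas k) (hεmeas m) (he4 i) (he4 j) (he4 k)
          (hεint4 m)
      have hzero : ∫ ω, ((b ω + ε i ω) * (b ω + ε j ω) * (b ω + ε k ω)) * ε m ω = 0 := by
        refine peel m _ ?_ (((hemeas i).mul (hemeas j)).mul (hemeas k))
        exact hindep3 i j k m him hjm hkm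
          (fun B X Y Z => (B + X) * (B + Y) * (B + Z)) (by fun_prop)
      calc ∫ ω, (b ω + ε i ω) * (b ω + ε j ω) * (b ω + ε k ω) * (b ω + ε m ω)
          = ∫ ω, ((b ω + ε i ω) * (b ω + ε j ω) * (b ω + ε k ω) * b ω
              + (b ω + ε i ω) * (b ω + ε j ω) * (b ω + ε k ω) * ε m ω) := by
            congr 1; funext ω; ring
        _ = (∫ ω, (b ω + ε i ω) * (b ω + ε j ω) * (b ω + ε k ω) * b ω)
              + ∫ ω, (b ω + ε i ω) * (b ω + ε j ω) * (b ω + ε k ω) * ε m ω :=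
            integral_add hA hB
        _ = ∫ ω, (b ω + ε i ω) * (b ω + ε j ω) * (b ω + ε k ω) * b ω := by
            rw [hzero, add_zero]
    -- step 2: replace e k by b
    have step2 : ∫ ω, (b ω + ε i ω) * (b ω + ε j ω) * (b ω + ε k ω) * b ω
        = ∫ ω, (b ω + ε i ω) * (b ω + ε j ω) * b ω * b ω := by
      have hA : Integrable (fun ω => (b ω + ε i ω) * (b ω + ε j ω) * b ω * b ω) ℙ :=
        key4 _ _ _ _ (hemeas i) (hemeas j) hbmeas hbmeas (he4 i) (he4 j) hbint4 hbint4
      have hB : Integrable (fun ω => (b ω + ε i ω) * (b ω + ε j ω) * b ω * ε k ω) ℙ :=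
        key4 _ _ _ _ (hemeas i) (hemeas j) hbmeas (hεmeas k) (he4 i) (he4 j) hbint4 (hεint4 k)
      have hzero : ∫ ω, ((b ω + ε i ω) * (b ω + ε j ω) * b ω) * ε k ω = 0 := by
        refine peel k _ ?_ (((hemeas i).mul (hemeas j)).mul hbmeas)
        exact hindep3 i j m k hik hjk (fun h => hkm h.symm)
          (fun B X Y _ => (B + X) * (B + Y) * B) (by fun_prop)
      calc ∫ ω, (b ω + ε i ω) * (b ω + ε j ω) * (b ω + ε k ω) * b ω
          = ∫ ω, ((b ω + ε i ω) * (b ω + ε j ω) * b ω * b ω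
              + (b ω + ε i ω) * (b ω + ε j ω) * b ω * ε k ω) := by
            congr 1; funext ω; ring
        _ = (∫ ω, (b ω + ε i ω) * (b ω + ε j ω) * b ω * b ω)
              + ∫ ω, (b ω + ε i ω) * (b ω + ε j ω) * b ω * ε k ω := integral_add hA hB
        _ = ∫ ω, (b ω + ε i ω) * (b ω + ε j ω) * b ω * b ω := by rw [hzero, add_zero]
    -- step 3: replace e j by b
    have step3 : ∫ ω, (b ω + ε i ω) * (b ω + ε j ω) * b ω * b ω
        = ∫ ω, (b ω + ε i ω) * b ω * b ω * b ω := by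
      have hA : Integrable (fun ω => (b ω + ε i ω) * b ω * b ω * b ω) ℙ :=
        key4 _ _ _ _ (hemeas i) hbmeas hbmeas hbmeas (he4 i) hbint4 hbint4 hbint4
      have hB : Integrable (fun ω => (b ω + ε i ω) * b ω * b ω * ε j ω) ℙ :=
        key4 _ _ _ _ (hemeas i) hbmeas hbmeas (hεmeas j) (he4 i) hbint4 hbint4 (hεint4 j)
      have hzero : ∫ ω, ((b ω + ε i ω) * b ω * b ω) * ε j ω = 0 := by
        refine peel j _ ?_ (((hemeas i).mul hbmeas).mul hbmeas)
        exact hindep3 i k m j hij hjk.symm (fun h => hjm h.symm)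
          (fun B X _ _ => (B + X) * B * B) (by fun_prop)
      calc ∫ ω, (b ω + ε i ω) * (b ω + ε j ω) * b ω * b ω
          = ∫ ω, ((b ω + ε i ω) * b ω * b ω * b ω
              + (b ω + ε i ω) * b ω * b ω * ε j ω) := by congr 1; funext ω; ring
        _ = (∫ ω, (b ω + ε i ω) * b ω * b ω * b ω)
              + ∫ ω, (b ω + ε i ω) * b ω * b ω * ε j ω := integral_add hA hB
        _ = ∫ ω, (b ω + ε i ω) * b ω * b ω * b ω := by rw [hzero, add_zero]
    -- step 4: replace e i by b
    have step4 : ∫ ω, (b ω + ε i ω) * b ω * b ω * b ω = γb4 := by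
      have hA : Integrable (fun ω => b ω * b ω * b ω * b ω) ℙ :=
        key4 _ _ _ _ hbmeas hbmeas hbmeas hbmeas hbint4 hbint4 hbint4 hbint4
      have hB : Integrable (fun ω => b ω * b ω * b ω * ε i ω) ℙ :=
        key4 _ _ _ _ hbmeas hbmeas hbmeas (hεmeas i) hbint4 hbint4 hbint4 (hεint4 i)
      have hzero : ∫ ω, (b ω * b ω * b ω) * ε i ω = 0 := by
        refine peel i _ ?_ ((hbmeas.mul hbmeas).mul hbmeas)
        exact hindep3 j k m i hij.symm hik.symm (fun h => him h.symm)
          (fun B _ _ _ => B * B * B) (by fun_prop)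
      calc ∫ ω, (b ω + ε i ω) * b ω * b ω * b ω
          = ∫ ω, (b ω * b ω * b ω * b ω + b ω * b ω * b ω * ε i ω) := by
            congr 1; funext ω; ring
        _ = (∫ ω, b ω * b ω * b ω * b ω) + ∫ ω, b ω * b ω * b ω * ε i ω := integral_add hA hB
        _ = ∫ ω, b ω * b ω * b ω * b ω := by rw [hzero, add_zero]
        _ = ∫ ω, (b ω) ^ 4 := by congr 1; funext ω; ring
        _ = γb4 := hb4
    rw [step1, step2, step3, step4]
  -- integrability of each summand
  have hemeas : ∀ j : Fin l, Measurable (fun ω => b ω + ε j ω) := fun j => hbmeas.add (hεmeas j)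
  have hsummand : ∀ i j k m : Fin l,
      Integrable (fun ω => (b ω + ε i ω) * (b ω + ε j ω) * (b ω + ε k ω) * (b ω + ε m ω)) ℙ :=
    fun i j k m => key4 _ _ _ _ (hemeas i) (hemeas j) (hemeas k) (hemeas m)
      (he4 i) (he4 j) (he4 k) (he4 m)
  -- rewrite the integrand using the combinatorial identity
  have hrw : ∀ ω : Ω,
      ((∑ j, (b ω + ε j ω)) ^ 4
          - 6 * (∑ j, (b ω + ε j ω) ^ 2) * (∑ j, (b ω + ε j ω)) ^ 2
          + 8 * (∑ j, (b ω + ε j ω) ^ 3) * (∑ j, (b ω + ε j ω))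
          - 6 * ∑ j, (b ω + ε j ω) ^ 4
          + 3 * (∑ j, (b ω + ε j ω) ^ 2) ^ 2)
        = ∑ i : Fin l, ∑ j ∈ univ.erase i, ∑ k ∈ (univ.erase i).erase j,
            ∑ m ∈ ((univ.erase i).erase j).erase k,
              (b ω + ε i ω) * (b ω + ε j ω) * (b ω + ε k ω) * (b ω + ε m ω) :=
    fun ω => (offdiag4 univ fun j => b ω + ε j ω).symm
  calc
    ∫ ω, ((∑ j, (b ω + ε j ω)) ^ 4
          - 6 * (∑ j, (b ω + ε j ω) ^ 2) * (∑ j, (b ω + ε j ω)) ^ 2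
          + 8 * (∑ j, (b ω + ε j ω) ^ 3) * (∑ j, (b ω + ε j ω))
          - 6 * ∑ j, (b ω + ε j ω) ^ 4
          + 3 * (∑ j, (b ω + ε j ω) ^ 2) ^ 2)
      = ∫ ω, ∑ i : Fin l, ∑ j ∈ univ.erase i, ∑ k ∈ (univ.erase i).erase j,
            ∑ m ∈ ((univ.erase i).erase j).erase k,
              (b ω + ε i ω) * (b ω + ε j ω) * (b ω + ε k ω) * (b ω + ε m ω) :=
        integral_congr_ae (Filter.Eventually.of_forall hrw)
    _ = ∑ i : Fin l, ∑ j ∈ univ.erase i, ∑ k ∈ (univ.erase i).erase j,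
            ∑ m ∈ ((univ.erase i).erase j).erase k,
              ∫ ω, (b ω + ε i ω) * (b ω + ε j ω) * (b ω + ε k ω) * (b ω + ε m ω) := by
        rw [integral_finset_sum _ fun i _ => integrable_finset_sum _ fun j _ =>
          integrable_finset_sum _ fun k _ => integrable_finset_sum _ fun m _ =>
          hsummand i j k m]
        refine Finset.sum_congr rfl fun i _ => ?_
        rw [integral_finset_sum _ fun j _ => integrable_finset_sum _ fun k _ =>
          integrable_finset_sum _ fun m _ => hsummand i j k m]
        refine Finset.sum_congr rfl fun j _ => ?_
        rw [integral_finset_sum _ fun k _ => integrable_finset_sum _ fun m _ => hsummand i j k m]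
        refine Finset.sum_congr rfl fun k _ => ?_
        rw [integral_finset_sum _ fun m _ => hsummand i j k m]
    _ = ∑ i : Fin l, ∑ j ∈ univ.erase i, ∑ k ∈ (univ.erase i).erase j,
            ∑ m ∈ ((univ.erase i).erase j).erase k, γb4 := by
        refine Finset.sum_congr rfl fun i hi => ?_
        refine Finset.sum_congr rfl fun j hj => ?_
        refine Finset.sum_congr rfl fun k hk => ?_
        refine Finset.sum_congr rfl fun m hm => ?_
        have hmk : m ≠ k := (Finset.mem_erase.mp hm).1
        have hm' := (Finset.mem_erase.mp hm).2
        have hmj : m ≠ j := (Finset.mem_erase.mp hm').1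
        have hmi : m ≠ i := (Finset.mem_erase.mp (Finset.mem_erase.mp hm').2).1
        have hkj : k ≠ j := (Finset.mem_erase.mp hk).1
        have hki : k ≠ i := (Finset.mem_erase.mp (Finset.mem_erase.mp hk).2).1
        have hji : j ≠ i := (Finset.mem_erase.mp hj).1
        exact main i j k m hmi.symm hmj.symm hmk.symm hki.symm hkj.symm hji.symm
    _ = (l : ℝ) * ((l : ℝ) - 1) * ((l : ℝ) - 2) * ((l : ℝ) - 3) * γb4 := by
        calc
          ∑ i : Fin l, ∑ j ∈ univ.erase i, ∑ k ∈ (univ.erase i).erase j,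
              ∑ m ∈ ((univ.erase i).erase j).erase k, γb4
            = ∑ i : Fin l, ∑ j ∈ univ.erase i, ∑ k ∈ (univ.erase i).erase j,
                ((l : ℝ) - 3) * γb4 := by
              refine Finset.sum_congr rfl fun i hi => ?_
              refine Finset.sum_congr rfl fun j hj => ?_
              refine Finset.sum_congr rfl fun k hk => ?_
              rw [Finset.sum_const, Finset.card_erase_of_mem hk, Finset.card_erase_of_mem hj,
                Finset.card_erase_of_mem (Finset.mem_univ i), Finset.card_univ,
                Fintype.card_fin, nsmul_eq_mul]
              congr 1
              push_cast [Nat.cast_sub (by omega : 1 ≤ l),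
                Nat.cast_sub (by omega : 1 ≤ l - 1), Nat.cast_sub (by omega : 1 ≤ l - 1 - 1)]
              ring
            _ = ∑ i : Fin l, ∑ j ∈ univ.erase i, ((l : ℝ) - 2) * (((l : ℝ) - 3) * γb4) := by
              refine Finset.sum_congr rfl fun i hi => ?_
              refine Finset.sum_congr rfl fun j hj => ?_
              rw [Finset.sum_const, Finset.card_erase_of_mem hj,
                Finset.card_erase_of_mem (Finset.mem_univ i), Finset.card_univ,
                Fintype.card_fin, nsmul_eq_mul]
              congr 1
              push_cast [Nat.cast_sub (by omega : 1 ≤ l),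
                Nat.cast_sub (by omega : 1 ≤ l - 1)]
              ring
            _ = ∑ i : Fin l, ((l : ℝ) - 1) * (((l : ℝ) - 2) * (((l : ℝ) - 3) * γb4)) := by
              refine Finset.sum_congr rfl fun i hi => ?_
              rw [Finset.sum_const, Finset.card_erase_of_mem (Finset.mem_univ i),
                Finset.card_univ, Fintype.card_fin, nsmul_eq_mul]
              congr 1
              push_cast [Nat.cast_sub (by omega : 1 ≤ l)]
              ring
            _ = (l : ℝ) * ((l : ℝ) - 1) * ((l : ℝ) - 2) * ((l : ℝ) - 3) * γb4 := by
              rw [Finset.sum_const, Finset.card_univ, Fintype.card_fin, nsmul_eq_mul]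
              ring
end

section
/- With the notation above, E[(2l² − l)·f_4^4 − (5l − 4)·f_3^4 + 3·f_2^4 − 3·f_5^4] = 2l(l−1)(l−2)·γ_ε⁴. -/
set_option linter.unusedSectionVars false

open MeasureTheory ProbabilityTheory Finset

section Aux
variable {Ω : Type*} [MeasureSpace Ω] [IsProbabilityMeasure (ℙ : Measure Ω)]
variable {ι : Type*} [DecidableEq ι] {X : ι → Ω → ℝ}

lemma aux_abs_bound (x y z w : ℝ) : |x * y * z * w| ≤ (x ^ 4 + y ^ 4 + z ^ 4 + w ^ 4) / 4 := by
  have h1 : |x * y * z * w| = |x| * |y| * |z| * |w| := by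
    rw [abs_mul, abs_mul, abs_mul]
  have hx : x ^ 4 = |x| ^ 4 := by rw [← abs_pow, abs_of_nonneg (by positivity)]
  have hy : y ^ 4 = |y| ^ 4 := by rw [← abs_pow, abs_of_nonneg (by positivity)]
  have hz : z ^ 4 = |z| ^ 4 := by rw [← abs_pow, abs_of_nonneg (by positivity)]
  have hw : w ^ 4 = |w| ^ 4 := by rw [← abs_pow, abs_of_nonneg (by positivity)]
  rw [h1, hx, hy, hz, hw]
  have hx0 := abs_nonneg x; have hy0 := abs_nonneg y
  have hz0 := abs_nonneg z; have hw0 := abs_nonneg w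
  nlinarith [sq_nonneg (|x| * |y| - |z| * |w|), sq_nonneg (|x| ^ 2 - |y| ^ 2),
    sq_nonneg (|z| ^ 2 - |w| ^ 2), mul_nonneg (mul_nonneg hx0 hy0) (mul_nonneg hz0 hw0),
    mul_nonneg hx0 hy0, mul_nonneg hz0 hw0]

lemma aux_pow4_add_le (x y : ℝ) : (x + y) ^ 4 ≤ 8 * (x ^ 4 + y ^ 4) := by
  have h1 : (x + y) ^ 2 ≤ 2 * (x ^ 2 + y ^ 2) := by nlinarith [sq_nonneg (x - y)]
  have h2 : (x ^ 2 + y ^ 2) ^ 2 ≤ 2 * (x ^ 4 + y ^ 4) := by nlinarith [sq_nonneg (x ^ 2 - y ^ 2)]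
  calc (x + y) ^ 4 = ((x + y) ^ 2) ^ 2 := by ring
    _ ≤ (2 * (x ^ 2 + y ^ 2)) ^ 2 := pow_le_pow_left₀ (sq_nonneg (x + y)) h1 2
    _ = 4 * (x ^ 2 + y ^ 2) ^ 2 := by ring
    _ ≤ 8 * (x ^ 4 + y ^ 4) := by linarith

lemma aux_integrable_mul4 {f g h k : Ω → ℝ} (hf : Measurable f) (hg : Measurable g)
    (hh : Measurable h) (hk : Measurable k)
    (hf4 : Integrable (fun ω => f ω ^ 4) ℙ) (hg4 : Integrable (fun ω => g ω ^ 4) ℙ)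
    (hh4 : Integrable (fun ω => h ω ^ 4) ℙ) (hk4 : Integrable (fun ω => k ω ^ 4) ℙ) :
    Integrable (fun ω => f ω * g ω * h ω * k ω) ℙ := by
  refine Integrable.mono' (((hf4.add hg4).add hh4).add hk4 |>.div_const 4)
    (((hf.mul hg).mul hh).mul hk).aestronglyMeasurable ?_
  filter_upwards with ω
  rw [Real.norm_eq_abs]
  exact aux_abs_bound (f ω) (g ω) (h ω) (k ω)

lemma aux_pair (h : iIndepFun X ℙ) (hm : ∀ i, Measurable (X i))
    {i j : ι} (hij : i ≠ j) (a c : ℕ) :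
    ∫ ω, X i ω ^ a * X j ω ^ c = (∫ ω, X i ω ^ a) * ∫ ω, X j ω ^ c := by
  have hInd : IndepFun (fun ω => X i ω ^ a) (fun ω => X j ω ^ c) ℙ :=
    (h.indepFun hij).comp (measurable_id.pow_const a) (measurable_id.pow_const c)
  exact hInd.integral_fun_mul_eq_mul_integral ((hm i).pow_const a).aestronglyMeasurable
    ((hm j).pow_const c).aestronglyMeasurable

lemma aux_triple (h : iIndepFun X ℙ) (hm : ∀ i, Measurable (X i))
    {i j k : ι} (hij : i ≠ j) (hik : i ≠ k) (hjk : j ≠ k) (a c d : ℕ) :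
    ∫ ω, X i ω ^ a * X j ω ^ c * X k ω ^ d
      = (∫ ω, X i ω ^ a) * (∫ ω, X j ω ^ c) * ∫ ω, X k ω ^ d := by
  set q : ι → ℕ := fun t => if t = i then a else if t = j then c else d with hq
  set Y : ι → Ω → ℝ := fun t ω => X t ω ^ q t with hY
  have hYm : ∀ t, Measurable (Y t) := fun t => (hm t).pow_const _
  have hYindep : iIndepFun Y ℙ :=
    h.comp (fun t x => x ^ q t) fun t => measurable_id.pow_const _
  have hYi : Y i = fun ω => X i ω ^ a := by simp [hY, hq]
  have hYj : Y j = fun ω => X j ω ^ c := by simp [hY, hq, hij.symm]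
  have hYk : Y k = fun ω => X k ω ^ d := by simp [hY, hq, hik.symm, hjk.symm]
  have hknot : k ∉ ({i, j} : Finset ι) := by simp [hik.symm, hjk.symm]
  have hInd : IndepFun (∏ t ∈ ({i, j} : Finset ι), Y t) (Y k) ℙ :=
    hYindep.indepFun_finsetProd_of_notMem hYm hknot
  rw [Finset.prod_pair hij] at hInd
  have h2 : ∫ ω, Y i ω * Y j ω = (∫ ω, Y i ω) * ∫ ω, Y j ω :=
    (hYindep.indepFun hij).integral_fun_mul_eq_mul_integral (hYm i).aestronglyMeasurable
      (hYm j).aestronglyMeasurable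
  have h3 : ∫ ω, (Y i ω * Y j ω) * Y k ω = (∫ ω, Y i ω * Y j ω) * ∫ ω, Y k ω :=
    hInd.integral_fun_mul_eq_mul_integral ((hYm i).mul (hYm j)).aestronglyMeasurable (hYm k).aestronglyMeasurable
  have := h3.trans (by rw [h2])
  rw [hYi, hYj, hYk] at this
  simpa using this

lemma aux_quad (h : iIndepFun X ℙ) (hm : ∀ i, Measurable (X i))
    {i j k m : ι} (hij : i ≠ j) (hik : i ≠ k) (him : i ≠ m) (hjk : j ≠ k) (hjm : j ≠ m)
    (hkm : k ≠ m) (a c d e : ℕ) :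
    ∫ ω, X i ω ^ a * X j ω ^ c * X k ω ^ d * X m ω ^ e
      = (∫ ω, X i ω ^ a) * (∫ ω, X j ω ^ c) * (∫ ω, X k ω ^ d) * ∫ ω, X m ω ^ e := by
  set q : ι → ℕ := fun t => if t = i then a else if t = j then c else if t = k then d else e
    with hq
  set Y : ι → Ω → ℝ := fun t ω => X t ω ^ q t with hY
  have hYm : ∀ t, Measurable (Y t) := fun t => (hm t).pow_const _
  have hYindep : iIndepFun Y ℙ :=
    h.comp (fun t x => x ^ q t) fun t => measurable_id.pow_const _
  have hYi : Y i = fun ω => X i ω ^ a := by simp [hY, hq]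
  have hYj : Y j = fun ω => X j ω ^ c := by simp [hY, hq, hij.symm]
  have hYk : Y k = fun ω => X k ω ^ d := by simp [hY, hq, hik.symm, hjk.symm]
  have hYmm : Y m = fun ω => X m ω ^ e := by simp [hY, hq, him.symm, hjm.symm, hkm.symm]
  have hmnot : m ∉ ({i, j, k} : Finset ι) := by simp [him.symm, hjm.symm, hkm.symm]
  have hknot : k ∉ ({i, j} : Finset ι) := by simp [hik.symm, hjk.symm]
  have hprod : ∏ t ∈ ({i, j, k} : Finset ι), Y t = fun ω => Y i ω * Y j ω * Y k ω := by
    rw [Finset.prod_insert (by simp [hij, hik]), Finset.prod_pair hjk]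
    ext ω; simp [mul_assoc]
  have hInd : IndepFun (fun ω => Y i ω * Y j ω * Y k ω) (Y m) ℙ := by
    have := hYindep.indepFun_finsetProd_of_notMem hYm hmnot
    rwa [hprod] at this
  have hInd2 : IndepFun (∏ t ∈ ({i, j} : Finset ι), Y t) (Y k) ℙ :=
    hYindep.indepFun_finsetProd_of_notMem hYm hknot
  rw [Finset.prod_pair hij] at hInd2
  have h2 : ∫ ω, Y i ω * Y j ω = (∫ ω, Y i ω) * ∫ ω, Y j ω :=
    (hYindep.indepFun hij).integral_fun_mul_eq_mul_integral (hYm i).aestronglyMeasurable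
      (hYm j).aestronglyMeasurable
  have h3 : ∫ ω, (Y i ω * Y j ω) * Y k ω = (∫ ω, Y i ω * Y j ω) * ∫ ω, Y k ω :=
    hInd2.integral_fun_mul_eq_mul_integral ((hYm i).mul (hYm j)).aestronglyMeasurable (hYm k).aestronglyMeasurable
  have h4 : ∫ ω, (Y i ω * Y j ω * Y k ω) * Y m ω
      = (∫ ω, Y i ω * Y j ω * Y k ω) * ∫ ω, Y m ω :=
    hInd.integral_fun_mul_eq_mul_integral (((hYm i).mul (hYm j)).mul (hYm k)).aestronglyMeasurable
      (hYm m).aestronglyMeasurable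
  have := h4.trans (by rw [h3, h2])
  rw [hYi, hYj, hYk, hYmm] at this
  simpa using this

end Aux

set_option maxHeartbeats 2000000 in
/-- first-step combination isolating the fourth moment of ε. -/
theorem fourth_moment_eps_first_step
    {l : ℕ} (hl : 3 ≤ l)
    {Ω : Type*} [MeasureSpace Ω] [IsProbabilityMeasure (ℙ : Measure Ω)]
    (b : Ω → ℝ) (ε : Fin l → Ω → ℝ)
    (hbmeas : Measurable b) (hεmeas : ∀ j, Measurable (ε j))
    (hindep : ProbabilityTheory.iIndepFun
      (fun i : Option (Fin l) => Option.elim i b ε) ℙ)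
    (hident : ∀ j j' : Fin l, Measure.map (ε j) ℙ = Measure.map (ε j') ℙ)
    (hεmean : ∀ j, ∫ ω, ε j ω = 0)
    (hεint4 : ∀ j, Integrable (fun ω => (ε j ω) ^ 4) ℙ)
    (hbint4 : Integrable (fun ω => (b ω) ^ 4) ℙ)
    (hbmean : ∫ ω, b ω = 0)
    (γε4 : ℝ)
    (hε4 : ∀ j, ∫ ω, (ε j ω) ^ 4 = γε4) :
    ∫ ω, ((2 * (l : ℝ) ^ 2 - (l : ℝ)) * ∑ j, (b ω + ε j ω) ^ 4
          - (5 * (l : ℝ) - 4) * (∑ j, (b ω + ε j ω) ^ 3) * (∑ j, (b ω + ε j ω))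
          + 3 * (∑ j, (b ω + ε j ω) ^ 2) * (∑ j, (b ω + ε j ω)) ^ 2
          - 3 * (∑ j, (b ω + ε j ω) ^ 2) ^ 2)
      = 2 * (l : ℝ) * ((l : ℝ) - 1) * ((l : ℝ) - 2) * γε4 := by
  classical
  have hXm : ∀ i : Option (Fin l), Measurable (Option.elim i b ε) := by
    rintro (_ | j); exacts [hbmeas, hεmeas j]
  -- wrappers for independence factorization
  have paird : ∀ (a c : ℕ) (j : Fin l),
      ∫ ω, b ω ^ a * ε j ω ^ c = (∫ ω, b ω ^ a) * ∫ ω, ε j ω ^ c := by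
    intro a c j
    exact aux_pair hindep hXm (by simp : (none : Option (Fin l)) ≠ some j) a c
  have pairee : ∀ (a c : ℕ) (j k : Fin l), j ≠ k →
      ∫ ω, ε j ω ^ a * ε k ω ^ c = (∫ ω, ε j ω ^ a) * ∫ ω, ε k ω ^ c := by
    intro a c j k hjk
    exact aux_pair hindep hXm
      (by simp [hjk] : (some j : Option (Fin l)) ≠ some k) a c
  have tripbee : ∀ (a c d : ℕ) (j k : Fin l), j ≠ k →
      ∫ ω, b ω ^ a * ε j ω ^ c * ε k ω ^ d
        = (∫ ω, b ω ^ a) * (∫ ω, ε j ω ^ c) * ∫ ω, ε k ω ^ d := by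
    intro a c d j k hjk
    exact aux_triple hindep hXm (by simp : (none : Option (Fin l)) ≠ some j)
      (by simp : (none : Option (Fin l)) ≠ some k)
      (by simp [hjk] : (some j : Option (Fin l)) ≠ some k) a c d
  have tripeee : ∀ (a c d : ℕ) (j k m : Fin l), j ≠ k → j ≠ m → k ≠ m →
      ∫ ω, ε j ω ^ a * ε k ω ^ c * ε m ω ^ d
        = (∫ ω, ε j ω ^ a) * (∫ ω, ε k ω ^ c) * ∫ ω, ε m ω ^ d := by
    intro a c d j k m hjk hjm hkm
    exact aux_triple hindep hXm (show (some j : Option (Fin l)) ≠ some k by simp [hjk])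
      (show (some j : Option (Fin l)) ≠ some m by simp [hjm])
      (show (some k : Option (Fin l)) ≠ some m by simp [hkm]) a c d
  have quadbeee : ∀ (a c d e : ℕ) (j k m : Fin l), j ≠ k → j ≠ m → k ≠ m →
      ∫ ω, b ω ^ a * ε j ω ^ c * ε k ω ^ d * ε m ω ^ e
        = (∫ ω, b ω ^ a) * (∫ ω, ε j ω ^ c) * (∫ ω, ε k ω ^ d) * ∫ ω, ε m ω ^ e := by
    intro a c d e j k m hjk hjm hkm
    exact aux_quad hindep hXm (show (none : Option (Fin l)) ≠ some j by simp)
      (show (none : Option (Fin l)) ≠ some k by simp)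
      (show (none : Option (Fin l)) ≠ some m by simp)
      (show (some j : Option (Fin l)) ≠ some k by simp [hjk])
      (show (some j : Option (Fin l)) ≠ some m by simp [hjm])
      (show (some k : Option (Fin l)) ≠ some m by simp [hkm]) a c d e
  have hb0 : (∫ ω, b ω ^ 1) = 0 := by simpa using hbmean
  have hε0 : ∀ j, (∫ ω, ε j ω ^ 1) = 0 := by intro j; simpa using hεmean j
  -- basic integrability
  have hemeas : ∀ j, Measurable fun ω => b ω + ε j ω := fun j => hbmeas.add (hεmeas j)
  have he4 : ∀ j, Integrable (fun ω => (b ω + ε j ω) ^ 4) ℙ := by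
    intro j
    refine Integrable.mono' ((hbint4.add (hεint4 j)).const_mul 8)
      ((hemeas j).pow_const 4).aestronglyMeasurable ?_
    filter_upwards with ω
    rw [Real.norm_eq_abs, abs_of_nonneg (by positivity)]
    simp only [Pi.add_apply]
    exact aux_pow4_add_le (b ω) (ε j ω)
  have M1 : ∀ j, Integrable (fun ω => b ω ^ 3 * ε j ω ^ 1) ℙ := fun j =>
    (aux_integrable_mul4 hbmeas hbmeas hbmeas (hεmeas j) hbint4 hbint4 hbint4
      (hεint4 j)).congr (ae_of_all _ fun ω => by ring)
  have M2 : ∀ j, Integrable (fun ω => b ω ^ 2 * ε j ω ^ 2) ℙ := fun j =>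
    (aux_integrable_mul4 hbmeas hbmeas (hεmeas j) (hεmeas j) hbint4 hbint4 (hεint4 j)
      (hεint4 j)).congr (ae_of_all _ fun ω => by ring)
  have M3 : ∀ j, Integrable (fun ω => b ω ^ 1 * ε j ω ^ 3) ℙ := fun j =>
    (aux_integrable_mul4 hbmeas (hεmeas j) (hεmeas j) (hεmeas j) hbint4 (hεint4 j)
      (hεint4 j) (hεint4 j)).congr (ae_of_all _ fun ω => by ring)
  have M5 : ∀ j k, Integrable (fun ω => b ω ^ 2 * ε j ω ^ 1 * ε k ω ^ 1) ℙ := fun j k =>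
    (aux_integrable_mul4 hbmeas hbmeas (hεmeas j) (hεmeas k) hbint4 hbint4 (hεint4 j)
      (hεint4 k)).congr (ae_of_all _ fun ω => by ring)
  have M6a : ∀ j k, Integrable (fun ω => b ω ^ 1 * ε j ω ^ 2 * ε k ω ^ 1) ℙ := fun j k =>
    (aux_integrable_mul4 hbmeas (hεmeas j) (hεmeas j) (hεmeas k) hbint4 (hεint4 j)
      (hεint4 j) (hεint4 k)).congr (ae_of_all _ fun ω => by ring)
  have M6b : ∀ j k, Integrable (fun ω => b ω ^ 1 * ε j ω ^ 1 * ε k ω ^ 2) ℙ := fun j k =>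
    (aux_integrable_mul4 hbmeas (hεmeas j) (hεmeas k) (hεmeas k) hbint4 (hεint4 j)
      (hεint4 k) (hεint4 k)).congr (ae_of_all _ fun ω => by ring)
  have M7 : ∀ j k, Integrable (fun ω => ε j ω ^ 3 * ε k ω ^ 1) ℙ := fun j k =>
    (aux_integrable_mul4 (hεmeas j) (hεmeas j) (hεmeas j) (hεmeas k) (hεint4 j) (hεint4 j)
      (hεint4 j) (hεint4 k)).congr (ae_of_all _ fun ω => by ring)
  have M8 : ∀ j k, Integrable (fun ω => ε j ω ^ 2 * ε k ω ^ 2) ℙ := fun j k =>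
    (aux_integrable_mul4 (hεmeas j) (hεmeas j) (hεmeas k) (hεmeas k) (hεint4 j) (hεint4 j)
      (hεint4 k) (hεint4 k)).congr (ae_of_all _ fun ω => by ring)
  have M10 : ∀ j k m, Integrable (fun ω => ε j ω ^ 2 * ε k ω ^ 1 * ε m ω ^ 1) ℙ := fun j k m =>
    (aux_integrable_mul4 (hεmeas j) (hεmeas j) (hεmeas k) (hεmeas m) (hεint4 j) (hεint4 j)
      (hεint4 k) (hεint4 m)).congr (ae_of_all _ fun ω => by ring)
  have M11 : ∀ j k m, Integrable (fun ω => b ω ^ 1 * ε j ω ^ 1 * ε k ω ^ 1 * ε m ω ^ 1) ℙ :=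
    fun j k m =>
    (aux_integrable_mul4 hbmeas (hεmeas j) (hεmeas k) (hεmeas m) hbint4 (hεint4 j)
      (hεint4 k) (hεint4 m)).congr (ae_of_all _ fun ω => by ring)
  have he31 : ∀ j k, Integrable (fun ω => (b ω + ε j ω) ^ 3 * (b ω + ε k ω)) ℙ := fun j k =>
    (aux_integrable_mul4 (hemeas j) (hemeas j) (hemeas j) (hemeas k) (he4 j) (he4 j) (he4 j)
      (he4 k)).congr (ae_of_all _ fun ω => by ring)
  have he22 : ∀ j k, Integrable (fun ω => (b ω + ε j ω) ^ 2 * (b ω + ε k ω) ^ 2) ℙ := fun j k =>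
    (aux_integrable_mul4 (hemeas j) (hemeas j) (hemeas k) (hemeas k) (he4 j) (he4 j) (he4 k)
      (he4 k)).congr (ae_of_all _ fun ω => by ring)
  have he211 : ∀ j k m,
      Integrable (fun ω => (b ω + ε j ω) ^ 2 * ((b ω + ε k ω) * (b ω + ε m ω))) ℙ :=
    fun j k m =>
    (aux_integrable_mul4 (hemeas j) (hemeas j) (hemeas k) (hemeas m) (he4 j) (he4 j) (he4 k)
      (he4 m)).congr (ae_of_all _ fun ω => by ring)
  -- the four basic moment computations
  have hA : ∀ j, (∫ ω, (b ω + ε j ω) ^ 4)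
      = (∫ ω, b ω ^ 4) + 6 * ((∫ ω, b ω ^ 2) * ∫ ω, ε j ω ^ 2) + γε4 := by
    intro j
    have t2 : Integrable (fun ω => 4 * (b ω ^ 3 * ε j ω ^ 1)) ℙ := (M1 j).const_mul 4
    have t3 : Integrable (fun ω => 6 * (b ω ^ 2 * ε j ω ^ 2)) ℙ := (M2 j).const_mul 6
    have t4 : Integrable (fun ω => 4 * (b ω ^ 1 * ε j ω ^ 3)) ℙ := (M3 j).const_mul 4
    have r4 : Integrable (fun ω => 4 * (b ω ^ 1 * ε j ω ^ 3) + ε j ω ^ 4) ℙ :=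
      t4.add (hεint4 j)
    have r3 : Integrable (fun ω => 6 * (b ω ^ 2 * ε j ω ^ 2)
        + (4 * (b ω ^ 1 * ε j ω ^ 3) + ε j ω ^ 4)) ℙ := t3.add r4
    have r2 : Integrable (fun ω => 4 * (b ω ^ 3 * ε j ω ^ 1) + (6 * (b ω ^ 2 * ε j ω ^ 2)
        + (4 * (b ω ^ 1 * ε j ω ^ 3) + ε j ω ^ 4))) ℙ := t2.add r3
    rw [show (fun ω => (b ω + ε j ω) ^ 4) = fun ω => b ω ^ 4 + (4 * (b ω ^ 3 * ε j ω ^ 1)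
      + (6 * (b ω ^ 2 * ε j ω ^ 2) + (4 * (b ω ^ 1 * ε j ω ^ 3) + ε j ω ^ 4)))
      from funext fun ω => by ring]
    rw [integral_add hbint4 r2, integral_add t2 r3, integral_add t3 r4,
      integral_add t4 (hεint4 j), integral_const_mul, integral_const_mul, integral_const_mul,
      paird 3 1 j, paird 2 2 j, paird 1 3 j, hb0, hε0 j, hε4 j]
    ring
  have hC : ∀ j k, j ≠ k → (∫ ω, (b ω + ε j ω) ^ 3 * (b ω + ε k ω))
      = (∫ ω, b ω ^ 4) + 3 * ((∫ ω, b ω ^ 2) * ∫ ω, ε j ω ^ 2) := by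
    intro j k hjk
    have u2 := M1 k
    have u3 : Integrable (fun ω => 3 * (b ω ^ 3 * ε j ω ^ 1)) ℙ := (M1 j).const_mul 3
    have u4 : Integrable (fun ω => 3 * (b ω ^ 2 * ε j ω ^ 1 * ε k ω ^ 1)) ℙ :=
      (M5 j k).const_mul 3
    have u5 : Integrable (fun ω => 3 * (b ω ^ 2 * ε j ω ^ 2)) ℙ := (M2 j).const_mul 3
    have u6 : Integrable (fun ω => 3 * (b ω ^ 1 * ε j ω ^ 2 * ε k ω ^ 1)) ℙ :=
      (M6a j k).const_mul 3
    have u7 := M3 j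
    have u8 := M7 j k
    have r7 : Integrable (fun ω => b ω ^ 1 * ε j ω ^ 3 + ε j ω ^ 3 * ε k ω ^ 1) ℙ := u7.add u8
    have r6 : Integrable (fun ω => 3 * (b ω ^ 1 * ε j ω ^ 2 * ε k ω ^ 1)
        + (b ω ^ 1 * ε j ω ^ 3 + ε j ω ^ 3 * ε k ω ^ 1)) ℙ := u6.add r7
    have r5 : Integrable (fun ω => 3 * (b ω ^ 2 * ε j ω ^ 2)
        + (3 * (b ω ^ 1 * ε j ω ^ 2 * ε k ω ^ 1)
        + (b ω ^ 1 * ε j ω ^ 3 + ε j ω ^ 3 * ε k ω ^ 1))) ℙ := u5.add r6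
    have r4 : Integrable (fun ω => 3 * (b ω ^ 2 * ε j ω ^ 1 * ε k ω ^ 1)
        + (3 * (b ω ^ 2 * ε j ω ^ 2) + (3 * (b ω ^ 1 * ε j ω ^ 2 * ε k ω ^ 1)
        + (b ω ^ 1 * ε j ω ^ 3 + ε j ω ^ 3 * ε k ω ^ 1)))) ℙ := u4.add r5
    have r3 : Integrable (fun ω => 3 * (b ω ^ 3 * ε j ω ^ 1)
        + (3 * (b ω ^ 2 * ε j ω ^ 1 * ε k ω ^ 1) + (3 * (b ω ^ 2 * ε j ω ^ 2)
        + (3 * (b ω ^ 1 * ε j ω ^ 2 * ε k ω ^ 1)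
        + (b ω ^ 1 * ε j ω ^ 3 + ε j ω ^ 3 * ε k ω ^ 1))))) ℙ := u3.add r4
    have r2 : Integrable (fun ω => b ω ^ 3 * ε k ω ^ 1 + (3 * (b ω ^ 3 * ε j ω ^ 1)
        + (3 * (b ω ^ 2 * ε j ω ^ 1 * ε k ω ^ 1) + (3 * (b ω ^ 2 * ε j ω ^ 2)
        + (3 * (b ω ^ 1 * ε j ω ^ 2 * ε k ω ^ 1)
        + (b ω ^ 1 * ε j ω ^ 3 + ε j ω ^ 3 * ε k ω ^ 1)))))) ℙ := u2.add r3
    rw [show (fun ω => (b ω + ε j ω) ^ 3 * (b ω + ε k ω)) = fun ω => b ω ^ 4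
      + (b ω ^ 3 * ε k ω ^ 1 + (3 * (b ω ^ 3 * ε j ω ^ 1)
      + (3 * (b ω ^ 2 * ε j ω ^ 1 * ε k ω ^ 1) + (3 * (b ω ^ 2 * ε j ω ^ 2)
      + (3 * (b ω ^ 1 * ε j ω ^ 2 * ε k ω ^ 1)
      + (b ω ^ 1 * ε j ω ^ 3 + ε j ω ^ 3 * ε k ω ^ 1))))))
      from funext fun ω => by ring]
    rw [integral_add hbint4 r2, integral_add u2 r3, integral_add u3 r4, integral_add u4 r5,
      integral_add u5 r6, integral_add u6 r7, integral_add u7 u8,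
      integral_const_mul, integral_const_mul, integral_const_mul, integral_const_mul,
      paird 3 1 k, paird 3 1 j, tripbee 2 1 1 j k hjk, paird 2 2 j,
      tripbee 1 2 1 j k hjk, paird 1 3 j, pairee 3 1 j k hjk, hb0, hε0 j, hε0 k]
    ring
  have hE : ∀ j k, j ≠ k → (∫ ω, (b ω + ε j ω) ^ 2 * (b ω + ε k ω) ^ 2)
      = (∫ ω, b ω ^ 4) + (∫ ω, b ω ^ 2) * (∫ ω, ε j ω ^ 2)
        + (∫ ω, b ω ^ 2) * (∫ ω, ε k ω ^ 2)
        + (∫ ω, ε j ω ^ 2) * ∫ ω, ε k ω ^ 2 := by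
    intro j k hjk
    have v2 : Integrable (fun ω => 2 * (b ω ^ 3 * ε k ω ^ 1)) ℙ := (M1 k).const_mul 2
    have v3 := M2 k
    have v4 : Integrable (fun ω => 2 * (b ω ^ 3 * ε j ω ^ 1)) ℙ := (M1 j).const_mul 2
    have v5 : Integrable (fun ω => 4 * (b ω ^ 2 * ε j ω ^ 1 * ε k ω ^ 1)) ℙ :=
      (M5 j k).const_mul 4
    have v6 : Integrable (fun ω => 2 * (b ω ^ 1 * ε j ω ^ 1 * ε k ω ^ 2)) ℙ :=
      (M6b j k).const_mul 2
    have v7 := M2 j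
    have v8 : Integrable (fun ω => 2 * (b ω ^ 1 * ε j ω ^ 2 * ε k ω ^ 1)) ℙ :=
      (M6a j k).const_mul 2
    have v9 := M8 j k
    have r8 : Integrable (fun ω => 2 * (b ω ^ 1 * ε j ω ^ 2 * ε k ω ^ 1)
        + ε j ω ^ 2 * ε k ω ^ 2) ℙ := v8.add v9
    have r7 : Integrable (fun ω => b ω ^ 2 * ε j ω ^ 2
        + (2 * (b ω ^ 1 * ε j ω ^ 2 * ε k ω ^ 1) + ε j ω ^ 2 * ε k ω ^ 2)) ℙ := v7.add r8
    have r6 : Integrable (fun ω => 2 * (b ω ^ 1 * ε j ω ^ 1 * ε k ω ^ 2)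
        + (b ω ^ 2 * ε j ω ^ 2
        + (2 * (b ω ^ 1 * ε j ω ^ 2 * ε k ω ^ 1) + ε j ω ^ 2 * ε k ω ^ 2))) ℙ := v6.add r7
    have r5 : Integrable (fun ω => 4 * (b ω ^ 2 * ε j ω ^ 1 * ε k ω ^ 1)
        + (2 * (b ω ^ 1 * ε j ω ^ 1 * ε k ω ^ 2) + (b ω ^ 2 * ε j ω ^ 2
        + (2 * (b ω ^ 1 * ε j ω ^ 2 * ε k ω ^ 1) + ε j ω ^ 2 * ε k ω ^ 2)))) ℙ := v5.add r6
    have r4 : Integrable (fun ω => 2 * (b ω ^ 3 * ε j ω ^ 1)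
        + (4 * (b ω ^ 2 * ε j ω ^ 1 * ε k ω ^ 1)
        + (2 * (b ω ^ 1 * ε j ω ^ 1 * ε k ω ^ 2) + (b ω ^ 2 * ε j ω ^ 2
        + (2 * (b ω ^ 1 * ε j ω ^ 2 * ε k ω ^ 1) + ε j ω ^ 2 * ε k ω ^ 2))))) ℙ := v4.add r5
    have r3 : Integrable (fun ω => b ω ^ 2 * ε k ω ^ 2 + (2 * (b ω ^ 3 * ε j ω ^ 1)
        + (4 * (b ω ^ 2 * ε j ω ^ 1 * ε k ω ^ 1)
        + (2 * (b ω ^ 1 * ε j ω ^ 1 * ε k ω ^ 2) + (b ω ^ 2 * ε j ω ^ 2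
        + (2 * (b ω ^ 1 * ε j ω ^ 2 * ε k ω ^ 1) + ε j ω ^ 2 * ε k ω ^ 2)))))) ℙ := v3.add r4
    have r2 : Integrable (fun ω => 2 * (b ω ^ 3 * ε k ω ^ 1)
        + (b ω ^ 2 * ε k ω ^ 2 + (2 * (b ω ^ 3 * ε j ω ^ 1)
        + (4 * (b ω ^ 2 * ε j ω ^ 1 * ε k ω ^ 1)
        + (2 * (b ω ^ 1 * ε j ω ^ 1 * ε k ω ^ 2) + (b ω ^ 2 * ε j ω ^ 2
        + (2 * (b ω ^ 1 * ε j ω ^ 2 * ε k ω ^ 1) + ε j ω ^ 2 * ε k ω ^ 2))))))) ℙ := v2.add r3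
    rw [show (fun ω => (b ω + ε j ω) ^ 2 * (b ω + ε k ω) ^ 2) = fun ω => b ω ^ 4
      + (2 * (b ω ^ 3 * ε k ω ^ 1)
      + (b ω ^ 2 * ε k ω ^ 2 + (2 * (b ω ^ 3 * ε j ω ^ 1)
      + (4 * (b ω ^ 2 * ε j ω ^ 1 * ε k ω ^ 1)
      + (2 * (b ω ^ 1 * ε j ω ^ 1 * ε k ω ^ 2) + (b ω ^ 2 * ε j ω ^ 2
      + (2 * (b ω ^ 1 * ε j ω ^ 2 * ε k ω ^ 1) + ε j ω ^ 2 * ε k ω ^ 2)))))))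
      from funext fun ω => by ring]
    rw [integral_add hbint4 r2, integral_add v2 r3, integral_add v3 r4, integral_add v4 r5,
      integral_add v5 r6, integral_add v6 r7, integral_add v7 r8, integral_add v8 v9,
      integral_const_mul, integral_const_mul, integral_const_mul, integral_const_mul,
      integral_const_mul, paird 3 1 k, paird 2 2 k, paird 3 1 j, tripbee 2 1 1 j k hjk,
      tripbee 1 1 2 j k hjk, paird 2 2 j, tripbee 1 2 1 j k hjk, pairee 2 2 j k hjk,
      hb0, hε0 j, hε0 k]
    ring
  have hD3 : ∀ j k m, j ≠ k → j ≠ m → k ≠ m →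
      (∫ ω, (b ω + ε j ω) ^ 2 * ((b ω + ε k ω) * (b ω + ε m ω)))
      = (∫ ω, b ω ^ 4) + (∫ ω, b ω ^ 2) * ∫ ω, ε j ω ^ 2 := by
    intro j k m hjk hjm hkm
    have w2 := M1 m
    have w3 := M1 k
    have w4 := M5 k m
    have w5 : Integrable (fun ω => 2 * (b ω ^ 3 * ε j ω ^ 1)) ℙ := (M1 j).const_mul 2
    have w6 : Integrable (fun ω => 2 * (b ω ^ 2 * ε j ω ^ 1 * ε m ω ^ 1)) ℙ :=
      (M5 j m).const_mul 2
    have w7 : Integrable (fun ω => 2 * (b ω ^ 2 * ε j ω ^ 1 * ε k ω ^ 1)) ℙ :=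
      (M5 j k).const_mul 2
    have w8 : Integrable (fun ω => 2 * (b ω ^ 1 * ε j ω ^ 1 * ε k ω ^ 1 * ε m ω ^ 1)) ℙ :=
      (M11 j k m).const_mul 2
    have w9 := M2 j
    have w10 := M6a j m
    have w11 := M6a j k
    have w12 := M10 j k m
    have r11 : Integrable (fun ω => b ω ^ 1 * ε j ω ^ 2 * ε k ω ^ 1
        + ε j ω ^ 2 * ε k ω ^ 1 * ε m ω ^ 1) ℙ := w11.add w12
    have r10 : Integrable (fun ω => b ω ^ 1 * ε j ω ^ 2 * ε m ω ^ 1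
        + (b ω ^ 1 * ε j ω ^ 2 * ε k ω ^ 1
        + ε j ω ^ 2 * ε k ω ^ 1 * ε m ω ^ 1)) ℙ := w10.add r11
    have r9 : Integrable (fun ω => b ω ^ 2 * ε j ω ^ 2
        + (b ω ^ 1 * ε j ω ^ 2 * ε m ω ^ 1 + (b ω ^ 1 * ε j ω ^ 2 * ε k ω ^ 1
        + ε j ω ^ 2 * ε k ω ^ 1 * ε m ω ^ 1))) ℙ := w9.add r10
    have r8 : Integrable (fun ω => 2 * (b ω ^ 1 * ε j ω ^ 1 * ε k ω ^ 1 * ε m ω ^ 1)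
        + (b ω ^ 2 * ε j ω ^ 2
        + (b ω ^ 1 * ε j ω ^ 2 * ε m ω ^ 1 + (b ω ^ 1 * ε j ω ^ 2 * ε k ω ^ 1
        + ε j ω ^ 2 * ε k ω ^ 1 * ε m ω ^ 1)))) ℙ := w8.add r9
    have r7 : Integrable (fun ω => 2 * (b ω ^ 2 * ε j ω ^ 1 * ε k ω ^ 1)
        + (2 * (b ω ^ 1 * ε j ω ^ 1 * ε k ω ^ 1 * ε m ω ^ 1)
        + (b ω ^ 2 * ε j ω ^ 2
        + (b ω ^ 1 * ε j ω ^ 2 * ε m ω ^ 1 + (b ω ^ 1 * ε j ω ^ 2 * ε k ω ^ 1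
        + ε j ω ^ 2 * ε k ω ^ 1 * ε m ω ^ 1))))) ℙ := w7.add r8
    have r6 : Integrable (fun ω => 2 * (b ω ^ 2 * ε j ω ^ 1 * ε m ω ^ 1)
        + (2 * (b ω ^ 2 * ε j ω ^ 1 * ε k ω ^ 1)
        + (2 * (b ω ^ 1 * ε j ω ^ 1 * ε k ω ^ 1 * ε m ω ^ 1)
        + (b ω ^ 2 * ε j ω ^ 2
        + (b ω ^ 1 * ε j ω ^ 2 * ε m ω ^ 1 + (b ω ^ 1 * ε j ω ^ 2 * ε k ω ^ 1
        + ε j ω ^ 2 * ε k ω ^ 1 * ε m ω ^ 1)))))) ℙ := w6.add r7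
    have r5 : Integrable (fun ω => 2 * (b ω ^ 3 * ε j ω ^ 1)
        + (2 * (b ω ^ 2 * ε j ω ^ 1 * ε m ω ^ 1)
        + (2 * (b ω ^ 2 * ε j ω ^ 1 * ε k ω ^ 1)
        + (2 * (b ω ^ 1 * ε j ω ^ 1 * ε k ω ^ 1 * ε m ω ^ 1)
        + (b ω ^ 2 * ε j ω ^ 2
        + (b ω ^ 1 * ε j ω ^ 2 * ε m ω ^ 1 + (b ω ^ 1 * ε j ω ^ 2 * ε k ω ^ 1
        + ε j ω ^ 2 * ε k ω ^ 1 * ε m ω ^ 1))))))) ℙ := w5.add r6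
    have r4 : Integrable (fun ω => b ω ^ 2 * ε k ω ^ 1 * ε m ω ^ 1
        + (2 * (b ω ^ 3 * ε j ω ^ 1)
        + (2 * (b ω ^ 2 * ε j ω ^ 1 * ε m ω ^ 1)
        + (2 * (b ω ^ 2 * ε j ω ^ 1 * ε k ω ^ 1)
        + (2 * (b ω ^ 1 * ε j ω ^ 1 * ε k ω ^ 1 * ε m ω ^ 1)
        + (b ω ^ 2 * ε j ω ^ 2
        + (b ω ^ 1 * ε j ω ^ 2 * ε m ω ^ 1 + (b ω ^ 1 * ε j ω ^ 2 * ε k ω ^ 1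
        + ε j ω ^ 2 * ε k ω ^ 1 * ε m ω ^ 1)))))))) ℙ := w4.add r5
    have r3 : Integrable (fun ω => b ω ^ 3 * ε k ω ^ 1
        + (b ω ^ 2 * ε k ω ^ 1 * ε m ω ^ 1
        + (2 * (b ω ^ 3 * ε j ω ^ 1)
        + (2 * (b ω ^ 2 * ε j ω ^ 1 * ε m ω ^ 1)
        + (2 * (b ω ^ 2 * ε j ω ^ 1 * ε k ω ^ 1)
        + (2 * (b ω ^ 1 * ε j ω ^ 1 * ε k ω ^ 1 * ε m ω ^ 1)
        + (b ω ^ 2 * ε j ω ^ 2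
        + (b ω ^ 1 * ε j ω ^ 2 * ε m ω ^ 1 + (b ω ^ 1 * ε j ω ^ 2 * ε k ω ^ 1
        + ε j ω ^ 2 * ε k ω ^ 1 * ε m ω ^ 1))))))))) ℙ := w3.add r4
    have r2 : Integrable (fun ω => b ω ^ 3 * ε m ω ^ 1
        + (b ω ^ 3 * ε k ω ^ 1
        + (b ω ^ 2 * ε k ω ^ 1 * ε m ω ^ 1
        + (2 * (b ω ^ 3 * ε j ω ^ 1)
        + (2 * (b ω ^ 2 * ε j ω ^ 1 * ε m ω ^ 1)
        + (2 * (b ω ^ 2 * ε j ω ^ 1 * ε k ω ^ 1)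
        + (2 * (b ω ^ 1 * ε j ω ^ 1 * ε k ω ^ 1 * ε m ω ^ 1)
        + (b ω ^ 2 * ε j ω ^ 2
        + (b ω ^ 1 * ε j ω ^ 2 * ε m ω ^ 1 + (b ω ^ 1 * ε j ω ^ 2 * ε k ω ^ 1
        + ε j ω ^ 2 * ε k ω ^ 1 * ε m ω ^ 1)))))))))) ℙ := w2.add r3
    rw [show (fun ω => (b ω + ε j ω) ^ 2 * ((b ω + ε k ω) * (b ω + ε m ω)))
      = fun ω => b ω ^ 4 + (b ω ^ 3 * ε m ω ^ 1
      + (b ω ^ 3 * ε k ω ^ 1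
      + (b ω ^ 2 * ε k ω ^ 1 * ε m ω ^ 1
      + (2 * (b ω ^ 3 * ε j ω ^ 1)
      + (2 * (b ω ^ 2 * ε j ω ^ 1 * ε m ω ^ 1)
      + (2 * (b ω ^ 2 * ε j ω ^ 1 * ε k ω ^ 1)
      + (2 * (b ω ^ 1 * ε j ω ^ 1 * ε k ω ^ 1 * ε m ω ^ 1)
      + (b ω ^ 2 * ε j ω ^ 2
      + (b ω ^ 1 * ε j ω ^ 2 * ε m ω ^ 1 + (b ω ^ 1 * ε j ω ^ 2 * ε k ω ^ 1
      + ε j ω ^ 2 * ε k ω ^ 1 * ε m ω ^ 1))))))))))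
      from funext fun ω => by ring]
    rw [integral_add hbint4 r2, integral_add w2 r3, integral_add w3 r4, integral_add w4 r5,
      integral_add w5 r6, integral_add w6 r7, integral_add w7 r8, integral_add w8 r9,
      integral_add w9 r10, integral_add w10 r11, integral_add w11 w12,
      integral_const_mul, integral_const_mul, integral_const_mul, integral_const_mul,
      paird 3 1 m, paird 3 1 k, tripbee 2 1 1 k m hkm, paird 3 1 j,
      tripbee 2 1 1 j m hjm, tripbee 2 1 1 j k hjk, quadbeee 1 1 1 1 j k m hjk hjm hkm,
      paird 2 2 j, tripbee 1 2 1 j m hjm, tripbee 1 2 1 j k hjk,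
      tripeee 2 1 1 j k m hjk hjm hkm, hb0, hε0 j, hε0 k, hε0 m]
    ring
  -- sum-level computations
  have hS4 : (∫ ω, ∑ j, (b ω + ε j ω) ^ 4)
      = ∑ j, ((∫ ω, b ω ^ 4) + 6 * ((∫ ω, b ω ^ 2) * ∫ ω, ε j ω ^ 2) + γε4) := by
    rw [integral_finset_sum _ fun j _ => he4 j]
    exact Finset.sum_congr rfl fun j _ => hA j
  have hDint : (∫ ω, ∑ j, ∑ k, (b ω + ε j ω) ^ 3 * (b ω + ε k ω))
      = ∑ j, (((∫ ω, b ω ^ 4) + 6 * ((∫ ω, b ω ^ 2) * ∫ ω, ε j ω ^ 2) + γε4)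
        + (↑(l - 1) : ℝ) * ((∫ ω, b ω ^ 4) + 3 * ((∫ ω, b ω ^ 2) * ∫ ω, ε j ω ^ 2))) := by
    rw [integral_finset_sum _ fun j _ => integrable_finset_sum _ fun k _ => he31 j k]
    refine Finset.sum_congr rfl fun j _ => ?_
    rw [integral_finset_sum _ fun k _ => he31 j k,
      ← Finset.add_sum_erase _ _ (Finset.mem_univ j)]
    congr 1
    · rw [show (fun ω => (b ω + ε j ω) ^ 3 * (b ω + ε j ω)) = fun ω => (b ω + ε j ω) ^ 4
        from funext fun ω => by ring]
      exact hA j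
    · rw [Finset.sum_congr rfl fun k hk => hC j k (Finset.ne_of_mem_erase hk).symm,
        Finset.sum_const, Finset.card_erase_of_mem (Finset.mem_univ j), Finset.card_univ,
        Fintype.card_fin, nsmul_eq_mul]
  have hEint : (∫ ω, ∑ j, ∑ k, (b ω + ε j ω) ^ 2 * (b ω + ε k ω) ^ 2)
      = ∑ j, (((∫ ω, b ω ^ 4) + 6 * ((∫ ω, b ω ^ 2) * ∫ ω, ε j ω ^ 2) + γε4)
        + ∑ k ∈ Finset.univ.erase j,
            ((∫ ω, b ω ^ 4) + (∫ ω, b ω ^ 2) * (∫ ω, ε j ω ^ 2)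
              + (∫ ω, b ω ^ 2) * (∫ ω, ε k ω ^ 2)
              + (∫ ω, ε j ω ^ 2) * ∫ ω, ε k ω ^ 2)) := by
    rw [integral_finset_sum _ fun j _ => integrable_finset_sum _ fun k _ => he22 j k]
    refine Finset.sum_congr rfl fun j _ => ?_
    rw [integral_finset_sum _ fun k _ => he22 j k,
      ← Finset.add_sum_erase _ _ (Finset.mem_univ j)]
    congr 1
    · rw [show (fun ω => (b ω + ε j ω) ^ 2 * (b ω + ε j ω) ^ 2) = fun ω => (b ω + ε j ω) ^ 4
        from funext fun ω => by ring]
      exact hA j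
    · exact Finset.sum_congr rfl fun k hk => hE j k (Finset.ne_of_mem_erase hk).symm
  have hl2 : l - 1 - 1 = l - 2 := by omega
  have hTint : (∫ ω, ∑ j, ∑ k, ∑ m, (b ω + ε j ω) ^ 2 * ((b ω + ε k ω) * (b ω + ε m ω)))
      = ∑ j, ((((∫ ω, b ω ^ 4) + 6 * ((∫ ω, b ω ^ 2) * ∫ ω, ε j ω ^ 2) + γε4)
          + (↑(l - 1) : ℝ) * ((∫ ω, b ω ^ 4) + 3 * ((∫ ω, b ω ^ 2) * ∫ ω, ε j ω ^ 2)))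
        + ((↑(l - 1) : ℝ) * (((∫ ω, b ω ^ 4) + 3 * ((∫ ω, b ω ^ 2) * ∫ ω, ε j ω ^ 2))
            + (↑(l - 2) : ℝ) * ((∫ ω, b ω ^ 4) + (∫ ω, b ω ^ 2) * ∫ ω, ε j ω ^ 2))
          + ∑ k ∈ Finset.univ.erase j,
              ((∫ ω, b ω ^ 4) + (∫ ω, b ω ^ 2) * (∫ ω, ε j ω ^ 2)
                + (∫ ω, b ω ^ 2) * (∫ ω, ε k ω ^ 2)
                + (∫ ω, ε j ω ^ 2) * ∫ ω, ε k ω ^ 2))) := by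
    rw [integral_finset_sum _ fun j _ =>
      integrable_finset_sum _ fun k _ => integrable_finset_sum _ fun m _ => he211 j k m]
    refine Finset.sum_congr rfl fun j _ => ?_
    rw [integral_finset_sum _ fun k _ => integrable_finset_sum _ fun m _ => he211 j k m,
      ← Finset.add_sum_erase _ _ (Finset.mem_univ j)]
    congr 1
    · -- k = j branch
      rw [integral_finset_sum _ fun m _ => he211 j j m,
        ← Finset.add_sum_erase _ _ (Finset.mem_univ j)]
      congr 1
      · rw [show (fun ω => (b ω + ε j ω) ^ 2 * ((b ω + ε j ω) * (b ω + ε j ω)))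
          = fun ω => (b ω + ε j ω) ^ 4 from funext fun ω => by ring]
        exact hA j
      · have hstep : ∀ m ∈ Finset.univ.erase j,
            (∫ ω, (b ω + ε j ω) ^ 2 * ((b ω + ε j ω) * (b ω + ε m ω)))
            = (∫ ω, b ω ^ 4) + 3 * ((∫ ω, b ω ^ 2) * ∫ ω, ε j ω ^ 2) := by
          intro m hm
          rw [show (fun ω => (b ω + ε j ω) ^ 2 * ((b ω + ε j ω) * (b ω + ε m ω)))
            = fun ω => (b ω + ε j ω) ^ 3 * (b ω + ε m ω) from funext fun ω => by ring]
          exact hC j m (Finset.ne_of_mem_erase hm).symm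
        rw [Finset.sum_congr rfl hstep, Finset.sum_const,
          Finset.card_erase_of_mem (Finset.mem_univ j), Finset.card_univ, Fintype.card_fin,
          nsmul_eq_mul]
    · -- k ≠ j branch
      have hk_eval : ∀ k ∈ Finset.univ.erase j,
          (∫ ω, ∑ m, (b ω + ε j ω) ^ 2 * ((b ω + ε k ω) * (b ω + ε m ω)))
          = (((∫ ω, b ω ^ 4) + 3 * ((∫ ω, b ω ^ 2) * ∫ ω, ε j ω ^ 2))
              + (↑(l - 2) : ℝ) * ((∫ ω, b ω ^ 4) + (∫ ω, b ω ^ 2) * ∫ ω, ε j ω ^ 2))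
            + ((∫ ω, b ω ^ 4) + (∫ ω, b ω ^ 2) * (∫ ω, ε j ω ^ 2)
              + (∫ ω, b ω ^ 2) * (∫ ω, ε k ω ^ 2)
              + (∫ ω, ε j ω ^ 2) * ∫ ω, ε k ω ^ 2) := by
        intro k hk
        have hkj : k ≠ j := Finset.ne_of_mem_erase hk
        rw [integral_finset_sum _ fun m _ => he211 j k m,
          ← Finset.add_sum_erase _ _ (Finset.mem_univ j),
          ← Finset.add_sum_erase _ _ hk]
        have h1 : (∫ ω, (b ω + ε j ω) ^ 2 * ((b ω + ε k ω) * (b ω + ε j ω)))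
            = (∫ ω, b ω ^ 4) + 3 * ((∫ ω, b ω ^ 2) * ∫ ω, ε j ω ^ 2) := by
          rw [show (fun ω => (b ω + ε j ω) ^ 2 * ((b ω + ε k ω) * (b ω + ε j ω)))
            = fun ω => (b ω + ε j ω) ^ 3 * (b ω + ε k ω) from funext fun ω => by ring]
          exact hC j k hkj.symm
        have h2 : (∫ ω, (b ω + ε j ω) ^ 2 * ((b ω + ε k ω) * (b ω + ε k ω)))
            = (∫ ω, b ω ^ 4) + (∫ ω, b ω ^ 2) * (∫ ω, ε j ω ^ 2)
              + (∫ ω, b ω ^ 2) * (∫ ω, ε k ω ^ 2)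
              + (∫ ω, ε j ω ^ 2) * ∫ ω, ε k ω ^ 2 := by
          rw [show (fun ω => (b ω + ε j ω) ^ 2 * ((b ω + ε k ω) * (b ω + ε k ω)))
            = fun ω => (b ω + ε j ω) ^ 2 * (b ω + ε k ω) ^ 2 from funext fun ω => by ring]
          exact hE j k hkj.symm
        have h3 : ∀ m ∈ (Finset.univ.erase j).erase k,
            (∫ ω, (b ω + ε j ω) ^ 2 * ((b ω + ε k ω) * (b ω + ε m ω)))
            = (∫ ω, b ω ^ 4) + (∫ ω, b ω ^ 2) * ∫ ω, ε j ω ^ 2 := by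
          intro m hm
          have hmk : m ≠ k := Finset.ne_of_mem_erase hm
          have hmj : m ≠ j := Finset.ne_of_mem_erase (Finset.mem_of_mem_erase hm)
          exact hD3 j k m hkj.symm hmj.symm hmk.symm
        rw [h1, h2, Finset.sum_congr rfl h3, Finset.sum_const,
          Finset.card_erase_of_mem hk, Finset.card_erase_of_mem (Finset.mem_univ j),
          Finset.card_univ, Fintype.card_fin, hl2, nsmul_eq_mul]
        ring
      rw [Finset.sum_congr rfl hk_eval, Finset.sum_add_distrib, Finset.sum_const,
        Finset.card_erase_of_mem (Finset.mem_univ j), Finset.card_univ, Fintype.card_fin,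
        nsmul_eq_mul]
  -- pointwise expansion of the integrand into multi-sums
  have e2 : ∀ ω, (∑ j, (b ω + ε j ω) ^ 2) * (∑ j, (b ω + ε j ω)) ^ 2
      = ∑ j, ∑ k, ∑ m, (b ω + ε j ω) ^ 2 * ((b ω + ε k ω) * (b ω + ε m ω)) := by
    intro ω
    rw [sq, Finset.sum_mul_sum, Finset.sum_mul_sum]
    simp only [Finset.mul_sum]
  have e1 : ∀ ω, (∑ j, (b ω + ε j ω) ^ 3) * (∑ j, (b ω + ε j ω))
      = ∑ j, ∑ k, (b ω + ε j ω) ^ 3 * (b ω + ε k ω) := fun ω =>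
    Finset.sum_mul_sum _ _ _ _
  have e3 : ∀ ω, (∑ j, (b ω + ε j ω) ^ 2) ^ 2
      = ∑ j, ∑ k, (b ω + ε j ω) ^ 2 * (b ω + ε k ω) ^ 2 := by
    intro ω
    rw [sq, Finset.sum_mul_sum]
  have hpt : (fun ω => (2 * (l : ℝ) ^ 2 - (l : ℝ)) * ∑ j, (b ω + ε j ω) ^ 4
          - (5 * (l : ℝ) - 4) * (∑ j, (b ω + ε j ω) ^ 3) * (∑ j, (b ω + ε j ω))
          + 3 * (∑ j, (b ω + ε j ω) ^ 2) * (∑ j, (b ω + ε j ω)) ^ 2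
          - 3 * (∑ j, (b ω + ε j ω) ^ 2) ^ 2)
      = fun ω => (2 * (l : ℝ) ^ 2 - (l : ℝ)) * (∑ j, (b ω + ε j ω) ^ 4)
          - (5 * (l : ℝ) - 4) * (∑ j, ∑ k, (b ω + ε j ω) ^ 3 * (b ω + ε k ω))
          + 3 * (∑ j, ∑ k, ∑ m, (b ω + ε j ω) ^ 2 * ((b ω + ε k ω) * (b ω + ε m ω)))
          - 3 * (∑ j, ∑ k, (b ω + ε j ω) ^ 2 * (b ω + ε k ω) ^ 2) := by
    funext ω
    rw [← e1 ω, ← e2 ω, ← e3 ω]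
    ring
  -- integrability of the four multi-sums
  have IS4 : Integrable (fun ω => ∑ j, (b ω + ε j ω) ^ 4) ℙ :=
    integrable_finset_sum _ fun j _ => he4 j
  have ID : Integrable (fun ω => ∑ j, ∑ k, (b ω + ε j ω) ^ 3 * (b ω + ε k ω)) ℙ :=
    integrable_finset_sum _ fun j _ => integrable_finset_sum _ fun k _ => he31 j k
  have IT : Integrable
      (fun ω => ∑ j, ∑ k, ∑ m, (b ω + ε j ω) ^ 2 * ((b ω + ε k ω) * (b ω + ε m ω))) ℙ :=
    integrable_finset_sum _ fun j _ =>
      integrable_finset_sum _ fun k _ => integrable_finset_sum _ fun m _ => he211 j k m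
  have IE : Integrable (fun ω => ∑ j, ∑ k, (b ω + ε j ω) ^ 2 * (b ω + ε k ω) ^ 2) ℙ :=
    integrable_finset_sum _ fun j _ => integrable_finset_sum _ fun k _ => he22 j k
  have IS4c : Integrable
      (fun ω => (2 * (l : ℝ) ^ 2 - (l : ℝ)) * ∑ j, (b ω + ε j ω) ^ 4) ℙ :=
    IS4.const_mul _
  have IDc : Integrable (fun ω => (5 * (l : ℝ) - 4)
      * ∑ j, ∑ k, (b ω + ε j ω) ^ 3 * (b ω + ε k ω)) ℙ := ID.const_mul _
  have ITc : Integrable (fun ω => 3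
      * ∑ j, ∑ k, ∑ m, (b ω + ε j ω) ^ 2 * ((b ω + ε k ω) * (b ω + ε m ω))) ℙ :=
    IT.const_mul _
  have IEc : Integrable (fun ω => 3
      * ∑ j, ∑ k, (b ω + ε j ω) ^ 2 * (b ω + ε k ω) ^ 2) ℙ := IE.const_mul _
  have P1 : Integrable (fun ω => (2 * (l : ℝ) ^ 2 - (l : ℝ)) * (∑ j, (b ω + ε j ω) ^ 4)
      - (5 * (l : ℝ) - 4) * (∑ j, ∑ k, (b ω + ε j ω) ^ 3 * (b ω + ε k ω))) ℙ := by
    exact IS4c.sub IDc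
  have P2 : Integrable (fun ω => (2 * (l : ℝ) ^ 2 - (l : ℝ)) * (∑ j, (b ω + ε j ω) ^ 4)
      - (5 * (l : ℝ) - 4) * (∑ j, ∑ k, (b ω + ε j ω) ^ 3 * (b ω + ε k ω))
      + 3 * (∑ j, ∑ k, ∑ m, (b ω + ε j ω) ^ 2 * ((b ω + ε k ω) * (b ω + ε m ω)))) ℙ := by
    exact P1.add ITc
  rw [show (∫ ω, ((2 * (l : ℝ) ^ 2 - (l : ℝ)) * ∑ j, (b ω + ε j ω) ^ 4
          - (5 * (l : ℝ) - 4) * (∑ j, (b ω + ε j ω) ^ 3) * (∑ j, (b ω + ε j ω))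
          + 3 * (∑ j, (b ω + ε j ω) ^ 2) * (∑ j, (b ω + ε j ω)) ^ 2
          - 3 * (∑ j, (b ω + ε j ω) ^ 2) ^ 2))
      = ∫ ω, ((2 * (l : ℝ) ^ 2 - (l : ℝ)) * (∑ j, (b ω + ε j ω) ^ 4)
          - (5 * (l : ℝ) - 4) * (∑ j, ∑ k, (b ω + ε j ω) ^ 3 * (b ω + ε k ω))
          + 3 * (∑ j, ∑ k, ∑ m, (b ω + ε j ω) ^ 2 * ((b ω + ε k ω) * (b ω + ε m ω)))
          - 3 * (∑ j, ∑ k, (b ω + ε j ω) ^ 2 * (b ω + ε k ω) ^ 2))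
      from by rw [hpt]]
  rw [integral_sub P2 IEc, integral_add P1 ITc, integral_sub IS4c IDc,
    integral_const_mul, integral_const_mul, integral_const_mul, integral_const_mul,
    hS4, hDint, hTint, hEint]
  -- final algebra
  have hc1 : ((l - 1 : ℕ) : ℝ) = (l : ℝ) - 1 := by
    rw [Nat.cast_sub (by omega)]; norm_num
  have hc2 : ((l - 2 : ℕ) : ℝ) = (l : ℝ) - 2 := by
    rw [Nat.cast_sub (by omega)]; norm_num
  have key : ∀ j : Fin l,
      (2 * (l : ℝ) ^ 2 - (l : ℝ))
        * ((∫ ω, b ω ^ 4) + 6 * ((∫ ω, b ω ^ 2) * ∫ ω, ε j ω ^ 2) + γε4)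
      - (5 * (l : ℝ) - 4)
        * (((∫ ω, b ω ^ 4) + 6 * ((∫ ω, b ω ^ 2) * ∫ ω, ε j ω ^ 2) + γε4)
          + (↑(l - 1) : ℝ) * ((∫ ω, b ω ^ 4) + 3 * ((∫ ω, b ω ^ 2) * ∫ ω, ε j ω ^ 2)))
      + 3 * ((((∫ ω, b ω ^ 4) + 6 * ((∫ ω, b ω ^ 2) * ∫ ω, ε j ω ^ 2) + γε4)
          + (↑(l - 1) : ℝ) * ((∫ ω, b ω ^ 4) + 3 * ((∫ ω, b ω ^ 2) * ∫ ω, ε j ω ^ 2)))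
        + ((↑(l - 1) : ℝ) * (((∫ ω, b ω ^ 4) + 3 * ((∫ ω, b ω ^ 2) * ∫ ω, ε j ω ^ 2))
            + (↑(l - 2) : ℝ) * ((∫ ω, b ω ^ 4) + (∫ ω, b ω ^ 2) * ∫ ω, ε j ω ^ 2))
          + ∑ k ∈ Finset.univ.erase j,
              ((∫ ω, b ω ^ 4) + (∫ ω, b ω ^ 2) * (∫ ω, ε j ω ^ 2)
                + (∫ ω, b ω ^ 2) * (∫ ω, ε k ω ^ 2)
                + (∫ ω, ε j ω ^ 2) * ∫ ω, ε k ω ^ 2)))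
      - 3 * (((∫ ω, b ω ^ 4) + 6 * ((∫ ω, b ω ^ 2) * ∫ ω, ε j ω ^ 2) + γε4)
          + ∑ k ∈ Finset.univ.erase j,
              ((∫ ω, b ω ^ 4) + (∫ ω, b ω ^ 2) * (∫ ω, ε j ω ^ 2)
                + (∫ ω, b ω ^ 2) * (∫ ω, ε k ω ^ 2)
                + (∫ ω, ε j ω ^ 2) * ∫ ω, ε k ω ^ 2))
      = 2 * ((l : ℝ) - 1) * ((l : ℝ) - 2) * γε4 := by
    intro j
    rw [hc1, hc2]
    ring
  calc (2 * (l : ℝ) ^ 2 - (l : ℝ))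
        * (∑ j, ((∫ ω, b ω ^ 4) + 6 * ((∫ ω, b ω ^ 2) * ∫ ω, ε j ω ^ 2) + γε4))
      - (5 * (l : ℝ) - 4)
        * (∑ j, (((∫ ω, b ω ^ 4) + 6 * ((∫ ω, b ω ^ 2) * ∫ ω, ε j ω ^ 2) + γε4)
          + (↑(l - 1) : ℝ) * ((∫ ω, b ω ^ 4) + 3 * ((∫ ω, b ω ^ 2) * ∫ ω, ε j ω ^ 2))))
      + 3 * (∑ j, ((((∫ ω, b ω ^ 4) + 6 * ((∫ ω, b ω ^ 2) * ∫ ω, ε j ω ^ 2) + γε4)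
          + (↑(l - 1) : ℝ) * ((∫ ω, b ω ^ 4) + 3 * ((∫ ω, b ω ^ 2) * ∫ ω, ε j ω ^ 2)))
        + ((↑(l - 1) : ℝ) * (((∫ ω, b ω ^ 4) + 3 * ((∫ ω, b ω ^ 2) * ∫ ω, ε j ω ^ 2))
            + (↑(l - 2) : ℝ) * ((∫ ω, b ω ^ 4) + (∫ ω, b ω ^ 2) * ∫ ω, ε j ω ^ 2))
          + ∑ k ∈ Finset.univ.erase j,
              ((∫ ω, b ω ^ 4) + (∫ ω, b ω ^ 2) * (∫ ω, ε j ω ^ 2)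
                + (∫ ω, b ω ^ 2) * (∫ ω, ε k ω ^ 2)
                + (∫ ω, ε j ω ^ 2) * ∫ ω, ε k ω ^ 2))))
      - 3 * (∑ j, (((∫ ω, b ω ^ 4) + 6 * ((∫ ω, b ω ^ 2) * ∫ ω, ε j ω ^ 2) + γε4)
          + ∑ k ∈ Finset.univ.erase j,
              ((∫ ω, b ω ^ 4) + (∫ ω, b ω ^ 2) * (∫ ω, ε j ω ^ 2)
                + (∫ ω, b ω ^ 2) * (∫ ω, ε k ω ^ 2)
                + (∫ ω, ε j ω ^ 2) * ∫ ω, ε k ω ^ 2)))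
      = ∑ j : Fin l, (2 * ((l : ℝ) - 1) * ((l : ℝ) - 2) * γε4) := by
        simp only [Finset.mul_sum, ← Finset.sum_sub_distrib, ← Finset.sum_add_distrib]
        exact Finset.sum_congr rfl fun j _ => key j
    _ = 2 * (l : ℝ) * ((l : ℝ) - 1) * ((l : ℝ) - 2) * γε4 := by
        rw [Finset.sum_const, Finset.card_univ, Fintype.card_fin, nsmul_eq_mul]
        ring
end
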